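/- arXiv:1811.11360 — 7 statements merged into one kernel-verified Lean document; each statement's English description precedes it below -/
import Mathlib

section
/- Let Ñ_{α,p} = α + N_{α,p} denote the shifted negative binomial variable. If Ñ is a compound random variable whose shape parameter is weighted by L̃ = Ñ_{α,p₂} (i.e., conditionally on L̃ = α + h, Ñ is distributed as Ñ_{α+h, p₁}), then Ñ has the same distribution as Ñ_{α, p₁p₂}. Equivalently, the moment generating functions agree: Σ_{h≥0} (p₁/(e^{-t} - q₁))^{α+h} P(Ñ_{α,p₂} = α+h) = (p₁p₂/(e^{-t} - (1 - p₁p₂)))^α for t in a neighborhood of 0. -/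
open MeasureTheory ProbabilityTheory Real

/-- The negative binomial probability mass function with shape `α` and success probability `p`. -/
noncomputable def negBinomPMF (α p : ℝ) (k : ℕ) : ℝ :=
  Real.Gamma (k + α) / (Nat.factorial k * Real.Gamma α) * p ^ α * (1 - p) ^ k

/-- The negative binomial distribution as a measure on `ℝ` supported on `ℕ`. -/
noncomputable def negBinomMeasure (α p : ℝ) : Measure ℝ :=
  Measure.sum fun k : ℕ => ENNReal.ofReal (negBinomPMF α p k) • Measure.dirac (k : ℝ)

/-- Convolution order: `ν` equals `μ` convolved with some nonnegative probability measure. -/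
def ConvLE (μ ν : Measure ℝ) : Prop :=
  ∃ ρ : Measure ℝ, IsProbabilityMeasure ρ ∧ ρ (Set.Iio 0) = 0 ∧ ν = μ.conv ρ

/-- Usual stochastic order on measures. -/
def StochLE (μ ν : Measure ℝ) : Prop := ∀ t : ℝ, μ (Set.Ici t) ≤ ν (Set.Ici t)

open Set

lemma tsum_exp_real (y : ℝ) : ∑' n : ℕ, y ^ n / n.factorial = Real.exp y := by
  rw [Real.exp_eq_exp_ℝ, NormedSpace.exp_eq_tsum_div]

lemma binom_series (α x : ℝ) (hα : 0 < α) (hx0 : 0 ≤ x) (hx1 : x < 1) :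
    ∑' h : ℕ, Real.Gamma ((h : ℝ) + α) / (Nat.factorial h * Real.Gamma α) * x ^ h
      = (1 - x) ^ (-α) := by
  have hG : 0 < Real.Gamma α := Real.Gamma_pos_of_pos hα
  have hr : 0 < 1 - x := by linarith
  set r := 1 - x with hrdef
  -- the termwise integrands
  set f : ℕ → ℝ → ℝ := fun h t => x ^ h / (Nat.factorial h) * (Real.exp (-t) * t ^ ((h : ℝ) + α - 1)) with hf
  have hpos : ∀ h : ℕ, (0:ℝ) < (h : ℝ) + α := fun h => by positivity
  -- integrability of each term
  have hint : ∀ h : ℕ, IntegrableOn (f h) (Ioi 0) := by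
    intro h
    exact (Real.GammaIntegral_convergent (hpos h)).const_mul _
  have hval : ∀ h : ℕ, ∫ t in Ioi 0, f h t = x ^ h / (Nat.factorial h) * Real.Gamma ((h : ℝ) + α) := by
    intro h
    rw [hf]
    simp only []
    rw [MeasureTheory.integral_const_mul, ← Real.Gamma_eq_integral (hpos h)]
  -- integrability of the limiting integrand
  have hint2 : IntegrableOn (fun t : ℝ => t ^ (α - 1) * Real.exp (-(r * t))) (Ioi 0) := by
    have base : IntegrableOn (fun u : ℝ => Real.exp (-u) * u ^ (α - 1)) (Ioi 0) :=
      Real.GammaIntegral_convergent hα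
    have comp : IntegrableOn (fun t : ℝ => Real.exp (-(r * t)) * (r * t) ^ (α - 1)) (Ioi 0) := by
      have := (integrableOn_Ioi_comp_mul_left_iff
        (fun u : ℝ => Real.exp (-u) * u ^ (α - 1)) 0 hr).mpr (by simpa using base)
      simpa using this
    have comp' : IntegrableOn
        (fun t : ℝ => r ^ (1 - α) * (Real.exp (-(r * t)) * (r * t) ^ (α - 1))) (Ioi 0) :=
      comp.const_mul _
    refine comp'.congr_fun (fun t ht => ?_) measurableSet_Ioi
    rw [mem_Ioi] at ht
    beta_reduce
    rw [Real.mul_rpow hr.le ht.le]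
    rw [show r ^ (1-α) * (Real.exp (-(r*t)) * (r ^ (α-1) * t ^ (α-1)))
        = (r ^ (1-α) * r ^ (α-1)) * (t ^ (α-1) * Real.exp (-(r*t))) by ring,
      ← Real.rpow_add hr]
    norm_num
  -- nonnegativity a.e. on Ioi 0
  have hnn : ∀ h : ℕ, 0 ≤ᵐ[volume.restrict (Ioi 0)] f h := by
    intro h
    filter_upwards [self_mem_ae_restrict measurableSet_Ioi] with t ht
    have ht' : (0:ℝ) < t := ht
    have : 0 ≤ t ^ ((h:ℝ) + α - 1) := (Real.rpow_pos_of_pos ht' _).le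
    positivity
  have hnn2 : 0 ≤ᵐ[volume.restrict (Ioi 0)] fun t : ℝ => t ^ (α - 1) * Real.exp (-(r * t)) := by
    filter_upwards [self_mem_ae_restrict measurableSet_Ioi] with t ht
    have ht' : (0:ℝ) < t := ht
    positivity
  -- main ENNReal computation
  have main : ∑' h : ℕ, ENNReal.ofReal (x ^ h / (Nat.factorial h) * Real.Gamma ((h : ℝ) + α))
      = ENNReal.ofReal ((1 / r) ^ α * Real.Gamma α) := by
    calc ∑' h : ℕ, ENNReal.ofReal (x ^ h / (Nat.factorial h) * Real.Gamma ((h : ℝ) + α))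
        = ∑' h : ℕ, ∫⁻ t in Ioi 0, ENNReal.ofReal (f h t) := by
          refine tsum_congr fun h => ?_
          rw [← hval h, MeasureTheory.ofReal_integral_eq_lintegral_ofReal (hint h) (hnn h)]
      _ = ∫⁻ t in Ioi 0, ∑' h : ℕ, ENNReal.ofReal (f h t) := by
          refine (MeasureTheory.lintegral_tsum fun h => ?_).symm
          apply Measurable.aemeasurable
          apply Measurable.ennreal_ofReal
          fun_prop
      _ = ∫⁻ t in Ioi 0, ENNReal.ofReal (t ^ (α - 1) * Real.exp (-(r * t))) := by
          refine MeasureTheory.setLIntegral_congr_fun measurableSet_Ioi ?_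
          intro t ht
          beta_reduce
          rw [mem_Ioi] at ht
          have hsum : ∀ h : ℕ, f h t
              = (Real.exp (-t) * t ^ (α - 1)) * ((x*t) ^ h / (Nat.factorial h)) := by
            intro h
            rw [hf]
            simp only []
            rw [show (h:ℝ) + α - 1 = (h:ℝ) + (α - 1) by ring, Real.rpow_add ht,
              Real.rpow_natCast, mul_pow]
            ring
          have hnn' : ∀ h : ℕ, 0 ≤ f h t := by
            intro h
            rw [hsum h]
            have : 0 ≤ t ^ (α - 1) := (Real.rpow_pos_of_pos ht _).le
            positivity
          have hsummable : Summable fun h : ℕ => f h t := by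
            simp only [hsum]
            exact (Real.summable_pow_div_factorial (x*t)).mul_left _
          rw [← ENNReal.ofReal_tsum_of_nonneg hnn' hsummable]
          congr 1
          simp only [hsum]
          rw [tsum_mul_left, tsum_exp_real,
            show -(r * t) = -t + x * t by rw [hrdef]; ring, Real.exp_add]
          ring
      _ = ENNReal.ofReal ((1 / r) ^ α * Real.Gamma α) := by
          rw [← MeasureTheory.ofReal_integral_eq_lintegral_ofReal hint2 hnn2,
            integral_rpow_mul_exp_neg_mul_Ioi hα hr]
  -- back to ℝ
  have hfin : ∑' h : ℕ, ENNReal.ofReal (x ^ h / (Nat.factorial h) * Real.Gamma ((h : ℝ) + α)) ≠ ⊤ := by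
    rw [main]; exact ENNReal.ofReal_ne_top
  have hterm_nn : ∀ h : ℕ, 0 ≤ x ^ h / (Nat.factorial h) * Real.Gamma ((h : ℝ) + α) := by
    intro h
    have := (Real.Gamma_pos_of_pos (hpos h)).le
    positivity
  have hreal : ∑' h : ℕ, x ^ h / (Nat.factorial h) * Real.Gamma ((h : ℝ) + α)
      = (1 / r) ^ α * Real.Gamma α := by
    have := ENNReal.tsum_toReal_eq (f := fun h : ℕ =>
      ENNReal.ofReal (x ^ h / (Nat.factorial h) * Real.Gamma ((h : ℝ) + α)))
      (fun h => ENNReal.ofReal_ne_top)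
    rw [main] at this
    have hCnn : 0 ≤ (1 / r) ^ α * Real.Gamma α := by
      have h1 : (0:ℝ) < 1 / r := by positivity
      have := Real.rpow_pos_of_pos h1 α
      positivity
    rw [ENNReal.toReal_ofReal hCnn] at this
    calc ∑' h : ℕ, x ^ h / (Nat.factorial h) * Real.Gamma ((h : ℝ) + α)
        = ∑' h : ℕ, (ENNReal.ofReal (x ^ h / (Nat.factorial h) * Real.Gamma ((h : ℝ) + α))).toReal :=
          tsum_congr fun h => (ENNReal.toReal_ofReal (hterm_nn h)).symm
      _ = (1 / r) ^ α * Real.Gamma α := this.symm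
  -- conclude
  have hterm : ∀ h : ℕ, Real.Gamma ((h : ℝ) + α) / (Nat.factorial h * Real.Gamma α) * x ^ h
      = (Real.Gamma α)⁻¹ * (x ^ h / (Nat.factorial h) * Real.Gamma ((h : ℝ) + α)) := by
    intro h
    field_simp
  rw [tsum_congr hterm, tsum_mul_left, hreal]
  rw [one_div, Real.rpow_neg hr.le, Real.inv_rpow hr.le]
  field_simp

/-- The shape mixture of shifted negative binomials: weighting the shape of
`Ñ_{·,p₁}` by `Ñ_{α,p₂}` gives `Ñ_{α,p₁p₂}`, expressed through moment generating
functions. -/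
theorem shifted_negBinom_shape_mixture (α p₁ p₂ t : ℝ) (hα : 0 < α)
    (hp₁ : 0 < p₁) (hp₁' : p₁ < 1) (hp₂ : 0 < p₂) (hp₂' : p₂ < 1)
    (ht : Real.exp t * (1 - p₁ * p₂) < 1) :
    ∑' h : ℕ, (p₁ / (Real.exp (-t) - (1 - p₁))) ^ (α + (h : ℝ)) * negBinomPMF α p₂ h
      = (p₁ * p₂ / (Real.exp (-t) - (1 - p₁ * p₂))) ^ α := by
  set E := Real.exp (-t) with hE
  have hpp : 0 < p₁ * p₂ := mul_pos hp₁ hp₂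
  have hpp1 : p₁ * p₂ < 1 := by nlinarith
  have hE1 : 1 - p₁ * p₂ < E := by
    calc 1 - p₁ * p₂ = Real.exp (-t) * Real.exp t * (1 - p₁ * p₂) := by
          rw [← Real.exp_add]; simp
      _ = Real.exp (-t) * (Real.exp t * (1 - p₁ * p₂)) := by ring
      _ < Real.exp (-t) * 1 := mul_lt_mul_of_pos_left ht (Real.exp_pos _)
      _ = E := by rw [hE, mul_one]
  have hd1 : 0 < E - (1 - p₁) := by nlinarith
  have hd2 : 0 < E - (1 - p₁ * p₂) := by linarith
  set ρ := p₁ / (E - (1 - p₁)) with hρdef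
  have hρ : 0 < ρ := div_pos hp₁ hd1
  set x := ρ * (1 - p₂) with hxdef
  have hx0 : 0 ≤ x := mul_nonneg hρ.le (by linarith)
  have hx1 : x < 1 := by
    rw [hxdef, hρdef, div_mul_eq_mul_div, div_lt_one hd1]
    nlinarith
  have hterm : ∀ h : ℕ, ρ ^ (α + (h : ℝ)) * negBinomPMF α p₂ h
      = (ρ ^ α * p₂ ^ α) * (Real.Gamma ((h : ℝ) + α) / (Nat.factorial h * Real.Gamma α) * x ^ h) := by
    intro h
    rw [Real.rpow_add hρ, Real.rpow_natCast, negBinomPMF, hxdef, mul_pow]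
    ring
  rw [tsum_congr hterm, tsum_mul_left, binom_series α x hα hx0 hx1]
  have h1x : 0 < 1 - x := by linarith
  rw [Real.rpow_neg h1x.le, ← Real.mul_rpow hρ.le hp₂.le, ← div_eq_mul_inv,
    ← Real.div_rpow (mul_pos hρ hp₂).le h1x.le]
  congr 1
  rw [div_eq_div_iff h1x.ne' hd2.ne']
  rw [hxdef, hρdef]
  field_simp
  ring
end

section
/- Let 0 < α₁ ≤ α₂, and let p₁₁ ≥ p₁₂, p₂₁ ≥ p₂₂ with (p₁₁, p₁₂) ≺ (p₂₁, p₂₂), all in (0,1). Then N_{α₁,p₁₁} + N_{α₂,p₁₂} ≤_conv N_{α₁,p₂₁} + N_{α₂,p₂₂} (independent summands). -/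
open MeasureTheory ProbabilityTheory Real

namespace NBOrder

open PowerSeries Finset

/-- normalized negative binomial coefficients -/
noncomputable def b (α q : ℝ) (k : ℕ) : ℝ :=
  Real.Gamma (k + α) / (Nat.factorial k * Real.Gamma α) * q ^ k

lemma negBinomPMF_eq (α p : ℝ) (k : ℕ) :
    negBinomPMF α p k = p ^ α * b α (1 - p) k := by
  unfold negBinomPMF b; ring

lemma b_zero (α q : ℝ) (hα : 0 < α) : b α q 0 = 1 := by
  have : Real.Gamma α ≠ 0 := (Real.Gamma_pos_of_pos hα).ne'
  simp [b, this]

lemma b_nonneg {α : ℝ} (hα : 0 < α) {q : ℝ} (hq : 0 ≤ q) (k : ℕ) : 0 ≤ b α q k := by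
  have h1 : (0:ℝ) ≤ Real.Gamma (k + α) :=
    Real.Gamma_nonneg_of_nonneg (by have : (0:ℝ) ≤ k := Nat.cast_nonneg k; linarith)
  have h2 : (0:ℝ) ≤ Real.Gamma α := Real.Gamma_nonneg_of_nonneg hα.le
  have h3 : (0:ℝ) ≤ (Nat.factorial k : ℝ) := Nat.cast_nonneg _
  unfold b
  positivity

lemma b_rec {α : ℝ} (hα : 0 < α) (q : ℝ) (k : ℕ) :
    ((k:ℝ) + 1) * b α q (k + 1) = q * ((k:ℝ) + α) * b α q k := by
  have hk : ((k:ℝ) + α) ≠ 0 := by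
    have : (0:ℝ) ≤ k := Nat.cast_nonneg k
    positivity
  have hG : Real.Gamma (((k+1 : ℕ):ℝ) + α) = ((k:ℝ) + α) * Real.Gamma ((k:ℝ) + α) := by
    push_cast
    rw [show (k:ℝ) + 1 + α = ((k:ℝ) + α) + 1 by ring, Real.Gamma_add_one hk]
  have hF : (((k+1).factorial : ℕ) : ℝ) = ((k:ℝ)+1) * (k.factorial : ℝ) := by
    rw [Nat.factorial_succ]; push_cast; ring
  have hΓα : Real.Gamma α ≠ 0 := (Real.Gamma_pos_of_pos hα).ne'
  have hfac : ((k.factorial : ℕ) : ℝ) ≠ 0 := by positivity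
  have hk1 : ((k:ℝ) + 1) ≠ 0 := by positivity
  unfold b
  rw [hG, hF, pow_succ]
  field_simp

/-- the negative binomial power series (normalized) -/
noncomputable def B (α q : ℝ) : PowerSeries ℝ := PowerSeries.mk (b α q)

/-- geometric series, inverse of `1 - qX` -/
noncomputable def V (q : ℝ) : PowerSeries ℝ := PowerSeries.mk fun n => q ^ n

lemma V_mul (q : ℝ) : (1 - PowerSeries.C q * X) * V q = 1 := by
  ext n
  rw [sub_mul, one_mul, map_sub, mul_assoc, coeff_C_mul]
  cases n with
  | zero => simp [V]
  | succ n =>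
    rw [coeff_succ_X_mul]
    simp [V, pow_succ, mul_comm]

lemma B_ode {α : ℝ} (hα : 0 < α) (q : ℝ) :
    (1 - PowerSeries.C q * X) * (d⁄dX ℝ) (B α q) = PowerSeries.C (α * q) * B α q := by
  ext n
  rw [sub_mul, one_mul, map_sub, mul_assoc, coeff_C_mul, coeff_C_mul, coeff_derivative]
  cases n with
  | zero =>
    have h := b_rec hα q 0
    simp only [B, coeff_mk] at *
    simp only [PowerSeries.coeff_zero_eq_constantCoeff]
    rw [map_mul]
    simp [B, coeff_mk]
    push_cast at h ⊢
    nlinarith [h]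
  | succ n =>
    rw [coeff_succ_X_mul, coeff_derivative]
    simp only [B, coeff_mk]
    have h1 := b_rec hα q (n + 1)
    have h2 := b_rec hα q n
    push_cast at h1 h2 ⊢
    nlinarith [h1, h2]

lemma B_ode' {α : ℝ} (hα : 0 < α) (q : ℝ) :
    (d⁄dX ℝ) (B α q) = PowerSeries.C (α * q) * (V q * B α q) := by
  have h1 := V_mul q
  have h2 := B_ode hα q
  linear_combination (V q) * h2 - ((d⁄dX ℝ) (B α q)) * h1

lemma ode_unique (W F G : PowerSeries ℝ) (hF : (d⁄dX ℝ) F = W * F) (hG : (d⁄dX ℝ) G = W * G)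
    (h0 : PowerSeries.coeff 0 F = PowerSeries.coeff 0 G) : F = G := by
  ext n
  induction n using Nat.strong_induction_on with
  | _ n ih =>
    match n with
    | 0 => exact h0
    | Nat.succ n =>
      have hF' := congrArg (PowerSeries.coeff n) hF
      have hG' := congrArg (PowerSeries.coeff n) hG
      rw [coeff_derivative, coeff_mul] at hF' hG'
      have hsum : ∑ p ∈ antidiagonal n, PowerSeries.coeff p.1 W * PowerSeries.coeff p.2 F
          = ∑ p ∈ antidiagonal n, PowerSeries.coeff p.1 W * PowerSeries.coeff p.2 G := by
        refine Finset.sum_congr rfl fun p hp => ?_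
        have hle : p.2 ≤ n := Finset.HasAntidiagonal.antidiagonal.snd_le hp
        rw [ih p.2 (lt_of_le_of_lt hle (Nat.lt_succ_self n))]
      have hm : PowerSeries.coeff (n+1) F * ((n:ℝ)+1) = PowerSeries.coeff (n+1) G * ((n:ℝ)+1) := by
        rw [hF', hG', hsum]
      have hne : ((n:ℝ)+1) ≠ 0 := by positivity
      exact mul_right_cancel₀ hne hm


/-- solution of `F' = (mk l) * F`, `F 0 = c`, by recursion -/
noncomputable def rr (c : ℝ) (l : ℕ → ℝ) : ℕ → ℝ
  | 0 => c
  | n + 1 => (∑ k ∈ (Finset.range (n+1)).attach, l k.1 * rr c l (n - k.1)) / ((n:ℝ) + 1)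
  decreasing_by exact Nat.lt_succ_of_le (Nat.sub_le n k.1)

lemma rr_succ (c : ℝ) (l : ℕ → ℝ) (n : ℕ) :
    rr c l (n+1) = (∑ k ∈ Finset.range (n+1), l k * rr c l (n - k)) / ((n:ℝ) + 1) := by
  rw [rr, Finset.sum_attach (Finset.range (n+1)) (fun k => l k * rr c l (n - k))]

lemma rr_nonneg {c : ℝ} (hc : 0 ≤ c) {l : ℕ → ℝ} (hl : ∀ m, 0 ≤ l m) (n : ℕ) :
    0 ≤ rr c l n := by
  induction n using Nat.strong_induction_on with
  | _ n ih =>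
    match n with
    | 0 => rw [rr]; exact hc
    | Nat.succ n =>
      rw [rr_succ]
      apply div_nonneg _ (by positivity)
      refine Finset.sum_nonneg fun k _ => mul_nonneg (hl k) (ih (n - k) ?_)
      exact Nat.lt_succ_of_le (Nat.sub_le n k)

lemma rr_ode (c : ℝ) (l : ℕ → ℝ) :
    (d⁄dX ℝ) (PowerSeries.mk (rr c l)) = PowerSeries.mk l * PowerSeries.mk (rr c l) := by
  ext n
  rw [coeff_derivative, coeff_mul, Finset.Nat.sum_antidiagonal_eq_sum_range_succ_mk]
  simp only [coeff_mk]
  rw [rr_succ]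
  have hne : ((n:ℝ)+1) ≠ 0 := by positivity
  field_simp

lemma rr_zero (c : ℝ) (l : ℕ → ℝ) : rr c l 0 = c := by rw [rr]

/-- the log-derivative gap coefficients -/
noncomputable def lfun (α₁ α₂ q₁₁ q₁₂ q₂₁ q₂₂ : ℝ) : ℕ → ℝ :=
  fun m => α₁ * (q₂₁^(m+1) - q₁₁^(m+1)) + α₂ * (q₂₂^(m+1) - q₁₂^(m+1))

lemma mk_lfun (α₁ α₂ q₁₁ q₁₂ q₂₁ q₂₂ : ℝ) :
    PowerSeries.mk (lfun α₁ α₂ q₁₁ q₁₂ q₂₁ q₂₂)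
      = (PowerSeries.C (α₁*q₂₁) * V q₂₁ + PowerSeries.C (α₂*q₂₂) * V q₂₂)
        - (PowerSeries.C (α₁*q₁₁) * V q₁₁ + PowerSeries.C (α₂*q₁₂) * V q₁₂) := by
  ext m
  simp only [coeff_mk, map_sub, map_add, coeff_C_mul, V, lfun]
  ring

lemma lfun_nonneg {α₁ α₂ q₁₁ q₁₂ q₂₁ q₂₂ : ℝ} (hα₁ : 0 < α₁) (hα : α₁ ≤ α₂)
    (h1 : 0 ≤ q₂₁) (h2 : q₂₁ ≤ q₁₁) (h3 : q₁₁ ≤ q₁₂) (h4 : q₁₂ ≤ q₂₂)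
    (hd : q₁₁ - q₂₁ = q₂₂ - q₁₂) (m : ℕ) :
    0 ≤ lfun α₁ α₂ q₁₁ q₁₂ q₂₁ q₂₂ m := by
  have hg1 : (∑ i ∈ range (m+1), q₁₁ ^ i * q₂₁ ^ (m + 1 - 1 - i)) * (q₁₁ - q₂₁)
      = q₁₁^(m+1) - q₂₁^(m+1) := geom_sum₂_mul q₁₁ q₂₁ (m+1)
  have hg2 : (∑ i ∈ range (m+1), q₂₂ ^ i * q₁₂ ^ (m + 1 - 1 - i)) * (q₂₂ - q₁₂)
      = q₂₂^(m+1) - q₁₂^(m+1) := geom_sum₂_mul q₂₂ q₁₂ (m+1)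
  have hS : (∑ i ∈ range (m+1), q₁₁ ^ i * q₂₁ ^ (m + 1 - 1 - i))
      ≤ ∑ i ∈ range (m+1), q₂₂ ^ i * q₁₂ ^ (m + 1 - 1 - i) := by
    refine Finset.sum_le_sum fun i _ => ?_
    have h11 : (0:ℝ) ≤ q₁₁ := le_trans h1 h2
    exact mul_le_mul (pow_le_pow_left₀ h11 (le_trans h3 h4) i)
      (pow_le_pow_left₀ h1 (le_trans h2 h3) _)
      (pow_nonneg h1 _) (pow_nonneg (by linarith : (0:ℝ) ≤ q₂₂) _)
  have hS1 : (0:ℝ) ≤ ∑ i ∈ range (m+1), q₁₁ ^ i * q₂₁ ^ (m + 1 - 1 - i) :=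
    Finset.sum_nonneg fun i _ => mul_nonneg (pow_nonneg (le_trans h1 h2) _) (pow_nonneg h1 _)
  have hS2 : (0:ℝ) ≤ ∑ i ∈ range (m+1), q₂₂ ^ i * q₁₂ ^ (m + 1 - 1 - i) := hS1.trans hS
  have hdn : 0 ≤ q₁₁ - q₂₁ := by linarith
  have hkey : α₁ * (q₂₁^(m+1) - q₁₁^(m+1)) + α₂ * (q₂₂^(m+1) - q₁₂^(m+1))
      = (α₂ * (∑ i ∈ range (m+1), q₂₂ ^ i * q₁₂ ^ (m + 1 - 1 - i))
          - α₁ * (∑ i ∈ range (m+1), q₁₁ ^ i * q₂₁ ^ (m + 1 - 1 - i))) * (q₁₁ - q₂₁) := by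
    linear_combination α₁ * hg1 - α₂ * hg2
      - (α₂ * (∑ i ∈ range (m+1), q₂₂ ^ i * q₁₂ ^ (m + 1 - 1 - i))) * hd
  unfold lfun
  rw [hkey]
  have hdiff : 0 ≤ α₂ * (∑ i ∈ range (m+1), q₂₂ ^ i * q₁₂ ^ (m + 1 - 1 - i))
      - α₁ * (∑ i ∈ range (m+1), q₁₁ ^ i * q₂₁ ^ (m + 1 - 1 - i)) := by
    nlinarith [mul_le_mul hα hS hS1 (by linarith : (0:ℝ) ≤ α₂)]
  exact mul_nonneg hdiff hdn

lemma key_identity {α₁ α₂ : ℝ} (q₁₁ q₁₂ q₂₁ q₂₂ c : ℝ) (hα₁ : 0 < α₁) (hα₂ : 0 < α₂) :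
    B α₁ q₁₁ * B α₂ q₁₂ * PowerSeries.mk (rr c (lfun α₁ α₂ q₁₁ q₁₂ q₂₁ q₂₂))
      = PowerSeries.C c * (B α₁ q₂₁ * B α₂ q₂₂) := by
  apply ode_unique (PowerSeries.C (α₁*q₂₁) * V q₂₁ + PowerSeries.C (α₂*q₂₂) * V q₂₂)
  · rw [Derivation.leibniz, Derivation.leibniz, rr_ode, mk_lfun,
      B_ode' hα₁ q₁₁, B_ode' hα₂ q₁₂]
    simp only [smul_eq_mul]
    ring
  · rw [Derivation.leibniz, Derivation.leibniz, derivative_C,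
      B_ode' hα₁ q₂₁, B_ode' hα₂ q₂₂]
    simp only [smul_eq_mul, smul_zero, mul_zero, zero_add, add_zero]
    ring
  · simp only [PowerSeries.coeff_zero_eq_constantCoeff, map_mul, constantCoeff_mk,
      PowerSeries.constantCoeff_C, B, rr_zero, b_zero _ _ hα₁, b_zero _ _ hα₂]
    ring

/-- coefficient form of the key identity -/
lemma key_coeff {α₁ α₂ : ℝ} (q₁₁ q₁₂ q₂₁ q₂₂ c : ℝ) (hα₁ : 0 < α₁) (hα₂ : 0 < α₂) (n : ℕ) :
    ∑ k ∈ range (n+1), (∑ i ∈ range (k+1), b α₁ q₁₁ i * b α₂ q₁₂ (k - i)) *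
        rr c (lfun α₁ α₂ q₁₁ q₁₂ q₂₁ q₂₂) (n - k)
      = c * ∑ i ∈ range (n+1), b α₁ q₂₁ i * b α₂ q₂₂ (n - i) := by
  have h := congrArg (PowerSeries.coeff n) (key_identity q₁₁ q₁₂ q₂₁ q₂₂ c hα₁ hα₂)
  rw [coeff_mul, coeff_C_mul, coeff_mul, Finset.Nat.sum_antidiagonal_eq_sum_range_succ_mk,
    Finset.Nat.sum_antidiagonal_eq_sum_range_succ_mk] at h
  simp only [coeff_mul, Finset.Nat.sum_antidiagonal_eq_sum_range_succ_mk, coeff_mk, B] at h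
  convert h using 2


section Meas
open Finset
open scoped ENNReal



lemma tsum_cauchy (u v F : ℕ → ℝ≥0∞) :
    ∑' (p : ℕ × ℕ), u p.1 * v p.2 * F (p.1 + p.2)
      = ∑' n, (∑ k ∈ Finset.range (n+1), u k * v (n-k)) * F n := by
  rw [← (Finset.HasAntidiagonal.sigmaAntidiagonalEquivProd (A := ℕ)).tsum_eq
      (fun p : ℕ × ℕ => u p.1 * v p.2 * F (p.1 + p.2)), ENNReal.tsum_sigma']
  refine tsum_congr fun n => ?_
  have : ∀ (b : {x // x ∈ antidiagonal n}),
      (fun p : ℕ × ℕ => u p.1 * v p.2 * F (p.1 + p.2)) (Finset.HasAntidiagonal.sigmaAntidiagonalEquivProd ⟨n, b⟩)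
        = u (b:ℕ×ℕ).1 * v (b:ℕ×ℕ).2 * F ((b:ℕ×ℕ).1 + (b:ℕ×ℕ).2) := fun b => rfl
  rw [tsum_congr this, Finset.tsum_subtype (antidiagonal n)
      (fun p => u p.1 * v p.2 * F (p.1 + p.2))]
  rw [Finset.sum_congr rfl (fun p hp => by rw [Finset.HasAntidiagonal.mem_antidiagonal.mp hp]),
    ← Finset.sum_mul, Finset.Nat.sum_antidiagonal_eq_sum_range_succ_mk]

lemma tsum_cauchy_one (u v : ℕ → ℝ≥0∞) :
    (∑' n, ∑ k ∈ Finset.range (n+1), u k * v (n-k)) = (∑' n, u n) * ∑' n, v n := by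
  have h := tsum_cauchy u v (fun _ => 1)
  simp only [mul_one] at h
  rw [← h, ENNReal.tsum_prod']
  simp_rw [ENNReal.tsum_mul_left]
  rw [ENNReal.tsum_mul_right]

/-- discrete measure on `ℝ` supported on `ℕ` -/
noncomputable def mR (w : ℕ → ℝ≥0∞) : Measure ℝ :=
  Measure.sum fun k : ℕ => w k • Measure.dirac (k : ℝ)

instance (w : ℕ → ℝ≥0∞) : SFinite (mR w) := by unfold mR; infer_instance

lemma mR_apply (w : ℕ → ℝ≥0∞) {s : Set ℝ} (hs : MeasurableSet s) :
    mR w s = ∑' n : ℕ, w n * s.indicator 1 ((n : ℕ) : ℝ) := by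
  rw [mR, Measure.sum_apply _ hs]
  simp_rw [Measure.smul_apply, smul_eq_mul, Measure.dirac_apply' _ hs]

lemma indicator_pre (s : Set ℝ) (x y : ℝ) :
    (Prod.mk x ⁻¹' ((fun p : ℝ × ℝ => p.1 + p.2) ⁻¹' s)).indicator (1 : ℝ → ℝ≥0∞) y
      = s.indicator 1 (x + y) := by
  by_cases h : x + y ∈ s
  · rw [Set.indicator_of_mem (show y ∈ Prod.mk x ⁻¹' ((fun p : ℝ × ℝ => p.1 + p.2) ⁻¹' s) from h), Set.indicator_of_mem h]; rfl
  · rw [Set.indicator_of_notMem (show y ∉ Prod.mk x ⁻¹' ((fun p : ℝ × ℝ => p.1 + p.2) ⁻¹' s) from h), Set.indicator_of_notMem h]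

lemma mR_conv (u v : ℕ → ℝ≥0∞) :
    (mR u).conv (mR v) = mR fun n => ∑ k ∈ Finset.range (n+1), u k * v (n-k) := by
  ext s hs
  rw [Measure.conv, Measure.map_apply measurable_add hs,
    Measure.prod_apply (measurable_add hs)]
  have hmeas : ∀ x : ℝ, MeasurableSet (Prod.mk x ⁻¹' ((fun p : ℝ × ℝ => p.1 + p.2) ⁻¹' s)) :=
    fun x => measurable_prodMk_left (measurable_add hs)
  calc ∫⁻ x, (mR v) (Prod.mk x ⁻¹' ((fun p : ℝ × ℝ => p.1 + p.2) ⁻¹' s)) ∂(mR u)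
      = ∑' i : ℕ, u i * (mR v) (Prod.mk ((i:ℕ):ℝ) ⁻¹' ((fun p : ℝ × ℝ => p.1 + p.2) ⁻¹' s)) := by
        rw [mR, lintegral_sum_measure]
        refine tsum_congr fun i => ?_
        rw [lintegral_smul_measure, lintegral_dirac, smul_eq_mul]
    _ = ∑' i : ℕ, ∑' j : ℕ, u i * (v j * s.indicator 1 (((i + j : ℕ)) : ℝ)) := by
        refine tsum_congr fun i => ?_
        rw [mR_apply v (hmeas _), ENNReal.tsum_mul_left]
        refine congrArg _ (tsum_congr fun j => ?_)
        rw [indicator_pre]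
        norm_cast
    _ = ∑' (p : ℕ × ℕ), u p.1 * v p.2 * s.indicator 1 (((p.1 + p.2 : ℕ)) : ℝ) := by
        rw [ENNReal.tsum_prod']
        exact tsum_congr fun i => tsum_congr fun j => (mul_assoc _ _ _).symm
    _ = ∑' n : ℕ, (∑ k ∈ Finset.range (n+1), u k * v (n-k)) * s.indicator 1 ((n:ℕ):ℝ) :=
        tsum_cauchy u v (fun n => s.indicator 1 ((n:ℕ):ℝ))
    _ = (mR fun n => ∑ k ∈ Finset.range (n+1), u k * v (n-k)) s := (mR_apply _ hs).symm

lemma mR_Iio (w : ℕ → ℝ≥0∞) : mR w (Set.Iio 0) = 0 := by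
  rw [mR_apply w measurableSet_Iio]
  simp [Set.indicator_apply]

lemma mR_univ (w : ℕ → ℝ≥0∞) : mR w Set.univ = ∑' n, w n := by
  rw [mR_apply w MeasurableSet.univ]
  simp

end Meas

section Anal
open scoped ENNReal
open Set



lemma tsum_negBinomPMF {α p : ℝ} (hα : 0 < α) (hp0 : 0 < p) (hp1 : p < 1) :
    ∑' k : ℕ, ENNReal.ofReal (negBinomPMF α p k) = 1 := by
  set q : ℝ := 1 - p with hqdef
  have hq0 : 0 < q := by simp only [hqdef]; linarith
  have hq1 : q < 1 := by simp only [hqdef]; linarith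
  have hΓ : 0 < Real.Gamma α := Real.Gamma_pos_of_pos hα
  have hc0 : (0:ℝ) < p ^ α / Real.Gamma α := by positivity
  -- step 1 : each term as a lintegral
  have hterm : ∀ k : ℕ, ENNReal.ofReal (negBinomPMF α p k)
      = ∫⁻ x in Ioi (0:ℝ), ENNReal.ofReal
          (p ^ α / Real.Gamma α * (q ^ k * ((k.factorial : ℝ))⁻¹)
            * (Real.exp (-x) * x ^ ((k:ℝ) + α - 1))) := by
    intro k
    have hkα : (0:ℝ) < (k:ℝ) + α := by positivity
    have hGint : Real.Gamma ((k:ℝ) + α) = ∫ x in Ioi (0:ℝ), Real.exp (-x) * x ^ ((k:ℝ)+α-1) :=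
      Real.Gamma_eq_integral hkα
    have hint : IntegrableOn (fun x => Real.exp (-x) * x ^ ((k:ℝ)+α-1)) (Ioi 0) :=
      Real.GammaIntegral_convergent hkα
    have hnn : 0 ≤ᵐ[Measure.restrict volume (Ioi (0:ℝ))]
        fun x => Real.exp (-x) * x ^ ((k:ℝ)+α-1) := by
      filter_upwards [self_mem_ae_restrict measurableSet_Ioi] with x hx
      have : (0:ℝ) < x := hx
      positivity
    have hck : (0:ℝ) ≤ p ^ α / Real.Gamma α * (q ^ k * ((k.factorial : ℝ))⁻¹) := by positivity
    have hpmf : negBinomPMF α p k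
        = (p ^ α / Real.Gamma α * (q ^ k * ((k.factorial : ℝ))⁻¹)) * Real.Gamma ((k:ℝ)+α) := by
      unfold negBinomPMF
      rw [← hqdef]
      field_simp
    rw [hpmf, hGint, ENNReal.ofReal_mul hck,
      MeasureTheory.ofReal_integral_eq_lintegral_ofReal hint hnn,
      ← MeasureTheory.lintegral_const_mul' _ _ ENNReal.ofReal_ne_top]
    refine setLIntegral_congr_fun measurableSet_Ioi (fun x hx => ?_)
    rw [← ENNReal.ofReal_mul hck]
  -- step 2 : swap sum and integral
  have hswap : ∑' k : ℕ, ENNReal.ofReal (negBinomPMF α p k)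
      = ∫⁻ x in Ioi (0:ℝ), ∑' k : ℕ, ENNReal.ofReal
          (p ^ α / Real.Gamma α * (q ^ k * ((k.factorial : ℝ))⁻¹)
            * (Real.exp (-x) * x ^ ((k:ℝ) + α - 1))) := by
    rw [MeasureTheory.lintegral_tsum]
    · exact tsum_congr hterm
    · intro k
      apply Measurable.aemeasurable
      fun_prop
  rw [hswap]
  -- step 3 : pointwise evaluation of the inner sum
  have hpt : ∀ x : ℝ, x ∈ Ioi (0:ℝ) →
      (∑' k : ℕ, ENNReal.ofReal
          (p ^ α / Real.Gamma α * (q ^ k * ((k.factorial : ℝ))⁻¹)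
            * (Real.exp (-x) * x ^ ((k:ℝ) + α - 1))))
        = ENNReal.ofReal (p ^ α / Real.Gamma α * (x ^ (α - 1) * Real.exp (-(p * x)))) := by
    intro x hx
    have hx0 : (0:ℝ) < x := hx
    have hA : (0:ℝ) ≤ p ^ α / Real.Gamma α * Real.exp (-x) * x ^ (α-1) := by positivity
    have hre : ∀ k : ℕ, p ^ α / Real.Gamma α * (q ^ k * ((k.factorial : ℝ))⁻¹)
        * (Real.exp (-x) * x ^ ((k:ℝ) + α - 1))
        = (p ^ α / Real.Gamma α * Real.exp (-x) * x ^ (α-1)) * ((q*x) ^ k / (k.factorial : ℝ)) := by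
      intro k
      rw [show (k:ℝ) + α - 1 = (k:ℝ) + (α - 1) by ring, Real.rpow_add hx0,
        Real.rpow_natCast, mul_pow]
      field_simp
    simp_rw [hre]
    have hnnk : ∀ k : ℕ, (0:ℝ) ≤ (q*x) ^ k / (k.factorial : ℝ) := by
      intro k; positivity
    calc (∑' k : ℕ, ENNReal.ofReal ((p ^ α / Real.Gamma α * Real.exp (-x) * x ^ (α-1))
            * ((q*x) ^ k / (k.factorial : ℝ))))
        = ENNReal.ofReal (p ^ α / Real.Gamma α * Real.exp (-x) * x ^ (α-1))
            * ∑' k : ℕ, ENNReal.ofReal ((q*x) ^ k / (k.factorial : ℝ)) := by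
          simp_rw [ENNReal.ofReal_mul hA]
          rw [ENNReal.tsum_mul_left]
      _ = ENNReal.ofReal (p ^ α / Real.Gamma α * Real.exp (-x) * x ^ (α-1))
            * ENNReal.ofReal (Real.exp (q * x)) := by
          rw [← ENNReal.ofReal_tsum_of_nonneg hnnk (Real.summable_pow_div_factorial _)]
          congr 1
          rw [Real.exp_eq_exp_ℝ, NormedSpace.exp_eq_tsum_div]
      _ = ENNReal.ofReal (p ^ α / Real.Gamma α * (x ^ (α - 1) * Real.exp (-(p * x)))) := by
          rw [← ENNReal.ofReal_mul hA]
          congr 1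
          have hE : Real.exp (-x) * Real.exp (q*x) = Real.exp (-(p*x)) := by
            rw [← Real.exp_add]; congr 1; rw [hqdef]; ring
          linear_combination (p ^ α / Real.Gamma α * x ^ (α-1)) * hE
  rw [setLIntegral_congr_fun measurableSet_Ioi hpt]
  -- step 4 : evaluate the integral
  have hint2 : IntegrableOn (fun x : ℝ => x ^ (α - 1) * Real.exp (-(p * x))) (Ioi 0) := by
    have h0 : IntegrableOn (fun x : ℝ => Real.exp (-(p*x)) * (p*x) ^ (α-1)) (Ioi 0) := by
      have := (integrableOn_Ioi_comp_mul_left_iff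
        (fun x : ℝ => Real.exp (-x) * x ^ (α-1)) 0 hp0).mpr
      simp only [mul_zero] at this
      exact this (Real.GammaIntegral_convergent hα)
    have h1 : IntegrableOn
        (fun x : ℝ => (p ^ (α-1))⁻¹ * (Real.exp (-(p*x)) * (p*x) ^ (α-1))) (Ioi 0) :=
      h0.const_mul _
    refine h1.congr_fun (fun x hx => ?_) measurableSet_Ioi
    have hx0 : (0:ℝ) < x := hx
    beta_reduce
    rw [Real.mul_rpow hp0.le hx0.le]
    have : p ^ (α-1) ≠ 0 := by positivity
    field_simp
  have hnn2 : 0 ≤ᵐ[Measure.restrict volume (Ioi (0:ℝ))]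
      fun x : ℝ => x ^ (α - 1) * Real.exp (-(p * x)) := by
    filter_upwards [self_mem_ae_restrict measurableSet_Ioi] with x hx
    have : (0:ℝ) < x := hx
    positivity
  simp_rw [ENNReal.ofReal_mul hc0.le]
  rw [MeasureTheory.lintegral_const_mul' _ _ ENNReal.ofReal_ne_top,
    ← MeasureTheory.ofReal_integral_eq_lintegral_ofReal hint2 hnn2,
    integral_rpow_mul_exp_neg_mul_Ioi hα hp0,
    ← ENNReal.ofReal_mul hc0.le]
  rw [show p ^ α / Real.Gamma α * ((1/p) ^ α * Real.Gamma α) = (p * (1/p)) ^ α by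
    rw [Real.mul_rpow hp0.le (by positivity)]; field_simp]
  rw [mul_one_div_cancel hp0.ne', Real.one_rpow, ENNReal.ofReal_one]

end Anal

end NBOrder

open NBOrder Finset
open scoped ENNReal

lemma NBOrder.negBinomPMF_nonneg {α p : ℝ} (hα : 0 < α) (hp0 : 0 < p) (hp1 : p < 1) (k : ℕ) :
    0 ≤ negBinomPMF α p k := by
  rw [negBinomPMF_eq]
  have := b_nonneg hα (by linarith : (0:ℝ) ≤ 1 - p) k
  positivity

lemma NBOrder.negBinomMeasure_eq (α p : ℝ) :
    negBinomMeasure α p = mR (fun k => ENNReal.ofReal (negBinomPMF α p k)) := rfl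

/-- Convolution order with different shapes and majorized, similarly ordered
success probabilities. -/
theorem negBinom_diff_shape_majorize_prob_conv_order (α₁ α₂ p₁₁ p₁₂ p₂₁ p₂₂ : ℝ)
    (hα₁ : 0 < α₁) (hα : α₁ ≤ α₂)
    (h11 : p₁₁ ∈ Set.Ioo (0:ℝ) 1) (h12 : p₁₂ ∈ Set.Ioo (0:ℝ) 1)
    (h21 : p₂₁ ∈ Set.Ioo (0:ℝ) 1) (h22 : p₂₂ ∈ Set.Ioo (0:ℝ) 1)
    (ho1 : p₁₂ ≤ p₁₁) (ho2 : p₂₂ ≤ p₂₁)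
    (hsum : p₁₁ + p₁₂ = p₂₁ + p₂₂) (hmax : max p₁₁ p₁₂ ≤ max p₂₁ p₂₂) :
    ConvLE ((negBinomMeasure α₁ p₁₁).conv (negBinomMeasure α₂ p₁₂))
      ((negBinomMeasure α₁ p₂₁).conv (negBinomMeasure α₂ p₂₂)) := by
  obtain ⟨hp11, hp11'⟩ := h11
  obtain ⟨hp12, hp12'⟩ := h12
  obtain ⟨hp21, hp21'⟩ := h21
  obtain ⟨hp22, hp22'⟩ := h22
  have hα₂ : 0 < α₂ := lt_of_lt_of_le hα₁ hα
  rw [max_eq_left ho1, max_eq_left ho2] at hmax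
  have hp1221 : p₂₂ ≤ p₁₂ := by linarith
  -- the constant and the recursion coefficients
  set c : ℝ := (p₂₁ ^ α₁ * p₂₂ ^ α₂) / (p₁₁ ^ α₁ * p₁₂ ^ α₂) with hcdef
  have hc : 0 < c := by positivity
  set l : ℕ → ℝ := lfun α₁ α₂ (1-p₁₁) (1-p₁₂) (1-p₂₁) (1-p₂₂) with hldef
  have hl : ∀ m, 0 ≤ l m :=
    lfun_nonneg hα₁ hα (by linarith) (by linarith) (by linarith) (by linarith) (by linarith)
  have hr : ∀ n, 0 ≤ rr c l n := rr_nonneg hc.le hl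
  -- the real weight identity
  have hPc : (p₁₁ ^ α₁ * p₁₂ ^ α₂) * c = p₂₁ ^ α₁ * p₂₂ ^ α₂ := by
    rw [hcdef, mul_div_cancel₀ _ (by positivity : p₁₁ ^ α₁ * p₁₂ ^ α₂ ≠ 0)]
  have hW : ∀ n : ℕ, (∑ k ∈ range (n+1),
        (∑ i ∈ range (k+1), negBinomPMF α₁ p₁₁ i * negBinomPMF α₂ p₁₂ (k-i)) * rr c l (n-k))
      = ∑ i ∈ range (n+1), negBinomPMF α₁ p₂₁ i * negBinomPMF α₂ p₂₂ (n-i) := by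
    intro n
    have h := key_coeff (α₁ := α₁) (α₂ := α₂) (1-p₁₁) (1-p₁₂) (1-p₂₁) (1-p₂₂) c hα₁ hα₂ n
    have e1 : ∀ k : ℕ, (∑ i ∈ range (k+1), negBinomPMF α₁ p₁₁ i * negBinomPMF α₂ p₁₂ (k-i))
        = (p₁₁ ^ α₁ * p₁₂ ^ α₂) * ∑ i ∈ range (k+1), b α₁ (1-p₁₁) i * b α₂ (1-p₁₂) (k-i) := by
      intro k
      rw [Finset.mul_sum]
      exact Finset.sum_congr rfl fun i _ => by rw [negBinomPMF_eq, negBinomPMF_eq]; ring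
    have e2 : (∑ i ∈ range (n+1), negBinomPMF α₁ p₂₁ i * negBinomPMF α₂ p₂₂ (n-i))
        = (p₂₁ ^ α₁ * p₂₂ ^ α₂) * ∑ i ∈ range (n+1), b α₁ (1-p₂₁) i * b α₂ (1-p₂₂) (n-i) := by
      rw [Finset.mul_sum]
      exact Finset.sum_congr rfl fun i _ => by rw [negBinomPMF_eq, negBinomPMF_eq]; ring
    simp_rw [e1]
    rw [e2, ← hPc]
    calc (∑ k ∈ range (n+1), (p₁₁ ^ α₁ * p₁₂ ^ α₂)
            * (∑ i ∈ range (k+1), b α₁ (1-p₁₁) i * b α₂ (1-p₁₂) (k-i)) * rr c l (n-k))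
        = (p₁₁ ^ α₁ * p₁₂ ^ α₂) * ∑ k ∈ range (n+1),
            (∑ i ∈ range (k+1), b α₁ (1-p₁₁) i * b α₂ (1-p₁₂) (k-i)) * rr c l (n-k) := by
          rw [Finset.mul_sum]; exact Finset.sum_congr rfl fun k _ => by ring
      _ = (p₁₁ ^ α₁ * p₁₂ ^ α₂) * (c * ∑ i ∈ range (n+1), b α₁ (1-p₂₁) i * b α₂ (1-p₂₂) (n-i)) := by
          rw [hldef, h]
      _ = (p₁₁ ^ α₁ * p₁₂ ^ α₂) * c * ∑ i ∈ range (n+1), b α₁ (1-p₂₁) i * b α₂ (1-p₂₂) (n-i) := by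
          ring
  -- ENNReal versions of the weights
  set A₁₁ : ℕ → ℝ≥0∞ := fun k => ENNReal.ofReal (negBinomPMF α₁ p₁₁ k) with hA11
  set A₁₂ : ℕ → ℝ≥0∞ := fun k => ENNReal.ofReal (negBinomPMF α₂ p₁₂ k) with hA12
  set A₂₁ : ℕ → ℝ≥0∞ := fun k => ENNReal.ofReal (negBinomPMF α₁ p₂₁ k) with hA21
  set A₂₂ : ℕ → ℝ≥0∞ := fun k => ENNReal.ofReal (negBinomPMF α₂ p₂₂ k) with hA22
  set U : ℕ → ℝ≥0∞ := fun k => ENNReal.ofReal (rr c l k) with hU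
  have hcau1 : ∀ n : ℕ, (∑ k ∈ range (n+1), A₁₁ k * A₁₂ (n-k))
      = ENNReal.ofReal (∑ k ∈ range (n+1), negBinomPMF α₁ p₁₁ k * negBinomPMF α₂ p₁₂ (n-k)) := by
    intro n
    rw [ENNReal.ofReal_sum_of_nonneg fun i _ => mul_nonneg
      (negBinomPMF_nonneg hα₁ hp11 hp11' _) (negBinomPMF_nonneg hα₂ hp12 hp12' _)]
    exact Finset.sum_congr rfl fun k _ => by
      rw [hA11, hA12, ENNReal.ofReal_mul (negBinomPMF_nonneg hα₁ hp11 hp11' _)]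
  have hcau2 : ∀ n : ℕ, (∑ k ∈ range (n+1), A₂₁ k * A₂₂ (n-k))
      = ENNReal.ofReal (∑ k ∈ range (n+1), negBinomPMF α₁ p₂₁ k * negBinomPMF α₂ p₂₂ (n-k)) := by
    intro n
    rw [ENNReal.ofReal_sum_of_nonneg fun i _ => mul_nonneg
      (negBinomPMF_nonneg hα₁ hp21 hp21' _) (negBinomPMF_nonneg hα₂ hp22 hp22' _)]
    exact Finset.sum_congr rfl fun k _ => by
      rw [hA21, hA22, ENNReal.ofReal_mul (negBinomPMF_nonneg hα₁ hp21 hp21' _)]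
  -- the ENNReal weight identity
  have hWE : ∀ n : ℕ, (∑ k ∈ range (n+1),
        (∑ i ∈ range (k+1), A₁₁ i * A₁₂ (k-i)) * U (n-k))
      = ∑ k ∈ range (n+1), A₂₁ k * A₂₂ (n-k) := by
    intro n
    rw [hcau2, ← hW n]
    rw [ENNReal.ofReal_sum_of_nonneg fun k _ => mul_nonneg (Finset.sum_nonneg fun i _ =>
      mul_nonneg (negBinomPMF_nonneg hα₁ hp11 hp11' _) (negBinomPMF_nonneg hα₂ hp12 hp12' _))
      (hr _)]
    refine Finset.sum_congr rfl fun k _ => ?_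
    rw [ENNReal.ofReal_mul (Finset.sum_nonneg fun i _ =>
      mul_nonneg (negBinomPMF_nonneg hα₁ hp11 hp11' _) (negBinomPMF_nonneg hα₂ hp12 hp12' _)),
      hcau1, hU]
  -- total masses
  have hT11 : ∑' k, A₁₁ k = 1 := tsum_negBinomPMF hα₁ hp11 hp11'
  have hT12 : ∑' k, A₁₂ k = 1 := tsum_negBinomPMF hα₂ hp12 hp12'
  have hT21 : ∑' k, A₂₁ k = 1 := tsum_negBinomPMF hα₁ hp21 hp21'
  have hT22 : ∑' k, A₂₂ k = 1 := tsum_negBinomPMF hα₂ hp22 hp22'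
  have hTU : ∑' k, U k = 1 := by
    have h1 : (∑' n : ℕ, ∑ k ∈ range (n+1),
        (∑ i ∈ range (k+1), A₁₁ i * A₁₂ (k-i)) * U (n-k)) = ∑' k, U k := by
      rw [tsum_cauchy_one, tsum_cauchy_one, hT11, hT12, one_mul, one_mul]
    have h2 : (∑' n : ℕ, ∑ k ∈ range (n+1), A₂₁ k * A₂₂ (n-k)) = 1 := by
      rw [tsum_cauchy_one, hT21, hT22, one_mul]
    rw [← h1, tsum_congr hWE, h2]
  -- assemble
  refine ⟨mR U, ⟨by rw [mR_univ]; exact hTU⟩, mR_Iio U, ?_⟩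
  rw [negBinomMeasure_eq, negBinomMeasure_eq, negBinomMeasure_eq, negBinomMeasure_eq,
    mR_conv, mR_conv, mR_conv]
  exact congrArg mR (funext fun n => (hWE n).symm)
end

section
/- Let α₁₁ ≤ α₁₂ and α₂₁ ≤ α₂₂ be positive with (α₁₁, α₁₂) ≺ (α₂₁, α₂₂), and let 1 > p₁ ≥ p₂ > 0. Then N_{α₁₁,p₁} + N_{α₁₂,p₂} ≤_conv N_{α₂₁,p₁} + N_{α₂₂,p₂} (independent summands). -/
open MeasureTheory ProbabilityTheory Real

namespace NBaux

open PowerSeries Finset Set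
open scoped ENNReal

/-! ### Elementary facts about the pmf -/

lemma pmf_nonneg {α p : ℝ} (hα : 0 ≤ α) (hp : 0 ≤ p) (hp1 : p ≤ 1) (k : ℕ) :
    0 ≤ negBinomPMF α p k := by
  unfold negBinomPMF
  have h1 : 0 ≤ Real.Gamma (k + α) := Real.Gamma_nonneg_of_nonneg (by positivity)
  have h2 : 0 ≤ Real.Gamma α := Real.Gamma_nonneg_of_nonneg hα
  have : (0:ℝ) ≤ 1 - p := by linarith
  positivity

lemma pmf_zero {α p : ℝ} (hα : 0 < α) : negBinomPMF α p 0 = p ^ α := by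
  unfold negBinomPMF
  have h2 : Real.Gamma α ≠ 0 := (Real.Gamma_pos_of_pos hα).ne'
  simp [h2]

lemma pmf_rec {α p : ℝ} (hα : 0 < α) (n : ℕ) :
    (n + 1 : ℝ) * negBinomPMF α p (n+1) = (1 - p) * ((n + α) * negBinomPMF α p n) := by
  unfold negBinomPMF
  have key : Real.Gamma ((n:ℝ) + 1 + α) = ((n:ℝ) + α) * Real.Gamma ((n:ℝ) + α) := by
    have h0 : ((n:ℝ) + α) ≠ 0 := by positivity
    have := Real.Gamma_add_one h0
    rw [show (n:ℝ) + 1 + α = (n:ℝ) + α + 1 by ring, this]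
  push_cast
  rw [key, Nat.factorial_succ]
  push_cast
  field_simp
  ring

/-! ### Power series helpers -/

noncomputable abbrev Dx (F : PowerSeries ℝ) : PowerSeries ℝ := PowerSeries.derivative ℝ F

lemma coeff_Dx (F : PowerSeries ℝ) (n : ℕ) :
    coeff (R := ℝ) n (Dx F) = coeff (R := ℝ) (n+1) F * (n+1) := PowerSeries.coeff_derivative F n

lemma coeff_one_sub_C_mul_X_mul (q : ℝ) (F : PowerSeries ℝ) (n : ℕ) :
    coeff (R := ℝ) n ((1 - C (R := ℝ) q * X) * F) =
      coeff (R := ℝ) n F - q * (if n = 0 then 0 else coeff (R := ℝ) (n-1) F) := by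
  rw [sub_mul, one_mul, map_sub, mul_assoc, coeff_C_mul]
  cases n with
  | zero => simp
  | succ m => simp [PowerSeries.coeff_succ_X_mul]

lemma coeff_one_sub_C_mul_X_mul_Dx (q : ℝ) (F : PowerSeries ℝ) (n : ℕ) :
    coeff (R := ℝ) n ((1 - C (R := ℝ) q * X) * Dx F) =
      (n+1) * coeff (R := ℝ) (n+1) F - q * n * coeff (R := ℝ) n F := by
  rw [coeff_one_sub_C_mul_X_mul, coeff_Dx]
  cases n with
  | zero => simp
  | succ m =>
    rw [if_neg (Nat.succ_ne_zero m), Nat.succ_sub_one, coeff_Dx]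
    push_cast
    ring

lemma eq_of_deriv_rel {q c : ℝ} {F G : PowerSeries ℝ}
    (hF : (1 - C (R := ℝ) q * X) * Dx F = C (R := ℝ) c * F)
    (hG : (1 - C (R := ℝ) q * X) * Dx G = C (R := ℝ) c * G)
    (h0 : coeff (R := ℝ) 0 F = coeff (R := ℝ) 0 G) : F = G := by
  ext n
  induction n with
  | zero => exact h0
  | succ m ih =>
    have hF' := congrArg (coeff (R := ℝ) m) hF
    have hG' := congrArg (coeff (R := ℝ) m) hG
    rw [coeff_one_sub_C_mul_X_mul_Dx, coeff_C_mul] at hF' hG'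
    have hm : ((m:ℝ) + 1) ≠ 0 := by positivity
    have : ((m:ℝ)+1) * coeff (R := ℝ) (m+1) F = ((m:ℝ)+1) * coeff (R := ℝ) (m+1) G := by
      rw [show ((m:ℝ)+1) * coeff (R := ℝ) (m+1) F = c * coeff (R := ℝ) m F + q * m * coeff (R := ℝ) m F by
        linarith [hF'], ih]
      linarith [hG']
    exact mul_left_cancel₀ hm this

/-! ### The negative binomial power series -/

noncomputable def nbS (α p : ℝ) : PowerSeries ℝ := PowerSeries.mk (negBinomPMF α p)

lemma nbS_rel {α p : ℝ} (hα : 0 < α) :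
    (1 - C (R := ℝ) (1-p) * X) * Dx (nbS α p) = C (R := ℝ) (α * (1-p)) * nbS α p := by
  ext n
  rw [coeff_one_sub_C_mul_X_mul_Dx, coeff_C_mul]
  simp only [nbS, coeff_mk]
  linear_combination pmf_rec (p := p) hα n

lemma nbS_mul {α β p : ℝ} (hα : 0 < α) (hβ : 0 < β) (hp : 0 < p) :
    nbS α p * nbS β p = nbS (α+β) p := by
  refine eq_of_deriv_rel (q := 1-p) (c := (α+β)*(1-p)) ?_ (nbS_rel (by linarith)) ?_
  · have hd : Dx (nbS α p * nbS β p) = nbS α p * Dx (nbS β p) + nbS β p * Dx (nbS α p) := by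
      simpa [smul_eq_mul] using Derivation.leibniz (PowerSeries.derivative ℝ) (nbS α p) (nbS β p)
    rw [hd]
    have hC : C (R := ℝ) ((α+β)*(1-p)) = C (R := ℝ) (α*(1-p)) + C (R := ℝ) (β*(1-p)) := by
      rw [← map_add]; ring_nf
    rw [hC]
    linear_combination nbS α p * nbS_rel (p := p) hβ + nbS β p * nbS_rel (p := p) hα
  · simp only [nbS, coeff_zero_eq_constantCoeff, map_mul]
    simp only [constantCoeff_mk]
    rw [pmf_zero hα, pmf_zero hβ, pmf_zero (by linarith : (0:ℝ) < α + β),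
      Real.rpow_add hp]

/-! ### The mixing sequence τ and its power series -/

noncomputable def tauSeq (δ q₁ q₂ c₀ : ℝ) : ℕ → ℝ
  | 0 => c₀
  | (k+1) => (δ/(k+1)) *
      ∑ n ∈ Finset.range (k+1), (q₂^(n+1) - q₁^(n+1)) * tauSeq δ q₁ q₂ c₀ (k - n)
  decreasing_by exact Nat.lt_succ_of_le (Nat.sub_le k n)

lemma tauSeq_nonneg {δ q₁ q₂ c₀ : ℝ} (hδ : 0 ≤ δ) (hq₁ : 0 ≤ q₁) (hq : q₁ ≤ q₂)
    (hc : 0 ≤ c₀) : ∀ k, 0 ≤ tauSeq δ q₁ q₂ c₀ k := by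
  intro k
  induction k using Nat.strong_induction_on with
  | _ k ih =>
    cases k with
    | zero => simpa [tauSeq] using hc
    | succ m =>
      rw [tauSeq]
      apply mul_nonneg (by positivity)
      apply Finset.sum_nonneg
      intro n hn
      apply mul_nonneg (by nlinarith [pow_le_pow_left₀ hq₁ hq (n+1)])
      exact ih _ (Nat.lt_succ_of_le (Nat.sub_le m n))

noncomputable def geoS (q : ℝ) : PowerSeries ℝ := PowerSeries.mk (fun n => q ^ n)

lemma geoS_inv (q : ℝ) : (1 - C (R := ℝ) q * X) * geoS q = 1 := by
  ext n
  rw [coeff_one_sub_C_mul_X_mul]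
  cases n with
  | zero => simp [geoS]
  | succ m => simp [geoS, pow_succ, mul_comm]

noncomputable def gS (q₁ q₂ : ℝ) : PowerSeries ℝ :=
  PowerSeries.mk (fun n => q₂^(n+1) - q₁^(n+1))

lemma gS_eq (q₁ q₂ : ℝ) : gS q₁ q₂ = C (R := ℝ) q₂ * geoS q₂ - C (R := ℝ) q₁ * geoS q₁ := by
  ext n
  simp [gS, geoS, coeff_C_mul, pow_succ, mul_comm]

lemma gS_mul (q₁ q₂ : ℝ) :
    (1 - C (R := ℝ) q₁ * X) * ((1 - C (R := ℝ) q₂ * X) * gS q₁ q₂) = C (R := ℝ) (q₂ - q₁) := by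
  rw [gS_eq, map_sub]
  linear_combination (C (R := ℝ) q₂ * (1 - C (R := ℝ) q₁ * X)) * geoS_inv q₂
    - (C (R := ℝ) q₁ * (1 - C (R := ℝ) q₂ * X)) * geoS_inv q₁

noncomputable def tS (δ q₁ q₂ c₀ : ℝ) : PowerSeries ℝ := PowerSeries.mk (tauSeq δ q₁ q₂ c₀)

lemma tS_deriv (δ q₁ q₂ c₀ : ℝ) :
    Dx (tS δ q₁ q₂ c₀) = C (R := ℝ) δ * (gS q₁ q₂ * tS δ q₁ q₂ c₀) := by
  ext n
  rw [PowerSeries.coeff_derivative, coeff_C_mul, PowerSeries.coeff_mul]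
  simp only [tS, gS, coeff_mk]
  rw [Finset.Nat.sum_antidiagonal_eq_sum_range_succ_mk]
  rw [show tauSeq δ q₁ q₂ c₀ (n+1) = (δ/(n+1)) *
      ∑ k ∈ Finset.range (n+1), (q₂^(k+1) - q₁^(k+1)) * tauSeq δ q₁ q₂ c₀ (n - k) from by
    rw [tauSeq]]
  have hn : ((n:ℝ) + 1) ≠ 0 := by positivity
  field_simp

lemma tS_rel (δ q₁ q₂ c₀ : ℝ) :
    (1 - C (R := ℝ) q₁ * X) * ((1 - C (R := ℝ) q₂ * X) * Dx (tS δ q₁ q₂ c₀)) =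
      C (R := ℝ) (δ * (q₂ - q₁)) * tS δ q₁ q₂ c₀ := by
  rw [tS_deriv, map_mul]
  linear_combination (C (R := ℝ) δ * tS δ q₁ q₂ c₀) * gS_mul q₁ q₂

lemma one_sub_ne_zero (q : ℝ) : (1 - C (R := ℝ) q * X : PowerSeries ℝ) ≠ 0 := by
  intro h
  have := congrArg (coeff (R := ℝ) 0) h
  simp at this

lemma nbS_mul_tS {δ p₁ p₂ : ℝ} (hδ : 0 < δ) (hp₂ : 0 < p₂) (hp : p₂ ≤ p₁) (hp₁ : p₁ < 1) :
    nbS δ p₁ * tS δ (1-p₁) (1-p₂) ((p₂/p₁)^δ) = nbS δ p₂ := by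
  set q₁ := 1 - p₁ with hq₁
  set q₂ := 1 - p₂ with hq₂
  set T := tS δ q₁ q₂ ((p₂/p₁)^δ) with hT
  refine eq_of_deriv_rel (q := q₂) (c := δ * q₂) ?_ ?_ ?_
  · apply mul_left_cancel₀ (one_sub_ne_zero q₁)
    have hd : Dx (nbS δ p₁ * T) = nbS δ p₁ * Dx T + T * Dx (nbS δ p₁) := by
      simpa [smul_eq_mul] using Derivation.leibniz (PowerSeries.derivative ℝ) (nbS δ p₁) T
    have hA : (1 - C (R := ℝ) q₁ * X) * Dx (nbS δ p₁) = C (R := ℝ) (δ * q₁) * nbS δ p₁ := nbS_rel hδ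
    have hTT := tS_rel δ q₁ q₂ ((p₂/p₁)^δ)
    have c1 : C (R := ℝ) (δ * (q₂ - q₁)) = C (R := ℝ) δ * C (R := ℝ) q₂ - C (R := ℝ) δ * C (R := ℝ) q₁ := by
      rw [← map_mul, ← map_mul, ← map_sub]; ring_nf
    have c2 : C (R := ℝ) (δ * q₁) = C (R := ℝ) δ * C (R := ℝ) q₁ := by rw [← map_mul]
    have c3 : C (R := ℝ) (δ * q₂) = C (R := ℝ) δ * C (R := ℝ) q₂ := by rw [← map_mul]
    rw [c1] at hTT
    rw [c2] at hA
    rw [hd, c3]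
    linear_combination nbS δ p₁ * hTT + ((1 - C (R := ℝ) q₂ * X) * T) * hA
  · exact nbS_rel hδ
  · have h0T : coeff (R := ℝ) 0 T = (p₂/p₁)^δ := by
      simp [hT, tS, tauSeq]
    have h0A : coeff (R := ℝ) 0 (nbS δ p₁) = p₁ ^ δ := by
      simpa [nbS] using pmf_zero (p := p₁) hδ
    have h0B : coeff (R := ℝ) 0 (nbS δ p₂) = p₂ ^ δ := by
      simpa [nbS] using pmf_zero (p := p₂) hδ
    have hp₁pos : 0 < p₁ := lt_of_lt_of_le hp₂ hp
    rw [show (coeff (R := ℝ) 0) (nbS δ p₁ * T) = coeff (R := ℝ) 0 (nbS δ p₁) * coeff (R := ℝ) 0 T from by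
      simp [coeff_zero_eq_constantCoeff, map_mul], h0A, h0T, h0B,
      Real.div_rpow hp₂.le hp₁pos.le]
    field_simp

/-! ### Discrete measures from sequences -/

lemma conv_dirac_zero' (μ : Measure ℝ) [SFinite μ] : μ.conv (Measure.dirac 0) = μ := by
  rw [Measure.conv, Measure.prod_dirac, Measure.map_map (by fun_prop) (by fun_prop)]
  simp [Function.comp_def]

lemma smul_prod_meas {α β : Type*} [MeasurableSpace α] [MeasurableSpace β]
    (c : ℝ≥0∞) (μ : Measure α) (ν : Measure β) [SFinite μ] [SFinite ν] :
    (c • μ).prod ν = c • (μ.prod ν) := by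
  ext s hs
  rw [Measure.prod_apply hs, Measure.smul_apply, Measure.prod_apply hs,
    lintegral_smul_measure, smul_eq_mul]

lemma prod_smul_meas {α β : Type*} [MeasurableSpace α] [MeasurableSpace β]
    (c : ℝ≥0∞) (μ : Measure α) (ν : Measure β) [SFinite μ] [SFinite ν] :
    μ.prod (c • ν) = c • (μ.prod ν) := by
  ext s hs
  rw [Measure.prod_apply hs, Measure.smul_apply, Measure.prod_apply hs, smul_eq_mul,
    ← lintegral_const_mul _ (measurable_measure_prodMk_left hs)]
  simp [Measure.smul_apply]

lemma sum_dirac_reindex (c : ℕ × ℕ → ℝ≥0∞) (x : ℕ → ℝ) :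
    (Measure.sum fun p : ℕ × ℕ => c p • Measure.dirac (x (p.1 + p.2))) =
      Measure.sum fun n : ℕ => (∑ p ∈ Finset.HasAntidiagonal.antidiagonal n, c p) • Measure.dirac (x n) := by
  ext s hs
  rw [Measure.sum_apply _ hs, Measure.sum_apply _ hs]
  simp only [Measure.smul_apply, smul_eq_mul, Measure.dirac_apply' _ hs]
  rw [← (Finset.HasAntidiagonal.sigmaAntidiagonalEquivProd (A := ℕ)).tsum_eq
    (fun p : ℕ × ℕ => c p * s.indicator 1 (x (p.1 + p.2)))]
  rw [ENNReal.tsum_sigma']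
  congr 1
  ext n
  simp only [Finset.HasAntidiagonal.sigmaAntidiagonalEquivProd_apply]
  rw [Finset.tsum_subtype (Finset.HasAntidiagonal.antidiagonal n)
    (fun p : ℕ × ℕ => c p * s.indicator 1 (x (p.1 + p.2)))]
  rw [Finset.sum_mul]
  apply Finset.sum_congr rfl
  intro p hp
  rw [Finset.HasAntidiagonal.mem_antidiagonal] at hp
  rw [hp]

lemma conv_sum_dirac (f g : ℕ → ℝ≥0∞) :
    (Measure.sum fun k : ℕ => f k • Measure.dirac ((k : ℝ))).conv
      (Measure.sum fun k : ℕ => g k • Measure.dirac ((k : ℝ))) =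
    Measure.sum fun n : ℕ =>
      (∑ p ∈ Finset.HasAntidiagonal.antidiagonal n, f p.1 * g p.2) • Measure.dirac ((n : ℝ)) := by
  rw [Measure.conv, Measure.prod_sum]
  have h1 : (fun p : ℕ × ℕ => (f p.1 • Measure.dirac ((p.1 : ℝ))).prod
      (g p.2 • Measure.dirac ((p.2 : ℝ)))) =
      fun p : ℕ × ℕ => (f p.1 * g p.2) • Measure.dirac (((p.1 : ℝ), (p.2 : ℝ))) := by
    funext p
    rw [smul_prod_meas, prod_smul_meas, Measure.dirac_prod_dirac, smul_smul]
  rw [h1, Measure.map_sum (by fun_prop)]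
  have h2 : (fun p : ℕ × ℕ => Measure.map (fun x : ℝ × ℝ => x.1 + x.2)
      ((f p.1 * g p.2) • Measure.dirac (((p.1 : ℝ), (p.2 : ℝ))))) =
      fun p : ℕ × ℕ => (f p.1 * g p.2) • Measure.dirac (((p.1 + p.2 : ℕ) : ℝ)) := by
    funext p
    rw [Measure.map_smul, Measure.map_dirac' (by fun_prop)]
    push_cast
    rfl
  rw [h2]
  exact sum_dirac_reindex (fun p => f p.1 * g p.2) _

/-- The discrete measure on `ℝ` with masses `f k` at the naturals. -/
noncomputable def Mof (f : ℕ → ℝ) : Measure ℝ :=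
  Measure.sum fun k : ℕ => ENNReal.ofReal (f k) • Measure.dirac (k : ℝ)

lemma Mof_conv {f g : ℕ → ℝ} (hf : ∀ k, 0 ≤ f k) (hg : ∀ k, 0 ≤ g k) :
    (Mof f).conv (Mof g) = Mof (fun n => coeff (R := ℝ) n (PowerSeries.mk f * PowerSeries.mk g)) := by
  unfold Mof
  rw [conv_sum_dirac]
  congr 1
  funext n
  congr 1
  simp only [PowerSeries.coeff_mul, coeff_mk]
  rw [ENNReal.ofReal_sum_of_nonneg (fun p _ => mul_nonneg (hf p.1) (hg p.2))]
  apply Finset.sum_congr rfl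
  intro p _
  rw [ENNReal.ofReal_mul (hf p.1)]

lemma Mof_coeff_nonneg {f g : ℕ → ℝ} (hf : ∀ k, 0 ≤ f k) (hg : ∀ k, 0 ≤ g k) (n : ℕ) :
    0 ≤ coeff (R := ℝ) n (PowerSeries.mk f * PowerSeries.mk g) := by
  rw [PowerSeries.coeff_mul]
  exact Finset.sum_nonneg fun p _ => by
    simp only [coeff_mk]; exact mul_nonneg (hf p.1) (hg p.2)

lemma tsum_antidiagonal (w : ℕ × ℕ → ℝ≥0∞) :
    ∑' n : ℕ, ∑ p ∈ Finset.HasAntidiagonal.antidiagonal n, w p = ∑' p : ℕ × ℕ, w p := by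
  rw [← (Finset.HasAntidiagonal.sigmaAntidiagonalEquivProd (A := ℕ)).tsum_eq w, ENNReal.tsum_sigma']
  congr 1
  ext n
  simp only [Finset.HasAntidiagonal.sigmaAntidiagonalEquivProd_apply]
  exact (Finset.tsum_subtype (Finset.HasAntidiagonal.antidiagonal n) w).symm

/-! ### The pmf sums to one -/

lemma tsum_nbPMF {α p : ℝ} (hα : 0 < α) (hp : 0 < p) (hp1 : p < 1) :
    ∑' k : ℕ, ENNReal.ofReal (negBinomPMF α p k) = 1 := by
  have hΓ : 0 < Real.Gamma α := Real.Gamma_pos_of_pos hα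
  set c : ℕ → ℝ := fun k => p ^ α * (1 - p) ^ k / (Nat.factorial k * Real.Gamma α) with hc
  have hcnn : ∀ k, 0 ≤ c k := by
    intro k
    have : (0:ℝ) ≤ 1 - p := by linarith
    positivity
  have step1 : ∀ k : ℕ, ENNReal.ofReal (negBinomPMF α p k) =
      ∫⁻ x in Ioi (0:ℝ), ENNReal.ofReal (c k * (Real.exp (-x) * x ^ ((k + α) - 1))) := by
    intro k
    have hkα : (0:ℝ) < k + α := by positivity
    have h1 : negBinomPMF α p k = c k * Real.Gamma (k + α) := by
      unfold negBinomPMF; rw [hc]; ring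
    have h2 : ENNReal.ofReal (Real.Gamma ((k:ℝ) + α)) =
        ∫⁻ x in Ioi (0:ℝ), ENNReal.ofReal (Real.exp (-x) * x ^ ((k + α) - 1)) := by
      rw [Real.Gamma_eq_integral hkα]
      refine ofReal_integral_eq_lintegral_ofReal (Real.GammaIntegral_convergent hkα) ?_
      filter_upwards [ae_restrict_mem measurableSet_Ioi] with x hx
      have hx' : (0:ℝ) < x := hx
      positivity
    rw [h1, ENNReal.ofReal_mul (hcnn k), h2, ← lintegral_const_mul' _ _ ENNReal.ofReal_ne_top]
    congr 1
    funext x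
    rw [← ENNReal.ofReal_mul (hcnn k)]
  have hmeas : ∀ k : ℕ, AEMeasurable
      (fun x : ℝ => ENNReal.ofReal (c k * (Real.exp (-x) * x ^ ((k + α) - 1))))
      (volume.restrict (Ioi (0:ℝ))) := by
    intro k
    apply Measurable.aemeasurable
    apply ENNReal.measurable_ofReal.comp
    exact (measurable_const.mul ((Real.measurable_exp.comp measurable_neg).mul
      (measurable_id'.pow_const _)))
  have step2 : ∑' k : ℕ, ENNReal.ofReal (negBinomPMF α p k) =
      ∫⁻ x in Ioi (0:ℝ), ∑' k : ℕ,
        ENNReal.ofReal (c k * (Real.exp (-x) * x ^ ((k + α) - 1))) := by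
    simp_rw [step1]
    rw [← lintegral_tsum hmeas]
  have step3 : ∀ x : ℝ, 0 < x → (∑' k : ℕ,
      ENNReal.ofReal (c k * (Real.exp (-x) * x ^ ((k + α) - 1)))) =
      ENNReal.ofReal (p ^ α / Real.Gamma α * x ^ (α - 1) * Real.exp (-(p * x))) := by
    intro x hx
    set A : ℝ := p ^ α / Real.Gamma α * x ^ (α - 1) with hA
    have hAnn : 0 ≤ A := by positivity
    have hterm : ∀ k : ℕ, c k * (Real.exp (-x) * x ^ ((k + α) - 1)) =
        (A * Real.exp (-x)) * (((1 - p) * x) ^ k / Nat.factorial k) := by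
      intro k
      rw [show ((k:ℝ) + α) - 1 = (α - 1) + (k:ℝ) by ring, Real.rpow_add hx,
        Real.rpow_natCast, hc, hA]
      have hk : (Nat.factorial k : ℝ) ≠ 0 := by positivity
      rw [mul_pow]
      field_simp
    simp_rw [hterm]
    have hKnn : 0 ≤ A * Real.exp (-x) := by positivity
    simp_rw [ENNReal.ofReal_mul hKnn]
    rw [ENNReal.tsum_mul_left]
    have hsum : HasSum (fun k : ℕ => ((1 - p) * x) ^ k / Nat.factorial k)
        (Real.exp ((1 - p) * x)) := by
      rw [Real.exp_eq_exp_ℝ]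
      exact NormedSpace.expSeries_div_hasSum_exp _
    have hnn : ∀ k : ℕ, 0 ≤ ((1 - p) * x) ^ k / Nat.factorial k := by
      intro k
      have h1p : (0:ℝ) ≤ 1 - p := by linarith
      positivity
    rw [← ENNReal.ofReal_tsum_of_nonneg hnn hsum.summable, hsum.tsum_eq,
      ← ENNReal.ofReal_mul hKnn]
    congr 1
    rw [mul_assoc, ← Real.exp_add]
    ring_nf
  have step3' : ∫⁻ x in Ioi (0:ℝ), (∑' k : ℕ,
      ENNReal.ofReal (c k * (Real.exp (-x) * x ^ ((k + α) - 1)))) =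
      ∫⁻ x in Ioi (0:ℝ), gammaPDF α p x := by
    apply setLIntegral_congr_fun_ae measurableSet_Ioi
    apply ae_of_all
    intro x hx
    rw [step3 x hx, gammaPDF_of_nonneg (le_of_lt hx)]
  have step4 : ∫⁻ x in Ioi (0:ℝ), gammaPDF α p x = 1 := by
    have htot := lintegral_gammaPDF_eq_one hα hp
    have hsplit := lintegral_add_compl (μ := volume) (gammaPDF α p)
      (measurableSet_Ioi (a := (0:ℝ)))
    rw [htot, compl_Ioi] at hsplit
    have hzero : ∫⁻ x in Iic (0:ℝ), gammaPDF α p x = 0 := by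
      rw [← setLIntegral_congr (Iio_ae_eq_Iic (a := (0:ℝ)))]
      exact lintegral_gammaPDF_of_nonpos le_rfl
    rw [hzero, add_zero] at hsplit
    exact hsplit
  rw [step2, step3', step4]

end NBaux

open NBaux PowerSeries
open scoped ENNReal

/-- Convolution order under majorization of the shapes, similarly ordered with
fixed success probabilities. -/
theorem negBinom_majorize_shape_conv_order (α₁₁ α₁₂ α₂₁ α₂₂ p₁ p₂ : ℝ)
    (ha11 : 0 < α₁₁) (ha21 : 0 < α₂₁)
    (ho1 : α₁₁ ≤ α₁₂) (ho2 : α₂₁ ≤ α₂₂)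
    (hsum : α₁₁ + α₁₂ = α₂₁ + α₂₂) (hmax : max α₁₁ α₁₂ ≤ max α₂₁ α₂₂)
    (hp2 : 0 < p₂) (hp : p₂ ≤ p₁) (hp1 : p₁ < 1) :
    ConvLE ((negBinomMeasure α₁₁ p₁).conv (negBinomMeasure α₁₂ p₂))
      ((negBinomMeasure α₂₁ p₁).conv (negBinomMeasure α₂₂ p₂)) := by
  have hp1pos : 0 < p₁ := lt_of_lt_of_le hp2 hp
  have hp21 : p₂ < 1 := lt_of_le_of_lt hp hp1
  have h12le : α₁₂ ≤ α₂₂ := by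
    rwa [max_eq_right ho1, max_eq_right ho2] at hmax
  have hd : α₂₁ ≤ α₁₁ := by linarith
  have hMeq : ∀ α p : ℝ, negBinomMeasure α p = Mof (negBinomPMF α p) := fun _ _ => rfl
  rcases eq_or_lt_of_le hd with heq | hlt
  · -- δ = 0 : the two sides coincide, convolve with δ₀
    have h22 : α₂₂ = α₁₂ := by linarith
    refine ⟨Measure.dirac 0, inferInstance, ?_, ?_⟩
    · rw [Measure.dirac_apply' _ measurableSet_Iio]
      simp
    · rw [← heq, h22]
      haveI : SFinite ((negBinomMeasure α₂₁ p₁).conv (negBinomMeasure α₁₂ p₂)) := by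
        unfold negBinomMeasure
        infer_instance
      rw [conv_dirac_zero']
  · -- δ > 0
    set δ := α₁₁ - α₂₁ with hδdef
    have hδpos : (0:ℝ) < δ := by linarith
    set q₁ := 1 - p₁ with hq₁def
    set q₂ := 1 - p₂ with hq₂def
    set c₀ := (p₂/p₁) ^ δ with hc₀def
    set τ := tauSeq δ q₁ q₂ c₀ with hτdef
    have hτnn : ∀ k, 0 ≤ τ k :=
      tauSeq_nonneg hδpos.le (by linarith) (by linarith) (by positivity)
    have hT : nbS δ p₁ * tS δ q₁ q₂ c₀ = nbS δ p₂ := nbS_mul_tS hδpos hp2 hp hp1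
    -- τ sums to one
    have hτsum : ∑' k : ℕ, ENNReal.ofReal (τ k) = 1 := by
      have ha : ∑' k : ℕ, ENNReal.ofReal (negBinomPMF δ p₁ k) = 1 :=
        tsum_nbPMF hδpos hp1pos hp1
      have hb : ∑' k : ℕ, ENNReal.ofReal (negBinomPMF δ p₂ k) = 1 :=
        tsum_nbPMF hδpos hp2 hp21
      have hann : ∀ k, 0 ≤ negBinomPMF δ p₁ k :=
        pmf_nonneg hδpos.le hp1pos.le hp1.le
      have key : (1:ℝ≥0∞) = (∑' k : ℕ, ENNReal.ofReal (negBinomPMF δ p₁ k)) *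
          (∑' k : ℕ, ENNReal.ofReal (τ k)) := by
        rw [← hb]
        have hco : ∀ n : ℕ, ENNReal.ofReal (negBinomPMF δ p₂ n) =
            ∑ p ∈ Finset.HasAntidiagonal.antidiagonal n,
              ENNReal.ofReal (negBinomPMF δ p₁ p.1) * ENNReal.ofReal (τ p.2) := by
          intro n
          have := congrArg (coeff (R := ℝ) n) hT
          rw [PowerSeries.coeff_mul] at this
          simp only [nbS, tS, coeff_mk, ← hτdef] at this
          rw [← this, ENNReal.ofReal_sum_of_nonneg
            (fun p _ => mul_nonneg (hann p.1) (hτnn p.2))]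
          apply Finset.sum_congr rfl
          intro p _
          rw [ENNReal.ofReal_mul (hann p.1)]
        calc ∑' n : ℕ, ENNReal.ofReal (negBinomPMF δ p₂ n)
            = ∑' n : ℕ, ∑ p ∈ Finset.HasAntidiagonal.antidiagonal n,
                ENNReal.ofReal (negBinomPMF δ p₁ p.1) * ENNReal.ofReal (τ p.2) := by
              exact tsum_congr hco
          _ = ∑' p : ℕ × ℕ, ENNReal.ofReal (negBinomPMF δ p₁ p.1) * ENNReal.ofReal (τ p.2) :=
              tsum_antidiagonal _
          _ = (∑' k : ℕ, ENNReal.ofReal (negBinomPMF δ p₁ k)) *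
              (∑' k : ℕ, ENNReal.ofReal (τ k)) := by
              rw [ENNReal.tsum_prod']
              simp_rw [ENNReal.tsum_mul_left]
              rw [ENNReal.tsum_mul_right]
      rw [ha, one_mul] at key
      exact key.symm
    refine ⟨Mof τ, ?_, ?_, ?_⟩
    · constructor
      rw [Mof, Measure.sum_apply _ MeasurableSet.univ]
      simp only [Measure.smul_apply, smul_eq_mul, measure_univ, mul_one]
      exact hτsum
    · rw [Mof, Measure.sum_apply _ measurableSet_Iio]
      simp only [Measure.smul_apply, smul_eq_mul]
      have : ∀ k : ℕ, Measure.dirac ((k:ℝ)) (Set.Iio 0) = 0 := by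
        intro k
        rw [Measure.dirac_apply' _ measurableSet_Iio]
        apply Set.indicator_of_notMem
        simp
      simp [this]
    · -- the convolution identity
      have ha11nn : ∀ k, 0 ≤ negBinomPMF α₁₁ p₁ k :=
        pmf_nonneg ha11.le hp1pos.le hp1.le
      have ha12nn : ∀ k, 0 ≤ negBinomPMF α₁₂ p₂ k :=
        pmf_nonneg (by linarith) hp2.le hp21.le
      have ha21nn : ∀ k, 0 ≤ negBinomPMF α₂₁ p₁ k :=
        pmf_nonneg ha21.le hp1pos.le hp1.le
      have ha22nn : ∀ k, 0 ≤ negBinomPMF α₂₂ p₂ k :=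
        pmf_nonneg (by linarith) hp2.le hp21.le
      rw [hMeq, hMeq, hMeq, hMeq, Mof_conv ha11nn ha12nn, Mof_conv ha21nn ha22nn,
        Mof_conv (Mof_coeff_nonneg ha11nn ha12nn) hτnn]
      -- series identity
      have hmk : ∀ F : PowerSeries ℝ, PowerSeries.mk (fun n => coeff (R := ℝ) n F) = F := by
        intro F; ext n; simp
      congr 1
      funext n
      congr 1
      rw [hmk]
      have h1 : nbS α₂₁ p₁ * nbS δ p₁ = nbS α₁₁ p₁ := by
        rw [nbS_mul ha21 hδpos hp1pos, show α₂₁ + δ = α₁₁ by rw [hδdef]; ring]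
      have h2 : nbS α₁₂ p₂ * nbS δ p₂ = nbS α₂₂ p₂ := by
        rw [nbS_mul (by linarith) hδpos hp2, show α₁₂ + δ = α₂₂ by rw [hδdef]; linarith]
      have hser : (nbS α₁₁ p₁ * nbS α₁₂ p₂) * tS δ q₁ q₂ c₀ =
          nbS α₂₁ p₁ * nbS α₂₂ p₂ := by
        rw [← h1, ← h2, ← hT]
        ring
      exact hser.symm
end

section
/- Let α₁ < α₂ be positive shapes and p₁ > p₂ in (0,1) be success probabilities. Then the 'aligned' convolution N_{α₂,p₁} + N_{α₁,p₂} ≤_conv N_{α₁,p₁} + N_{α₂,p₂} (the configuration pairing the larger shape with the smaller probability dominates, independent summands). -/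
open MeasureTheory ProbabilityTheory Real

open Finset PowerSeries
open scoped ENNReal NNReal

namespace NBAux

/-- Regroup a double `tsum` over `ℕ × ℕ` along antidiagonals. -/
lemma tsum_tsum_antidiagonal (F : ℕ → ℕ → ℝ≥0∞) :
    ∑' i, ∑' j, F i j = ∑' n, ∑ kl ∈ Finset.HasAntidiagonal.antidiagonal n, F kl.1 kl.2 := by
  have h1 : ∑' p : ℕ × ℕ, F p.1 p.2 = ∑' i, ∑' j, F i j := ENNReal.tsum_prod'
  rw [← h1]
  rw [← Finset.HasAntidiagonal.sigmaAntidiagonalEquivProd.tsum_eq (fun p : ℕ × ℕ => F p.1 p.2)]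
  rw [ENNReal.tsum_sigma']
  congr 1
  funext n
  rw [← Finset.sum_finset_coe]
  exact tsum_fintype _

lemma tsum_mul_tsum_antidiagonal (f g : ℕ → ℝ≥0∞) :
    (∑' n, f n) * ∑' n, g n = ∑' n, ∑ kl ∈ Finset.HasAntidiagonal.antidiagonal n, f kl.1 * g kl.2 := by
  rw [← tsum_tsum_antidiagonal (fun i j => f i * g j)]
  simp_rw [ENNReal.tsum_mul_left, ENNReal.tsum_mul_right]

/-- A discrete measure on `ℝ` supported on `ℕ` with weights `f`. -/
noncomputable def dMeas (f : ℕ → ℝ≥0∞) : Measure ℝ :=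
  Measure.sum fun k : ℕ => f k • Measure.dirac (k : ℝ)

instance (f : ℕ → ℝ≥0∞) : SFinite (dMeas f) := by
  unfold dMeas; infer_instance

lemma dMeas_apply (f : ℕ → ℝ≥0∞) {s : Set ℝ} (hs : MeasurableSet s) :
    dMeas f s = ∑' k : ℕ, f k * s.indicator 1 (k : ℝ) := by
  rw [dMeas, Measure.sum_apply _ hs]
  congr 1
  funext k
  rw [Measure.smul_apply, smul_eq_mul, Measure.dirac_apply' _ hs]

lemma lintegral_dMeas (f : ℕ → ℝ≥0∞) {g : ℝ → ℝ≥0∞} (hg : Measurable g) :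
    ∫⁻ x, g x ∂(dMeas f) = ∑' k : ℕ, f k * g (k : ℝ) := by
  rw [dMeas, lintegral_sum_measure]
  congr 1
  funext k
  rw [lintegral_smul_measure, lintegral_dirac' _ hg, smul_eq_mul]

lemma dMeas_conv (f g : ℕ → ℝ≥0∞) :
    (dMeas f).conv (dMeas g) =
      dMeas (fun n => ∑ kl ∈ Finset.HasAntidiagonal.antidiagonal n, f kl.1 * g kl.2) := by
  ext s hs
  have hadd : Measurable fun x : ℝ × ℝ => x.1 + x.2 := by fun_prop
  rw [Measure.conv, Measure.map_apply hadd hs]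
  have hA : MeasurableSet ((fun x : ℝ × ℝ => x.1 + x.2) ⁻¹' s) := hadd hs
  rw [Measure.prod_apply hA]
  rw [lintegral_dMeas _ (measurable_measure_prodMk_left hA)]
  have hsec : ∀ i : ℕ,
      dMeas g (Prod.mk (i : ℝ) ⁻¹' ((fun x : ℝ × ℝ => x.1 + x.2) ⁻¹' s)) =
        ∑' j : ℕ, g j * s.indicator 1 ((i : ℝ) + (j : ℝ)) := by
    intro i
    have hms : MeasurableSet (Prod.mk (i : ℝ) ⁻¹' ((fun x : ℝ × ℝ => x.1 + x.2) ⁻¹' s)) :=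
      measurable_prodMk_left hA
    rw [dMeas_apply _ hms]
    congr 1
  simp_rw [hsec, ← ENNReal.tsum_mul_left]
  rw [tsum_tsum_antidiagonal (fun i j => f i * (g j * s.indicator 1 ((i:ℝ)+(j:ℝ))))]
  rw [dMeas_apply _ hs]
  congr 1
  funext n
  rw [Finset.sum_mul]
  apply Finset.sum_congr rfl
  intro kl hkl
  have hc : ((kl.1 : ℝ)) + (kl.2 : ℝ) = (n : ℝ) := by
    have := Finset.HasAntidiagonal.mem_antidiagonal.mp hkl
    push_cast [← this]; ring
  rw [hc, mul_assoc]


/-- Coefficients of `(1-q*X)^(-α)`, defined by recurrence. -/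
noncomputable def bseq (α q : ℝ) : ℕ → ℝ
  | 0 => 1
  | (k+1) => q * ((k : ℝ) + α) / ((k : ℝ) + 1) * bseq α q k

lemma bseq_nonneg {α q : ℝ} (hα : 0 < α) (hq : 0 ≤ q) : ∀ k, 0 ≤ bseq α q k
  | 0 => by simp [bseq]
  | (k+1) => by
      have h1 : (0:ℝ) ≤ q * ((k : ℝ) + α) / ((k : ℝ) + 1) := by positivity
      exact mul_nonneg h1 (bseq_nonneg hα hq k)

lemma negBinomPMF_eq {α p : ℝ} (hα : 0 < α) (k : ℕ) :
    Real.Gamma (k + α) / (Nat.factorial k * Real.Gamma α) * (1 - p) ^ k = bseq α (1-p) k := by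
  induction k with
  | zero => simp [bseq, div_self (by positivity : (Real.Gamma α) ≠ 0),
      ne_of_gt (Real.Gamma_pos_of_pos hα)]
  | succ k ih =>
      have hne : ((k : ℝ) + α) ≠ 0 := by positivity
      have hGamma : Real.Gamma ((k+1 : ℕ) + α) = ((k:ℝ) + α) * Real.Gamma (k + α) := by
        have : ((k+1 : ℕ) : ℝ) + α = ((k : ℝ) + α) + 1 := by push_cast; ring
        rw [this, Real.Gamma_add_one hne]
      rw [bseq, ← ih, hGamma]
      rw [Nat.factorial_succ]
      push_cast
      field_simp
      ring

lemma gamma_pos_aux {α : ℝ} (hα : 0 < α) : 0 < Real.Gamma α := Real.Gamma_pos_of_pos hα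

/-- Power series with coefficients `bseq α q`. -/
noncomputable def Fs (α q : ℝ) : ℝ⟦X⟧ := PowerSeries.mk (bseq α q)

/-- The polynomial `1 - q X` as a power series. -/
noncomputable def lin (q : ℝ) : ℝ⟦X⟧ := 1 - PowerSeries.C q * PowerSeries.X

lemma coeff_lin_mul_zero (q : ℝ) (f : ℝ⟦X⟧) :
    coeff 0 (lin q * f) = coeff 0 f := by
  simp [lin, sub_mul, coeff_C_mul, mul_comm (PowerSeries.X : ℝ⟦X⟧) f]

lemma coeff_lin_mul_succ (q : ℝ) (f : ℝ⟦X⟧) (n : ℕ) :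
    coeff (n+1) (lin q * f) = coeff (n+1) f - q * coeff n f := by
  have hx : (PowerSeries.C q * PowerSeries.X) * f = PowerSeries.C q * (f * PowerSeries.X) := by
    ring
  simp [lin, sub_mul, hx, coeff_C_mul, coeff_succ_mul_X]

lemma constantCoeff_lin (q : ℝ) : constantCoeff (lin q) = 1 := by
  simp [lin]

lemma ode_F (α q : ℝ) : lin q * (d⁄dX ℝ) (Fs α q) = PowerSeries.C (α*q) * Fs α q := by
  ext n
  rcases n with _ | n
  · rw [coeff_lin_mul_zero, coeff_C_mul]
    simp only [coeff_derivative, Fs, coeff_mk]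
    show bseq α q 1 * ((0:ℕ)+1 : ℝ) = α * q * bseq α q 0
    simp [bseq]; ring
  · rw [coeff_lin_mul_succ, coeff_C_mul]
    simp only [coeff_derivative, Fs, coeff_mk]
    show bseq α q (n+2) * ((n+1 : ℕ)+1 : ℝ) - q * (bseq α q (n+1) * ((n:ℕ)+1 : ℝ))
        = α * q * bseq α q (n+1)
    have h2 : bseq α q (n+2) = q * (((n+1:ℕ) : ℝ) + α) / (((n+1:ℕ):ℝ) + 1) * bseq α q (n+1) := rfl
    rw [h2]
    have hne : (((n+1:ℕ):ℝ) + 1) ≠ 0 := by positivity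
    push_cast at hne ⊢
    field_simp
    ring

/-- Uniqueness of solutions of the formal ODE `A * G' = B * G`. -/
lemma ode_unique {A B G H : ℝ⟦X⟧} (hA : constantCoeff A = 1)
    (hG : A * (d⁄dX ℝ) G = B * G) (hH : A * (d⁄dX ℝ) H = B * H)
    (h0 : coeff 0 G = coeff 0 H) : G = H := by
  ext n
  induction n using Nat.strong_induction_on with
  | _ n ih =>
    rcases n with _ | n
    · exact h0
    · -- use coefficient n of the two ODEs
      have hGn := congrArg (coeff n) hG
      have hHn := congrArg (coeff n) hH
      rw [coeff_mul, coeff_mul] at hGn hHn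
      have hij : ∀ kl ∈ Finset.HasAntidiagonal.antidiagonal n,
          coeff kl.1 B * coeff kl.2 G = coeff kl.1 B * coeff kl.2 H := by
        intro kl hkl
        have : kl.2 ≤ n := Finset.HasAntidiagonal.antidiagonal.snd_le hkl
        rw [ih kl.2 (Nat.lt_succ_of_le this)]
      have hrhs : (∑ kl ∈ Finset.HasAntidiagonal.antidiagonal n, coeff kl.1 B * coeff kl.2 G)
          = ∑ kl ∈ Finset.HasAntidiagonal.antidiagonal n, coeff kl.1 B * coeff kl.2 H :=
        Finset.sum_congr rfl hij
      rw [hrhs, ← hHn] at hGn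
      -- now LHS sums over A * derivative coefficients
      have hsplit : ∀ (K : ℝ⟦X⟧), (∑ kl ∈ Finset.HasAntidiagonal.antidiagonal n,
            coeff kl.1 A * coeff kl.2 ((d⁄dX ℝ) K))
          = coeff 0 A * (coeff (n+1) K * ((n:ℝ)+1)) + ∑ kl ∈ (Finset.HasAntidiagonal.antidiagonal n).erase (0, n),
            coeff kl.1 A * (coeff (kl.2+1) K * ((kl.2:ℝ)+1)) := by
        intro K
        rw [← Finset.add_sum_erase _ _ (by simp : ((0:ℕ),n) ∈ Finset.HasAntidiagonal.antidiagonal n)]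
        simp [coeff_derivative]
      rw [hsplit, hsplit] at hGn
      have herase : ∀ kl ∈ (Finset.HasAntidiagonal.antidiagonal n).erase (0, n),
          coeff kl.1 A * (coeff (kl.2+1) G * ((kl.2:ℝ)+1))
            = coeff kl.1 A * (coeff (kl.2+1) H * ((kl.2:ℝ)+1)) := by
        intro kl hkl
        have h1 : kl ∈ Finset.HasAntidiagonal.antidiagonal n := Finset.mem_of_mem_erase hkl
        have h2 : kl ≠ (0, n) := Finset.ne_of_mem_erase hkl
        have h3 : kl.2 < n := by
          have hsum : kl.1 + kl.2 = n := Finset.HasAntidiagonal.mem_antidiagonal.mp h1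
          rcases Nat.eq_zero_or_pos kl.1 with h | h
          · exfalso; apply h2; ext <;> omega
          · omega
        rw [ih (kl.2+1) (by omega)]
      rw [Finset.sum_congr rfl herase] at hGn
      have hcc : coeff 0 A = 1 := by
        rw [coeff_zero_eq_constantCoeff]; exact hA
      rw [hcc] at hGn
      have := hGn
      have hfin : coeff (n+1) G * ((n:ℝ)+1) = coeff (n+1) H * ((n:ℝ)+1) := by
        linarith [this]
      have hne : ((n:ℝ)+1) ≠ 0 := by positivity
      exact mul_right_cancel₀ hne hfin


lemma coeff_pow_eq_zero {g : ℝ⟦X⟧} (h0 : constantCoeff g = 0) :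
    ∀ m l : ℕ, l < m → coeff l (g ^ m) = 0 := by
  intro m
  induction m with
  | zero => intro l hl; omega
  | succ m ih =>
      intro l hl
      rw [pow_succ, mul_comm, coeff_mul]
      apply Finset.sum_eq_zero
      intro kl hkl
      have hsum : kl.1 + kl.2 = l := Finset.HasAntidiagonal.mem_antidiagonal.mp hkl
      rcases Nat.eq_zero_or_pos kl.1 with h | h
      · have : coeff kl.1 g = 0 := by
          rw [h, coeff_zero_eq_constantCoeff]; exact h0
        rw [this, zero_mul]
      · have : coeff kl.2 (g ^ m) = 0 := ih kl.2 (by omega)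
        rw [this, mul_zero]

/-- Coefficients of the formal exponential of `g` (for `g` with zero constant term). -/
noncomputable def eseq (g : ℝ⟦X⟧) (n : ℕ) : ℝ :=
  ∑ m ∈ Finset.range (n+1), coeff n (g ^ m) / (Nat.factorial m : ℝ)

noncomputable def Es (g : ℝ⟦X⟧) : ℝ⟦X⟧ := PowerSeries.mk (eseq g)

lemma eseq_zero (g : ℝ⟦X⟧) : eseq g 0 = 1 := by
  simp [eseq]

lemma eseq_eq_range {g : ℝ⟦X⟧} (h0 : constantCoeff g = 0) (n N : ℕ) (hN : n + 1 ≤ N) :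
    eseq g n = ∑ m ∈ Finset.range N, coeff n (g ^ m) / (Nat.factorial m : ℝ) := by
  apply Finset.sum_subset
  · intro m hm
    simp only [Finset.mem_range] at *
    omega
  · intro m hm hnm
    simp only [Finset.mem_range] at *
    rw [coeff_pow_eq_zero h0 m n (by omega), zero_div]

lemma coeff_pow_nonneg {g : ℝ⟦X⟧} (hg : ∀ n, 0 ≤ coeff n g) :
    ∀ m n : ℕ, 0 ≤ coeff n (g ^ m) := by
  intro m
  induction m with
  | zero =>
      intro n
      rw [pow_zero, coeff_one]
      split <;> norm_num
  | succ m ih =>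
      intro n
      rw [pow_succ, coeff_mul]
      apply Finset.sum_nonneg
      intro kl _
      exact mul_nonneg (ih kl.1) (hg kl.2)

lemma eseq_nonneg {g : ℝ⟦X⟧} (hg : ∀ n, 0 ≤ coeff n g) (n : ℕ) : 0 ≤ eseq g n := by
  apply Finset.sum_nonneg
  intro m _
  have := coeff_pow_nonneg hg m n
  positivity

lemma ode_E {g : ℝ⟦X⟧} (h0 : constantCoeff g = 0) :
    (d⁄dX ℝ) (Es g) = (d⁄dX ℝ) g * Es g := by
  ext n
  rw [coeff_derivative]
  have hmkE : coeff (n+1) (Es g) = eseq g (n+1) := by rw [Es, coeff_mk]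
  rw [hmkE]
  have key : ∀ m : ℕ, coeff (n+1) (g ^ (m+1)) * ((n:ℝ)+1)
      = ((m:ℝ)+1) * coeff n (g ^ m * (d⁄dX ℝ) g) := by
    intro m
    have hd := Derivation.leibniz_pow (d⁄dX ℝ) g (n := m+1)
    have hc := congrArg (coeff n) hd
    rw [coeff_derivative, map_nsmul] at hc
    rw [hc, smul_eq_mul, Nat.add_sub_cancel, nsmul_eq_mul]
    push_cast
    ring
  calc eseq g (n+1) * ((n:ℝ)+1)
      = ∑ m ∈ Finset.range (n+2), coeff (n+1) (g^m) / (Nat.factorial m : ℝ) * ((n:ℝ)+1) := by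
        rw [eseq, Finset.sum_mul]
    _ = ∑ m ∈ Finset.range (n+1), coeff (n+1) (g^(m+1)) / (Nat.factorial (m+1) : ℝ) * ((n:ℝ)+1) := by
        rw [Finset.sum_range_succ']
        simp [coeff_one]
    _ = ∑ m ∈ Finset.range (n+1), coeff n (g^m * (d⁄dX ℝ) g) / (Nat.factorial m : ℝ) := by
        apply Finset.sum_congr rfl
        intro m _
        have hkey := key m
        have hfac : (Nat.factorial (m+1) : ℝ) = ((m:ℝ)+1) * (Nat.factorial m : ℝ) := by
          rw [Nat.factorial_succ]; push_cast; ring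
        have hfne : (Nat.factorial m : ℝ) ≠ 0 := by positivity
        have hm1 : ((m:ℝ)+1) ≠ 0 := by positivity
        rw [hfac]
        field_simp
        linear_combination hkey
    _ = coeff n ((d⁄dX ℝ) g * Es g) := by
        rw [coeff_mul]
        have hterm : ∀ kl ∈ Finset.HasAntidiagonal.antidiagonal n,
            coeff kl.1 ((d⁄dX ℝ) g) * coeff kl.2 (Es g)
              = ∑ m ∈ Finset.range (n+1),
                  coeff kl.1 ((d⁄dX ℝ) g) * coeff kl.2 (g^m) / (Nat.factorial m : ℝ) := by
          intro kl hkl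
          have h2 : kl.2 ≤ n := Finset.HasAntidiagonal.antidiagonal.snd_le hkl
          have : coeff kl.2 (Es g) = eseq g kl.2 := by rw [Es, coeff_mk]
          rw [this, eseq_eq_range h0 kl.2 (n+1) (by omega), Finset.mul_sum]
          apply Finset.sum_congr rfl
          intro m _
          ring
        rw [Finset.sum_congr rfl hterm, Finset.sum_comm]
        apply Finset.sum_congr rfl
        intro m _
        rw [← Finset.sum_div, ← coeff_mul, mul_comm]


lemma tsum_ofReal_coeff_pow {g : ℝ⟦X⟧} (hg : ∀ n, 0 ≤ coeff n g) (m : ℕ) :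
    ∑' n, ENNReal.ofReal (coeff n (g ^ m)) = (∑' n, ENNReal.ofReal (coeff n g)) ^ m := by
  induction m with
  | zero =>
      rw [pow_zero, pow_zero]
      rw [tsum_eq_single 0]
      · simp [coeff_one]
      · intro b hb; simp [coeff_one, hb]
  | succ m ih =>
      rw [pow_succ, pow_succ, ← ih, tsum_mul_tsum_antidiagonal]
      congr 1
      funext n
      rw [coeff_mul, ENNReal.ofReal_sum_of_nonneg]
      · apply Finset.sum_congr rfl
        intro kl _
        rw [ENNReal.ofReal_mul (coeff_pow_nonneg hg m kl.1)]
      · intro kl _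
        exact mul_nonneg (coeff_pow_nonneg hg m kl.1) (hg kl.2)

lemma tsum_eseq {g : ℝ⟦X⟧} (h0 : constantCoeff g = 0) (hg : ∀ n, 0 ≤ coeff n g)
    {S : ℝ} (hS : HasSum (fun n => coeff n g) S) :
    ∑' n, ENNReal.ofReal (eseq g n) = ENNReal.ofReal (Real.exp S) := by
  have hS0 : 0 ≤ S := hS.nonneg hg
  have h1 : ∀ n : ℕ, ENNReal.ofReal (eseq g n)
      = ∑' m : ℕ, ENNReal.ofReal (coeff n (g ^ m) / (Nat.factorial m : ℝ)) := by
    intro n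
    rw [eseq, ENNReal.ofReal_sum_of_nonneg]
    · refine (tsum_eq_sum ?_).symm
      intro m hm
      simp only [Finset.mem_range, not_lt] at hm
      rw [coeff_pow_eq_zero h0 m n (by omega)]
      simp
    · intro m _
      have := coeff_pow_nonneg hg m n
      positivity
  simp_rw [h1]
  rw [ENNReal.tsum_comm]
  have h2 : ∀ m : ℕ, ∑' n : ℕ, ENNReal.ofReal (coeff n (g ^ m) / (Nat.factorial m : ℝ))
      = ENNReal.ofReal (S ^ m / (Nat.factorial m : ℝ)) := by
    intro m
    have hfp : (0:ℝ) < (Nat.factorial m : ℝ) := by positivity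
    have : ∀ n : ℕ, ENNReal.ofReal (coeff n (g ^ m) / (Nat.factorial m : ℝ))
        = ENNReal.ofReal (coeff n (g ^ m)) / ENNReal.ofReal (Nat.factorial m : ℝ) := by
      intro n
      rw [ENNReal.ofReal_div_of_pos hfp]
    simp_rw [this]
    simp_rw [div_eq_mul_inv, ENNReal.tsum_mul_right]
    rw [tsum_ofReal_coeff_pow hg m]
    have hsum : ∑' n, ENNReal.ofReal (coeff n g) = ENNReal.ofReal S := by
      rw [← hS.tsum_eq, ← ENNReal.ofReal_tsum_of_nonneg hg hS.summable]
    rw [hsum, ← ENNReal.ofReal_pow hS0, ← div_eq_mul_inv, ← ENNReal.ofReal_div_of_pos hfp,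
      div_eq_mul_inv (S^m)]
  simp_rw [h2]
  rw [← ENNReal.ofReal_tsum_of_nonneg (fun m => by positivity)
    (Real.summable_pow_div_factorial S)]
  congr 1
  rw [Real.exp_eq_exp_ℝ, NormedSpace.exp_eq_tsum_div]


/-- Coefficients of `β(log(1/(1-q₂ X)) - log(1/(1-q₁ X)))`. -/
noncomputable def dseq (β q₁ q₂ : ℝ) (k : ℕ) : ℝ :=
  if k = 0 then 0 else β * (q₂^k - q₁^k) / k

noncomputable def gs (β q₁ q₂ : ℝ) : ℝ⟦X⟧ := PowerSeries.mk (dseq β q₁ q₂)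

lemma constantCoeff_gs (β q₁ q₂ : ℝ) : constantCoeff (gs β q₁ q₂) = 0 := by
  rw [gs, ← coeff_zero_eq_constantCoeff_apply, coeff_mk, dseq]; simp

lemma dseq_nonneg {β q₁ q₂ : ℝ} (hβ : 0 ≤ β) (hq₁ : 0 ≤ q₁) (h12 : q₁ ≤ q₂) (k : ℕ) :
    0 ≤ dseq β q₁ q₂ k := by
  rw [dseq]
  split
  · exact le_refl 0
  · have h := pow_le_pow_left₀ hq₁ h12 k
    have h2 : (0:ℝ) ≤ q₂ ^ k - q₁ ^ k := by linarith
    have h3 : (0:ℝ) ≤ (k:ℝ) := by positivity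
    positivity

lemma coeff_gs_nonneg {β q₁ q₂ : ℝ} (hβ : 0 ≤ β) (hq₁ : 0 ≤ q₁) (h12 : q₁ ≤ q₂) (n : ℕ) :
    0 ≤ coeff n (gs β q₁ q₂) := by
  rw [gs, coeff_mk]; exact dseq_nonneg hβ hq₁ h12 n

lemma hasSum_dseq {β q₁ q₂ : ℝ} (hq₁ : |q₁| < 1) (hq₂ : |q₂| < 1) :
    HasSum (dseq β q₁ q₂) (β * (Real.log (1 - q₁) - Real.log (1 - q₂))) := by
  have h1 := Real.hasSum_pow_div_log_of_abs_lt_one hq₁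
  have h2 := Real.hasSum_pow_div_log_of_abs_lt_one hq₂
  have h3 := (h2.sub h1).mul_left β
  have h4 : (fun n : ℕ => β * (q₂ ^ (n+1) / (n+1) - q₁ ^ (n+1) / (n+1)))
      = fun n : ℕ => dseq β q₁ q₂ (n+1) := by
    funext n
    rw [dseq]
    simp only [Nat.succ_ne_zero, if_false]
    push_cast
    ring
  rw [h4] at h3
  have h5 : -Real.log (1 - q₂) - -Real.log (1 - q₁) = Real.log (1 - q₁) - Real.log (1 - q₂) := by
    ring
  rw [h5] at h3
  have h6 := (hasSum_nat_add_iff (f := dseq β q₁ q₂) 1).mp h3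
  simpa [dseq] using h6

lemma coeff_d_gs (β q₁ q₂ : ℝ) (k : ℕ) :
    coeff k ((d⁄dX ℝ) (gs β q₁ q₂)) = β * (q₂^(k+1) - q₁^(k+1)) := by
  rw [coeff_derivative, gs, coeff_mk, dseq]
  simp only [Nat.succ_ne_zero, if_false]
  have : ((k:ℝ)+1) ≠ 0 := by positivity
  push_cast
  field_simp

lemma poly_ode_gs (β q₁ q₂ : ℝ) :
    lin q₁ * (lin q₂ * (d⁄dX ℝ) (gs β q₁ q₂)) = PowerSeries.C (β * (q₂ - q₁)) := by
  ext n
  rcases n with _ | n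
  · rw [coeff_lin_mul_zero, coeff_lin_mul_zero, coeff_d_gs, PowerSeries.coeff_zero_C]
    ring
  · rw [coeff_lin_mul_succ, PowerSeries.coeff_C]
    simp only [Nat.succ_ne_zero, if_false]
    rcases n with _ | n
    · rw [coeff_lin_mul_succ, coeff_lin_mul_zero, coeff_d_gs, coeff_d_gs]
      ring
    · rw [coeff_lin_mul_succ, coeff_lin_mul_succ, coeff_d_gs, coeff_d_gs, coeff_d_gs]
      ring

lemma ode_Es_gs (β q₁ q₂ : ℝ) :
    (lin q₁ * lin q₂) * (d⁄dX ℝ) (Es (gs β q₁ q₂))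
      = PowerSeries.C (β * (q₂ - q₁)) * Es (gs β q₁ q₂) := by
  rw [ode_E (constantCoeff_gs β q₁ q₂)]
  rw [show (lin q₁ * lin q₂) * ((d⁄dX ℝ) (gs β q₁ q₂) * Es (gs β q₁ q₂))
      = (lin q₁ * (lin q₂ * (d⁄dX ℝ) (gs β q₁ q₂))) * Es (gs β q₁ q₂) by ring]
  rw [poly_ode_gs]

lemma PS_main (α₁ α₂ q₁ q₂ : ℝ) :
    Fs α₂ q₁ * Fs α₁ q₂ * Es (gs (α₂ - α₁) q₁ q₂) = Fs α₁ q₁ * Fs α₂ q₂ := by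
  set A := lin q₁ * lin q₂ with hAdef
  set B := PowerSeries.C (α₁*q₁) * lin q₂ + PowerSeries.C (α₂*q₂) * lin q₁ with hBdef
  have hA : constantCoeff A = 1 := by
    rw [hAdef, map_mul, constantCoeff_lin, constantCoeff_lin, one_mul]
  have hB : B = PowerSeries.C (α₂*q₁) * lin q₂ + PowerSeries.C (α₁*q₂) * lin q₁
      + PowerSeries.C ((α₂ - α₁) * (q₂ - q₁)) := by
    rw [hBdef]
    simp only [lin, map_mul, map_sub]
    ring
  have e₁ := ode_F α₂ q₁
  have e₂ := ode_F α₁ q₂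
  have e₃ := ode_Es_gs (α₂ - α₁) q₁ q₂
  have f₁ := ode_F α₁ q₁
  have f₂ := ode_F α₂ q₂
  apply ode_unique hA (B := B)
  · -- LHS ODE
    rw [Derivation.leibniz, Derivation.leibniz, smul_eq_mul, smul_eq_mul, smul_eq_mul,
      smul_eq_mul]
    linear_combination (lin q₂ * Es (gs (α₂ - α₁) q₁ q₂) * Fs α₁ q₂) * e₁
      + (lin q₁ * Es (gs (α₂ - α₁) q₁ q₂) * Fs α₂ q₁) * e₂
      + (Fs α₂ q₁ * Fs α₁ q₂) * e₃
      - (Fs α₂ q₁ * Fs α₁ q₂ * Es (gs (α₂ - α₁) q₁ q₂)) * hB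
  · -- RHS ODE
    rw [Derivation.leibniz, smul_eq_mul, smul_eq_mul]
    linear_combination (lin q₂ * Fs α₂ q₂) * f₁ + (lin q₁ * Fs α₁ q₁) * f₂
  · -- constant coefficients
    simp only [coeff_zero_eq_constantCoeff_apply, map_mul]
    rw [show constantCoeff (Es (gs (α₂ - α₁) q₁ q₂)) = 1 by
      rw [Es, ← coeff_zero_eq_constantCoeff_apply, coeff_mk, eseq_zero]]
    have hFs : ∀ α q : ℝ, constantCoeff (Fs α q) = 1 := fun _ _ => rfl
    simp [hFs]



lemma negBinomPMF_eq' {α p : ℝ} (hα : 0 < α) (k : ℕ) :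
    negBinomPMF α p k = p ^ α * bseq α (1-p) k := by
  rw [negBinomPMF, ← negBinomPMF_eq hα]
  ring

lemma negBinomPMF_nonneg {α p : ℝ} (hα : 0 < α) (hp0 : 0 ≤ p) (hp1 : p ≤ 1) (k : ℕ) :
    0 ≤ negBinomPMF α p k := by
  rw [negBinomPMF_eq' hα]
  exact mul_nonneg (Real.rpow_nonneg hp0 α) (bseq_nonneg hα (by linarith) k)

lemma mk_coeff_eta (f : ℝ⟦X⟧) : PowerSeries.mk (fun n => coeff n f) = f := by
  ext n; rw [coeff_mk]

lemma mk_smul (a : ℝ) (w : ℕ → ℝ) :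
    PowerSeries.mk (fun k => a * w k) = PowerSeries.C a * PowerSeries.mk w := by
  ext n; rw [coeff_mk, coeff_C_mul, coeff_mk]

lemma antidiag_ofReal (u v : ℕ → ℝ) (hu : ∀ k, 0 ≤ u k) (hv : ∀ k, 0 ≤ v k) (n : ℕ) :
    ∑ kl ∈ Finset.HasAntidiagonal.antidiagonal n, ENNReal.ofReal (u kl.1) * ENNReal.ofReal (v kl.2)
      = ENNReal.ofReal (coeff n (PowerSeries.mk u * PowerSeries.mk v)) := by
  rw [coeff_mul, ENNReal.ofReal_sum_of_nonneg (fun kl _ => by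
    rw [coeff_mk, coeff_mk]; exact mul_nonneg (hu _) (hv _))]
  apply Finset.sum_congr rfl
  intro kl _
  rw [coeff_mk, coeff_mk, ENNReal.ofReal_mul (hu _)]

lemma coeff_mul_nonneg {u v : ℕ → ℝ} (hu : ∀ k, 0 ≤ u k) (hv : ∀ k, 0 ≤ v k) (n : ℕ) :
    0 ≤ coeff n (PowerSeries.mk u * PowerSeries.mk v) := by
  rw [coeff_mul]
  exact Finset.sum_nonneg fun kl _ => by rw [coeff_mk, coeff_mk]; exact mul_nonneg (hu _) (hv _)

end NBAux

open NBAux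

/-- Arrangement property for convolution order of negative binomials: pairing
the larger shape with the smaller success probability dominates. -/
theorem negBinom_arrangement_conv_order (α₁ α₂ p₁ p₂ : ℝ) (hα₁ : 0 < α₁)
    (hα : α₁ < α₂) (hp₂ : 0 < p₂) (hp : p₂ < p₁) (hp₁ : p₁ < 1) :
    ConvLE ((negBinomMeasure α₂ p₁).conv (negBinomMeasure α₁ p₂))
      ((negBinomMeasure α₁ p₁).conv (negBinomMeasure α₂ p₂)) := by
  have hp₁0 : 0 < p₁ := lt_trans hp₂ hp
  have hp₂1 : p₂ < 1 := lt_trans hp hp₁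
  have hα₂ : 0 < α₂ := lt_trans hα₁ hα
  have hβ0 : (0:ℝ) < α₂ - α₁ := by linarith
  have hq₁0 : (0:ℝ) ≤ 1 - p₁ := by linarith
  have h12 : (1 - p₁ : ℝ) ≤ 1 - p₂ := by linarith
  have hq₂1 : (1 - p₂ : ℝ) < 1 := by linarith
  have hg0 : constantCoeff (gs (α₂ - α₁) (1-p₁) (1-p₂)) = 0 := constantCoeff_gs _ _ _
  have hgnn : ∀ n, 0 ≤ coeff n (gs (α₂ - α₁) (1-p₁) (1-p₂)) :=
    coeff_gs_nonneg hβ0.le hq₁0 h12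
  have hcnn : ∀ n, 0 ≤ eseq (gs (α₂ - α₁) (1-p₁) (1-p₂)) n := eseq_nonneg hgnn
  have hr0 : (0:ℝ) ≤ (p₂/p₁) ^ (α₂ - α₁) := Real.rpow_nonneg (by positivity) _
  -- sum of the c-sequence
  have hS : HasSum (fun n => coeff n (gs (α₂ - α₁) (1-p₁) (1-p₂)))
      ((α₂ - α₁) * (Real.log (1 - (1-p₁)) - Real.log (1 - (1-p₂)))) := by
    have h := hasSum_dseq (β := α₂ - α₁)
      (by rw [abs_of_nonneg hq₁0]; linarith)
      (by rw [abs_of_nonneg (by linarith : (0:ℝ) ≤ 1 - p₂)]; linarith)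
    convert h using 2 with n
    rw [gs, coeff_mk]
  have hexp : Real.exp ((α₂ - α₁) * (Real.log (1 - (1-p₁)) - Real.log (1 - (1-p₂))))
      = (p₁/p₂) ^ (α₂ - α₁) := by
    have h1 : (1 - (1-p₁) : ℝ) = p₁ := by ring
    have h2 : (1 - (1-p₂) : ℝ) = p₂ := by ring
    rw [h1, h2, Real.rpow_def_of_pos (by positivity : (0:ℝ) < p₁/p₂),
      Real.log_div (ne_of_gt hp₁0) (ne_of_gt hp₂)]
    ring_nf
  have hsum : ∑' n, ENNReal.ofReal (eseq (gs (α₂ - α₁) (1-p₁) (1-p₂)) n)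
      = ENNReal.ofReal ((p₁/p₂) ^ (α₂ - α₁)) := by
    rw [tsum_eseq hg0 hgnn hS, hexp]
  refine ⟨dMeas (fun n =>
      ENNReal.ofReal ((p₂/p₁) ^ (α₂ - α₁) * eseq (gs (α₂ - α₁) (1-p₁) (1-p₂)) n)), ?_, ?_, ?_⟩
  · -- probability measure
    constructor
    rw [dMeas_apply _ MeasurableSet.univ]
    simp only [Set.indicator_univ, Pi.one_apply, mul_one]
    simp_rw [ENNReal.ofReal_mul hr0]
    rw [ENNReal.tsum_mul_left, hsum, ← ENNReal.ofReal_mul hr0]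
    have : (p₂/p₁) ^ (α₂ - α₁) * (p₁/p₂) ^ (α₂ - α₁) = 1 := by
      rw [← Real.mul_rpow (by positivity) (by positivity),
        show (p₂/p₁) * (p₁/p₂) = 1 by field_simp]
      exact Real.one_rpow _
    rw [this, ENNReal.ofReal_one]
  · -- no mass below zero
    rw [dMeas_apply _ measurableSet_Iio]
    have hind : ∀ k : ℕ, (Set.Iio (0:ℝ)).indicator 1 (k:ℝ) = 0 := by
      intro k
      apply Set.indicator_of_notMem
      simp [Set.mem_Iio, not_lt]
    simp [hind]
  · -- the convolution identity
    have hm : ∀ α p : ℝ, negBinomMeasure α p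
        = dMeas (fun k => ENNReal.ofReal (negBinomPMF α p k)) := fun _ _ => rfl
    rw [hm, hm, hm, hm, dMeas_conv, dMeas_conv, dMeas_conv]
    have hu : ∀ k, 0 ≤ negBinomPMF α₂ p₁ k := negBinomPMF_nonneg hα₂ hp₁0.le hp₁.le
    have hv : ∀ k, 0 ≤ negBinomPMF α₁ p₂ k := negBinomPMF_nonneg hα₁ hp₂.le hp₂1.le
    have hu' : ∀ k, 0 ≤ negBinomPMF α₁ p₁ k := negBinomPMF_nonneg hα₁ hp₁0.le hp₁.le
    have hv' : ∀ k, 0 ≤ negBinomPMF α₂ p₂ k := negBinomPMF_nonneg hα₂ hp₂.le hp₂1.le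
    have hw : ∀ k, 0 ≤ (p₂/p₁) ^ (α₂ - α₁) * eseq (gs (α₂ - α₁) (1-p₁) (1-p₂)) k :=
      fun k => mul_nonneg hr0 (hcnn k)
    -- rewrite weights as power series coefficients
    have h₂ : (fun n => ∑ kl ∈ Finset.HasAntidiagonal.antidiagonal n,
          ENNReal.ofReal (negBinomPMF α₁ p₁ kl.1) * ENNReal.ofReal (negBinomPMF α₂ p₂ kl.2))
        = fun n => ENNReal.ofReal (coeff n
            (PowerSeries.mk (negBinomPMF α₁ p₁) * PowerSeries.mk (negBinomPMF α₂ p₂))) :=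
      funext (antidiag_ofReal _ _ hu' hv')
    have hL : (fun n => ∑ kl ∈ Finset.HasAntidiagonal.antidiagonal n,
          (∑ kl' ∈ Finset.HasAntidiagonal.antidiagonal kl.1,
            ENNReal.ofReal (negBinomPMF α₂ p₁ kl'.1) * ENNReal.ofReal (negBinomPMF α₁ p₂ kl'.2))
            * ENNReal.ofReal ((p₂/p₁) ^ (α₂ - α₁) * eseq (gs (α₂ - α₁) (1-p₁) (1-p₂)) kl.2))
        = fun n => ENNReal.ofReal (coeff n
            ((PowerSeries.mk (negBinomPMF α₂ p₁) * PowerSeries.mk (negBinomPMF α₁ p₂))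
              * PowerSeries.mk (fun k =>
                  (p₂/p₁) ^ (α₂ - α₁) * eseq (gs (α₂ - α₁) (1-p₁) (1-p₂)) k))) := by
      funext n
      have hin : ∀ m : ℕ, ∑ kl' ∈ Finset.HasAntidiagonal.antidiagonal m,
            ENNReal.ofReal (negBinomPMF α₂ p₁ kl'.1) * ENNReal.ofReal (negBinomPMF α₁ p₂ kl'.2)
          = ENNReal.ofReal ((fun j => coeff j
              (PowerSeries.mk (negBinomPMF α₂ p₁) * PowerSeries.mk (negBinomPMF α₁ p₂))) m) :=
        antidiag_ofReal _ _ hu hv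
      simp_rw [hin]
      rw [antidiag_ofReal _ _ (coeff_mul_nonneg hu hv) hw n, mk_coeff_eta]
    rw [h₂, hL]
    -- the power series identity
    have hkey : PowerSeries.mk (negBinomPMF α₁ p₁) * PowerSeries.mk (negBinomPMF α₂ p₂)
        = (PowerSeries.mk (negBinomPMF α₂ p₁) * PowerSeries.mk (negBinomPMF α₁ p₂))
            * PowerSeries.mk (fun k =>
                (p₂/p₁) ^ (α₂ - α₁) * eseq (gs (α₂ - α₁) (1-p₁) (1-p₂)) k) := by
      have e1 : PowerSeries.mk (negBinomPMF α₂ p₁)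
          = PowerSeries.C (p₁ ^ α₂) * Fs α₂ (1-p₁) := by
        rw [show negBinomPMF α₂ p₁ = fun k => p₁ ^ α₂ * bseq α₂ (1-p₁) k from
          funext (negBinomPMF_eq' hα₂), mk_smul]; rfl
      have e2 : PowerSeries.mk (negBinomPMF α₁ p₂)
          = PowerSeries.C (p₂ ^ α₁) * Fs α₁ (1-p₂) := by
        rw [show negBinomPMF α₁ p₂ = fun k => p₂ ^ α₁ * bseq α₁ (1-p₂) k from
          funext (negBinomPMF_eq' hα₁), mk_smul]; rfl
      have e3 : PowerSeries.mk (negBinomPMF α₁ p₁)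
          = PowerSeries.C (p₁ ^ α₁) * Fs α₁ (1-p₁) := by
        rw [show negBinomPMF α₁ p₁ = fun k => p₁ ^ α₁ * bseq α₁ (1-p₁) k from
          funext (negBinomPMF_eq' hα₁), mk_smul]; rfl
      have e4 : PowerSeries.mk (negBinomPMF α₂ p₂)
          = PowerSeries.C (p₂ ^ α₂) * Fs α₂ (1-p₂) := by
        rw [show negBinomPMF α₂ p₂ = fun k => p₂ ^ α₂ * bseq α₂ (1-p₂) k from
          funext (negBinomPMF_eq' hα₂), mk_smul]; rfl
      have e5 : PowerSeries.mk (fun k =>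
            (p₂/p₁) ^ (α₂ - α₁) * eseq (gs (α₂ - α₁) (1-p₁) (1-p₂)) k)
          = PowerSeries.C ((p₂/p₁) ^ (α₂ - α₁)) * Es (gs (α₂ - α₁) (1-p₁) (1-p₂)) := by
        rw [mk_smul]; rfl
      have hscal : p₁ ^ α₂ * p₂ ^ α₁ * (p₂/p₁) ^ (α₂ - α₁) = p₁ ^ α₁ * p₂ ^ α₂ := by
        rw [Real.div_rpow hp₂.le hp₁0.le]
        have f1 : p₁ ^ α₂ = p₁ ^ α₁ * p₁ ^ (α₂ - α₁) := by
          rw [← Real.rpow_add hp₁0]; ring_nf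
        have f2 : p₂ ^ α₁ * p₂ ^ (α₂ - α₁) = p₂ ^ α₂ := by
          rw [← Real.rpow_add hp₂]; ring_nf
        have hne : p₁ ^ (α₂ - α₁) ≠ 0 := ne_of_gt (Real.rpow_pos_of_pos hp₁0 _)
        rw [f1, ← f2]
        field_simp
      have hps := PS_main α₁ α₂ (1-p₁) (1-p₂)
      rw [e1, e2, e3, e4, e5]
      calc PowerSeries.C (p₁ ^ α₁) * Fs α₁ (1-p₁) * (PowerSeries.C (p₂ ^ α₂) * Fs α₂ (1-p₂))
          = PowerSeries.C (p₁ ^ α₁ * p₂ ^ α₂) * (Fs α₁ (1-p₁) * Fs α₂ (1-p₂)) := by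
            rw [map_mul]; ring
        _ = PowerSeries.C (p₁ ^ α₂ * p₂ ^ α₁ * (p₂/p₁) ^ (α₂ - α₁))
              * (Fs α₂ (1-p₁) * Fs α₁ (1-p₂) * Es (gs (α₂ - α₁) (1-p₁) (1-p₂))) := by
            rw [hscal, hps]
        _ = PowerSeries.C (p₁ ^ α₂) * Fs α₂ (1-p₁) * (PowerSeries.C (p₂ ^ α₁) * Fs α₁ (1-p₂))
              * (PowerSeries.C ((p₂/p₁) ^ (α₂ - α₁)) * Es (gs (α₂ - α₁) (1-p₁) (1-p₂))) := by
            rw [map_mul, map_mul]; ring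
    rw [hkey]
end

section
/- For α > 0 and p₁, p₂, p₃ ∈ (0,1) with p₃ = p₁p₂, the shifted negative binomial variables satisfy L̃_{α,p₁} + L̃_{α,p₂} ≤_st α + L̃_{α,p₃}, where the left-hand summands are independent: α + L̃_{α,p₃} is distributed as L̃_{α,p₁} + L̃_{α,p₂} + W for some nonnegative W (not necessarily independent of the sum). -/
open MeasureTheory ProbabilityTheory Real

/- ### Auxiliary lemmas -/

lemma negBinomPMF_nonneg {β p : ℝ} (hβ : 0 < β) (hp : 0 < p) (hp' : p < 1) (k : ℕ) :
    0 ≤ negBinomPMF β p k := by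
  unfold negBinomPMF
  have h1 : 0 < Real.Gamma (k + β) := Real.Gamma_pos_of_pos (by positivity)
  have h2 : 0 < Real.Gamma β := Real.Gamma_pos_of_pos hβ
  have h3 : (0:ℝ) ≤ 1 - p := by linarith
  have h4 : (0:ℝ) < Nat.factorial k := by positivity
  have h5 : (0:ℝ) ≤ p ^ β := Real.rpow_nonneg hp.le β
  positivity

/-- "Hockey stick" identity for Gamma functions. -/
lemma gamma_hockey {β : ℝ} (hβ : 0 < β) (m : ℕ) :
    ∑ n ∈ Finset.range (m+1), Real.Gamma (n + β) / (Nat.factorial n) =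
      Real.Gamma (m + β + 1) / (Nat.factorial m * β) := by
  induction m with
  | zero =>
      simp only [Finset.range_one, Finset.sum_singleton, Nat.cast_zero, zero_add,
        Nat.factorial_zero, Nat.cast_one, mul_one, div_one, one_mul]
      rw [Real.Gamma_add_one hβ.ne']
      field_simp
  | succ m ih =>
      rw [Finset.sum_range_succ, ih]
      have hfac : ((m+1).factorial : ℝ) = (m+1) * m.factorial := by
        push_cast [Nat.factorial_succ]; ring
      have hG : Real.Gamma (↑(m+1) + β + 1) = (↑(m+1) + β) * Real.Gamma (↑(m+1) + β) := by
        rw [Real.Gamma_add_one (by positivity)]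
      have hG2 : Real.Gamma (↑m + β + 1) = Real.Gamma (↑(m+1) + β) := by
        congr 1; push_cast; ring
      rw [hG, hG2, hfac]
      have hm : (0:ℝ) < m.factorial := by positivity
      field_simp
      push_cast; ring

/-- Convolution identity raising the shape by one (with a geometric distribution). -/
lemma negBinomPMF_succ {β p : ℝ} (hβ : 0 < β) (hp : 0 < p) (m : ℕ) :
    negBinomPMF (β+1) p m
      = ∑ n ∈ Finset.range (m+1), negBinomPMF β p n * (p * (1-p)^(m-n)) := by
  have key : ∀ n ∈ Finset.range (m+1),
      negBinomPMF β p n * (p * (1-p)^(m-n))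
        = (Real.Gamma (n + β) / (Nat.factorial n)) * ((1 / Real.Gamma β) * p ^ β * p * (1-p)^m) := by
    intro n hn
    have hn' : n ≤ m := Nat.lt_succ_iff.mp (Finset.mem_range.mp hn)
    have hq : (1-p)^n * (1-p)^(m-n) = (1-p)^m := by
      rw [← pow_add, Nat.add_sub_cancel' hn']
    unfold negBinomPMF
    field_simp
    exact hq
  rw [Finset.sum_congr rfl key, ← Finset.sum_mul, gamma_hockey hβ]
  unfold negBinomPMF
  have h1 : p ^ (β + 1) = p ^ β * p := by
    rw [Real.rpow_add hp, Real.rpow_one]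
  have h2 : Real.Gamma (β + 1) = β * Real.Gamma β := Real.Gamma_add_one hβ.ne'
  have h3 : (↑m + (β + 1)) = ↑m + β + 1 := by ring
  rw [h1, h2, h3]
  have hΓβ : Real.Gamma β ≠ 0 := (Real.Gamma_pos_of_pos hβ).ne'
  have hm : (0:ℝ) < m.factorial := by positivity
  field_simp

/-- Key convolution identity: NB(β, p₁ p₂) is a mixture of NB(β + n, p₂) shifted by n. -/
lemma negBinomPMF_prod {β p₁ p₂ : ℝ} (hβ : 0 < β) (hp₁ : 0 < p₁) (hp₁' : p₁ < 1)
    (hp₂ : 0 < p₂) (hp₂' : p₂ < 1) (m : ℕ) :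
    negBinomPMF β (p₁ * p₂) m
      = ∑ n ∈ Finset.range (m+1), negBinomPMF β p₁ n * negBinomPMF (β + n) p₂ (m - n) := by
  have key : ∀ n ∈ Finset.range (m+1),
      negBinomPMF β p₁ n * negBinomPMF (β + n) p₂ (m - n)
        = (Real.Gamma (m + β) / (Nat.factorial m * Real.Gamma β) * (p₁^(β:ℝ) * p₂^(β:ℝ)))
            * ((m.choose n : ℝ) * (((1-p₁)*p₂)^n * (1-p₂)^(m-n))) := by
    intro n hn
    have hn' : n ≤ m := Nat.lt_succ_iff.mp (Finset.mem_range.mp hn)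
    unfold negBinomPMF
    have h1 : ((m - n : ℕ) : ℝ) + (β + n) = ↑m + β := by
      push_cast [Nat.cast_sub hn']; ring
    have h2 : (↑n : ℝ) + β = β + ↑n := by ring
    have h3 : p₂ ^ (β + (n:ℝ)) = p₂ ^ (β:ℝ) * p₂ ^ n := by
      rw [Real.rpow_add hp₂, Real.rpow_natCast]
    have h4 : (m.choose n : ℝ) = (m.factorial : ℝ) / (n.factorial * (m-n).factorial) := by
      rw [Nat.cast_choose ℝ hn']
    have hΓβn : Real.Gamma (β + n) ≠ 0 := (Real.Gamma_pos_of_pos (by positivity)).ne'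
    have hΓβ : Real.Gamma β ≠ 0 := (Real.Gamma_pos_of_pos hβ).ne'
    have hnf : (n.factorial : ℝ) ≠ 0 := by positivity
    have hmnf : ((m-n).factorial : ℝ) ≠ 0 := by positivity
    have hmf : (m.factorial : ℝ) ≠ 0 := by positivity
    rw [h1, h2, h3, h4, mul_pow]
    field_simp
    try ring
  rw [Finset.sum_congr rfl key, ← Finset.mul_sum]
  have hbin : ∑ n ∈ Finset.range (m+1), (m.choose n : ℝ) * (((1-p₁)*p₂)^n * (1-p₂)^(m-n))
      = ((1-p₁)*p₂ + (1-p₂))^m := by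
    rw [add_pow]
    exact Finset.sum_congr rfl fun n _ => by ring
  rw [hbin]
  have h5 : (1-p₁)*p₂ + (1-p₂) = 1 - p₁*p₂ := by ring
  rw [h5]
  unfold negBinomPMF
  rw [Real.mul_rpow hp₁.le hp₂.le]
  try ring

/-- Rearranging a sum over the triangle `{(n, m) : n ≤ m}` in `ℝ≥0∞`. -/
lemma tsum_triangle (F : ℕ → ℕ → ENNReal) :
    ∑' m : ℕ, ∑ n ∈ Finset.range (m+1), F n m = ∑' n : ℕ, ∑' s : ℕ, F n (n + s) := by
  have h1 : ∀ m : ℕ, ∑ n ∈ Finset.range (m+1), F n m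
      = ∑' n : ℕ, if n ≤ m then F n m else 0 := by
    intro m
    rw [tsum_eq_sum (s := Finset.range (m+1))]
    · exact Finset.sum_congr rfl fun n hn =>
        (if_pos (Nat.lt_succ_iff.mp (Finset.mem_range.mp hn))).symm
    · intro n hn
      exact if_neg fun h => hn (Finset.mem_range.mpr (Nat.lt_succ_iff.mpr h))
  simp_rw [h1]
  rw [ENNReal.tsum_comm]
  congr 1
  ext n
  have hinj : Function.Injective (fun s : ℕ => n + s) := fun a b h => by simpa using h
  have hsupp : Function.support (fun m : ℕ => if n ≤ m then F n m else 0)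
      ⊆ Set.range (fun s : ℕ => n + s) := by
    intro m hm
    by_cases h : n ≤ m
    · exact ⟨m - n, by simp; omega⟩
    · simp [if_neg h] at hm
  have := hinj.tsum_eq (f := fun m : ℕ => if n ≤ m then F n m else 0) hsupp
  rw [← this]
  simp [Nat.le_add_right]

/-- Tail of the negative binomial distribution, as a function `ℕ → ℝ≥0∞`. -/
noncomputable def nbTail (β p : ℝ) (k : ℕ) : ENNReal :=
  ∑' i : ℕ, if k ≤ i then ENNReal.ofReal (negBinomPMF β p i) else 0

lemma geom_total {p : ℝ} (hp : 0 < p) (hp' : p < 1) :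
    ∑' s : ℕ, ENNReal.ofReal (p * (1-p)^s) = 1 := by
  have h0 : (0:ℝ) ≤ 1 - p := by linarith
  have hrw : ∀ s : ℕ, ENNReal.ofReal (p * (1-p)^s)
      = ENNReal.ofReal p * ENNReal.ofReal (1-p) ^ s := by
    intro s
    rw [ENNReal.ofReal_mul hp.le, ENNReal.ofReal_pow h0]
  simp_rw [hrw]
  rw [ENNReal.tsum_mul_left, ENNReal.tsum_geometric]
  have h1 : (1:ENNReal) - ENNReal.ofReal (1-p) = ENNReal.ofReal p := by
    rw [← ENNReal.ofReal_one, ← ENNReal.ofReal_sub _ h0]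
    norm_num
  rw [h1, ENNReal.mul_inv_cancel (by simpa using hp) ENNReal.ofReal_ne_top]

lemma nbTail_le_succ {β p : ℝ} (hβ : 0 < β) (hp : 0 < p) (hp' : p < 1) (k : ℕ) :
    nbTail β p k ≤ nbTail (β+1) p k := by
  unfold nbTail
  have hrw : ∀ i : ℕ, (if k ≤ i then ENNReal.ofReal (negBinomPMF (β+1) p i) else 0)
      = ∑ n ∈ Finset.range (i+1),
          (if k ≤ i then ENNReal.ofReal (negBinomPMF β p n * (p * (1-p)^(i-n))) else 0) := by
    intro i
    by_cases h : k ≤ i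
    · simp only [if_pos h]
      rw [negBinomPMF_succ hβ hp i, ENNReal.ofReal_sum_of_nonneg]
      intro n _
      have h1 : (0:ℝ) ≤ 1 - p := by linarith
      have := negBinomPMF_nonneg hβ hp hp' n
      positivity
    · simp [if_neg h]
  calc ∑' i : ℕ, (if k ≤ i then ENNReal.ofReal (negBinomPMF β p i) else 0)
      ≤ ∑' n : ℕ, ENNReal.ofReal (negBinomPMF β p n)
          * ∑' s : ℕ, (if k ≤ n + s then ENNReal.ofReal (p * (1-p)^s) else 0) := by
        apply ENNReal.tsum_le_tsum
        intro n
        by_cases h : k ≤ n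
        · rw [if_pos h]
          have hin : ∑' s : ℕ, (if k ≤ n + s then ENNReal.ofReal (p * (1-p)^s) else 0)
              = ∑' s : ℕ, ENNReal.ofReal (p * (1-p)^s) := by
            apply tsum_congr
            intro s
            rw [if_pos (le_trans h (Nat.le_add_right n s))]
          rw [hin, geom_total hp hp', mul_one]
        · rw [if_neg h]; exact zero_le
    _ = ∑' i : ℕ, (if k ≤ i then ENNReal.ofReal (negBinomPMF (β+1) p i) else 0) := by
        simp_rw [hrw]
        rw [tsum_triangle fun n i =>
          (if k ≤ i then ENNReal.ofReal (negBinomPMF β p n * (p * (1-p)^(i-n))) else 0)]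
        apply tsum_congr
        intro n
        have : ∀ s : ℕ, (if k ≤ n + s then
            ENNReal.ofReal (negBinomPMF β p n * (p * (1-p)^(n+s-n))) else 0)
            = ENNReal.ofReal (negBinomPMF β p n)
              * (if k ≤ n + s then ENNReal.ofReal (p * (1-p)^s) else 0) := by
          intro s
          have hs : n + s - n = s := by omega
          rw [hs, ENNReal.ofReal_mul (negBinomPMF_nonneg hβ hp hp' n)]
          by_cases h : k ≤ n + s
          · rw [if_pos h, if_pos h]
          · rw [if_neg h, if_neg h, mul_zero]
        simp_rw [this]
        rw [ENNReal.tsum_mul_left]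

lemma nbTail_le_add_nat {β p : ℝ} (hβ : 0 < β) (hp : 0 < p) (hp' : p < 1) (k n : ℕ) :
    nbTail β p k ≤ nbTail (β + n) p k := by
  induction n with
  | zero => simp
  | succ n ih =>
      refine le_trans ih (le_trans (nbTail_le_succ (by positivity) hp hp' k) (le_of_eq ?_))
      congr 1
      push_cast
      ring

/-- The heart of the proof: comparison of the tails. -/
lemma key_tail_ineq {α p₁ p₂ : ℝ} (hα : 0 < α) (hp₁ : 0 < p₁) (hp₁' : p₁ < 1)
    (hp₂ : 0 < p₂) (hp₂' : p₂ < 1) (k : ℕ) :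
    ∑' j : ℕ, ∑' l : ℕ,
        (if k ≤ j + l then ENNReal.ofReal (negBinomPMF α p₁ j)
          * ENNReal.ofReal (negBinomPMF α p₂ l) else 0)
      ≤ ∑' m : ℕ, (if k ≤ m then ENNReal.ofReal (negBinomPMF α (p₁ * p₂) m) else 0) := by
  have hRHS : ∑' m : ℕ, (if k ≤ m then ENNReal.ofReal (negBinomPMF α (p₁ * p₂) m) else 0)
      = ∑' n : ℕ, ENNReal.ofReal (negBinomPMF α p₁ n) * nbTail (α + n) p₂ (k - n) := by
    have hrw : ∀ m : ℕ, (if k ≤ m then ENNReal.ofReal (negBinomPMF α (p₁ * p₂) m) else 0)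
        = ∑ n ∈ Finset.range (m+1),
            (if k ≤ m then
              ENNReal.ofReal (negBinomPMF α p₁ n * negBinomPMF (α + n) p₂ (m - n)) else 0) := by
      intro m
      by_cases h : k ≤ m
      · simp only [if_pos h]
        rw [negBinomPMF_prod hα hp₁ hp₁' hp₂ hp₂' m, ENNReal.ofReal_sum_of_nonneg]
        intro n hn
        exact mul_nonneg (negBinomPMF_nonneg hα hp₁ hp₁' n)
          (negBinomPMF_nonneg (by positivity) hp₂ hp₂' (m - n))
      · simp [if_neg h]
    simp_rw [hrw]
    rw [tsum_triangle fun n m =>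
      (if k ≤ m then ENNReal.ofReal (negBinomPMF α p₁ n * negBinomPMF (α + n) p₂ (m - n)) else 0)]
    apply tsum_congr
    intro n
    have hterm : ∀ s : ℕ, (if k ≤ n + s then
        ENNReal.ofReal (negBinomPMF α p₁ n * negBinomPMF (α + n) p₂ (n + s - n)) else 0)
        = ENNReal.ofReal (negBinomPMF α p₁ n)
          * (if k - n ≤ s then ENNReal.ofReal (negBinomPMF (α + n) p₂ s) else 0) := by
      intro s
      have hs : n + s - n = s := by omega
      have hiff : (k ≤ n + s) ↔ (k - n ≤ s) := by omega
      rw [hs, ENNReal.ofReal_mul (negBinomPMF_nonneg hα hp₁ hp₁' n)]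
      by_cases h : k ≤ n + s
      · rw [if_pos h, if_pos (hiff.mp h)]
      · rw [if_neg h, if_neg (fun hc => h (hiff.mpr hc)), mul_zero]
    simp_rw [hterm]
    rw [ENNReal.tsum_mul_left]
    rfl
  rw [hRHS]
  apply ENNReal.tsum_le_tsum
  intro n
  have hLHSn : ∑' l : ℕ, (if k ≤ n + l then ENNReal.ofReal (negBinomPMF α p₁ n)
      * ENNReal.ofReal (negBinomPMF α p₂ l) else 0)
      = ENNReal.ofReal (negBinomPMF α p₁ n) * nbTail α p₂ (k - n) := by
    rw [nbTail, ENNReal.tsum_mul_left.symm]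
    apply tsum_congr
    intro l
    have hiff : (k ≤ n + l) ↔ (k - n ≤ l) := by omega
    by_cases h : k ≤ n + l
    · rw [if_pos h, if_pos (hiff.mp h)]
    · rw [if_neg h, if_neg (fun hc => h (hiff.mpr hc)), mul_zero]
  rw [hLHSn]
  exact mul_le_mul_right (nbTail_le_add_nat hα hp₂ hp₂' (k - n) n) _

lemma map_negBinom (α p : ℝ) :
    (negBinomMeasure α p).map (fun x => α + x)
      = Measure.sum (fun k : ℕ => ENNReal.ofReal (negBinomPMF α p k)
          • Measure.dirac (α + (k : ℝ))) := by
  unfold negBinomMeasure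
  rw [Measure.map_sum (measurable_const_add α).aemeasurable]
  congr 1
  ext k : 1
  rw [Measure.map_smul, Measure.map_dirac' (measurable_const_add α)]

open Classical in
lemma sum_smul_dirac_apply (w : ℕ → ENNReal) (a : ℕ → ℝ) (s : Set ℝ) (hs : MeasurableSet s) :
    Measure.sum (fun k : ℕ => w k • Measure.dirac (a k)) s
      = ∑' k : ℕ, (if a k ∈ s then w k else 0) := by
  rw [Measure.sum_apply _ hs]
  apply tsum_congr
  intro k
  rw [Measure.smul_apply, Measure.dirac_apply' _ hs, smul_eq_mul, Set.indicator_apply]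
  by_cases h : a k ∈ s
  · rw [if_pos h, if_pos h, Pi.one_apply, mul_one]
  · rw [if_neg h, if_neg h, mul_zero]

/-- For `p₃ = p₁ p₂`, the sum of independent shifted negative binomials
`L̃_{α,p₁} + L̃_{α,p₂}` is stochastically dominated by `α + L̃_{α,p₃}`. -/
theorem shifted_negBinom_st_order (α p₁ p₂ p₃ : ℝ) (hα : 0 < α)
    (hp₁ : 0 < p₁) (hp₁' : p₁ < 1) (hp₂ : 0 < p₂) (hp₂' : p₂ < 1)
    (hp₃ : p₃ = p₁ * p₂) :
    StochLE
      (((negBinomMeasure α p₁).map fun x => α + x).conv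
        ((negBinomMeasure α p₂).map fun x => α + x))
      (((negBinomMeasure α p₃).map fun x => α + x).map fun x => α + x) := by
  subst hp₃
  intro t
  -- notation for the weights
  set w₁ : ℕ → ENNReal := fun k => ENNReal.ofReal (negBinomPMF α p₁ k) with hw₁
  set w₂ : ℕ → ENNReal := fun k => ENNReal.ofReal (negBinomPMF α p₂ k) with hw₂
  set w₃ : ℕ → ENNReal := fun k => ENNReal.ofReal (negBinomPMF α (p₁ * p₂) k) with hw₃
  -- compute RHS
  have hpre : ∀ c : ℝ, (fun x : ℝ => α + x) ⁻¹' Set.Ici c = Set.Ici (c - α) := by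
    intro c
    ext x
    simp [Set.mem_Ici, sub_le_iff_le_add']
  have hRHS : (((negBinomMeasure α (p₁ * p₂)).map fun x => α + x).map fun x => α + x)
      (Set.Ici t) = ∑' m : ℕ, (if t - α - α ≤ (m : ℝ) then w₃ m else 0) := by
    rw [Measure.map_apply (measurable_const_add α) measurableSet_Ici, hpre,
      Measure.map_apply (measurable_const_add α) measurableSet_Ici, hpre]
    unfold negBinomMeasure
    rw [sum_smul_dirac_apply _ _ _ measurableSet_Ici]
    apply tsum_congr
    intro m
    simp only [Set.mem_Ici]
    rfl
  -- compute LHS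
  have hLHS : ((((negBinomMeasure α p₁).map fun x => α + x).conv
      ((negBinomMeasure α p₂).map fun x => α + x)) (Set.Ici t))
      = ∑' j : ℕ, w₁ j * ∑' l : ℕ, (if t - α - α ≤ (j : ℝ) + (l : ℝ) then w₂ l else 0) := by
    rw [map_negBinom α p₁, map_negBinom α p₂]
    unfold Measure.conv
    have hmeas : Measurable (fun x : ℝ × ℝ => x.1 + x.2) :=
      measurable_fst.add measurable_snd
    rw [Measure.map_apply hmeas measurableSet_Ici]
    rw [Measure.prod_apply (hmeas measurableSet_Ici)]
    have hpre2 : ∀ x : ℝ, (Prod.mk x ⁻¹' ((fun p : ℝ × ℝ => p.1 + p.2) ⁻¹' Set.Ici t))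
        = Set.Ici (t - x) := by
      intro x
      ext y
      simp only [Set.mem_preimage, Set.mem_Ici, sub_le_iff_le_add']
    simp_rw [hpre2]
    rw [lintegral_sum_measure]
    apply tsum_congr
    intro j
    rw [lintegral_smul_measure, lintegral_dirac]
    congr 1
    rw [sum_smul_dirac_apply _ _ _ measurableSet_Ici]
    apply tsum_congr
    intro l
    simp only [Set.mem_Ici]
    by_cases h : t - α - α ≤ (j:ℝ) + (l:ℝ)
    · rw [if_pos (by linarith : t - (α + (j:ℝ)) ≤ α + (l:ℝ)), if_pos h]
    · rw [if_neg (by intro hc; apply h; linarith : ¬ t - (α + (j:ℝ)) ≤ α + (l:ℝ)), if_neg h]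
  rw [hLHS, hRHS]
  -- reduce the real threshold to a natural number threshold
  set k : ℕ := ⌈t - α - α⌉₊ with hk
  have hcond : ∀ j l : ℕ, (t - α - α ≤ (j:ℝ) + (l:ℝ)) ↔ (k ≤ j + l) := by
    intro j l
    rw [hk, Nat.ceil_le]
    push_cast
    rfl
  have hcond2 : ∀ m : ℕ, (t - α - α ≤ (m:ℝ)) ↔ (k ≤ m) := by
    intro m
    rw [hk, Nat.ceil_le]
  calc ∑' j : ℕ, w₁ j * ∑' l : ℕ, (if t - α - α ≤ (j:ℝ) + (l:ℝ) then w₂ l else 0)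
      = ∑' j : ℕ, ∑' l : ℕ, (if k ≤ j + l then w₁ j * w₂ l else 0) := by
        apply tsum_congr
        intro j
        rw [← ENNReal.tsum_mul_left]
        apply tsum_congr
        intro l
        by_cases h : k ≤ j + l
        · rw [if_pos ((hcond j l).mpr h), if_pos h]
        · rw [if_neg (fun hc => h ((hcond j l).mp hc)), if_neg h, mul_zero]
    _ ≤ ∑' m : ℕ, (if k ≤ m then w₃ m else 0) := key_tail_ineq hα hp₁ hp₁' hp₂ hp₂' k
    _ = ∑' m : ℕ, (if t - α - α ≤ (m:ℝ) then w₃ m else 0) := by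
        apply tsum_congr
        intro m
        by_cases h : k ≤ m
        · rw [if_pos h, if_pos ((hcond2 m).mpr h)]
        · rw [if_neg h, if_neg (fun hc => h ((hcond2 m).mp hc))]
end

section
/- Let α > 0 and suppose (log p₁₁, log p₁₂) ≺ (log p₂₁, log p₂₂) (majorization of logarithms), all pᵢⱼ ∈ (0,1). Then N_{α,p₁₁} + N_{α,p₁₂} ≤_st N_{α,p₂₁} + N_{α,p₂₂} (independent summands). -/
open MeasureTheory ProbabilityTheory Real

open Finset
open scoped ENNReal

noncomputable def nbC (α : ℝ) (j : ℕ) : ℝ :=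
  Real.Gamma (j + α) / (Nat.factorial j * Real.Gamma α)

lemma nbC_pos {α : ℝ} (hα : 0 < α) (j : ℕ) : 0 < nbC α j := by
  have h1 : 0 < Real.Gamma ((j : ℝ) + α) := Real.Gamma_pos_of_pos (by positivity)
  have h2 : 0 < Real.Gamma α := Real.Gamma_pos_of_pos hα
  have h3 : (0 : ℝ) < (Nat.factorial j : ℝ) := by
    exact_mod_cast Nat.factorial_pos j
  exact div_pos h1 (by positivity)

lemma nbC_succ {α : ℝ} (hα : 0 < α) (j : ℕ) :
    ((j : ℝ) + 1) * nbC α (j + 1) = ((j : ℝ) + α) * nbC α j := by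
  have hne : ((j : ℝ) + α) ≠ 0 := by positivity
  have hf : (Nat.factorial (j + 1) : ℝ) = ((j : ℝ) + 1) * (Nat.factorial j : ℝ) := by
    rw [Nat.factorial_succ]; push_cast; ring
  have hj1 : ((j : ℝ) + 1) ≠ 0 := by positivity
  have hΓα : Real.Gamma α ≠ 0 := (Real.Gamma_pos_of_pos hα).ne'
  have hfj : (Nat.factorial j : ℝ) ≠ 0 := by exact_mod_cast (Nat.factorial_pos j).ne'
  unfold nbC
  rw [show (((j + 1 : ℕ) : ℝ)) + α = ((j : ℝ) + α) + 1 by push_cast; ring,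
    Real.Gamma_add_one hne, hf]
  field_simp

lemma nbC_shift {α : ℝ} (hα : 0 < α) (j : ℕ) :
    α * nbC (α + 1) j = ((j : ℝ) + α) * nbC α j := by
  have hne : ((j : ℝ) + α) ≠ 0 := by positivity
  have hg : Real.Gamma ((j : ℝ) + (α + 1)) = ((j : ℝ) + α) * Real.Gamma ((j : ℝ) + α) := by
    rw [show (j : ℝ) + (α + 1) = ((j : ℝ) + α) + 1 by ring, Real.Gamma_add_one hne]
  have hga : Real.Gamma (α + 1) = α * Real.Gamma α := Real.Gamma_add_one hα.ne'
  have hΓα : Real.Gamma α ≠ 0 := (Real.Gamma_pos_of_pos hα).ne'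
  have hfj : (Nat.factorial j : ℝ) ≠ 0 := by exact_mod_cast (Nat.factorial_pos j).ne'
  unfold nbC
  rw [hg, hga]
  field_simp

lemma sum_antidiagonal_succ_fst (f : ℕ → ℕ → ℝ) (hf : ∀ k, f 0 k = 0) (n : ℕ) :
    ∑ x ∈ antidiagonal (n + 1), f x.1 x.2 = ∑ x ∈ antidiagonal n, f (x.1 + 1) x.2 := by
  rw [Finset.Nat.antidiagonal_succ, Finset.sum_cons, Finset.sum_map]
  simp [hf]

lemma sum_antidiagonal_succ_snd (f : ℕ → ℕ → ℝ) (hf : ∀ j, f j 0 = 0) (n : ℕ) :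
    ∑ x ∈ antidiagonal (n + 1), f x.1 x.2 = ∑ x ∈ antidiagonal n, f x.1 (x.2 + 1) := by
  rw [Finset.Nat.antidiagonal_succ', Finset.sum_cons, Finset.sum_map]
  simp [hf]

/-- `G` polynomial: `∑_{j+k=n} (j-k) C_j C_k q₁^j q₂^k`. -/
noncomputable def nbG (α q₁ q₂ : ℝ) (n : ℕ) : ℝ :=
  ∑ x ∈ antidiagonal n, ((x.1 : ℝ) - (x.2 : ℝ)) * nbC α x.1 * nbC α x.2 * q₁ ^ x.1 * q₂ ^ x.2

lemma sumA {α : ℝ} (hα : 0 < α) (q₁ q₂ : ℝ) (n : ℕ) :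
    ∑ x ∈ antidiagonal (n + 1), (x.1 : ℝ) * nbC α x.1 * nbC α x.2 * q₁ ^ x.1 * q₂ ^ x.2
      = ∑ x ∈ antidiagonal n,
        ((x.1 : ℝ) + α) * nbC α x.1 * nbC α x.2 * q₁ ^ (x.1 + 1) * q₂ ^ x.2 := by
  rw [sum_antidiagonal_succ_fst
    (fun j k => (j : ℝ) * nbC α j * nbC α k * q₁ ^ j * q₂ ^ k) (by simp) n]
  refine Finset.sum_congr rfl fun x _ => ?_
  have h1 := nbC_succ hα x.1
  push_cast
  linear_combination (nbC α x.2 * q₁ ^ (x.1 + 1) * q₂ ^ x.2) * h1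

lemma sumB {α : ℝ} (hα : 0 < α) (q₁ q₂ : ℝ) (n : ℕ) :
    ∑ x ∈ antidiagonal (n + 1), (x.2 : ℝ) * nbC α x.1 * nbC α x.2 * q₁ ^ x.1 * q₂ ^ x.2
      = ∑ x ∈ antidiagonal n,
        ((x.2 : ℝ) + α) * nbC α x.1 * nbC α x.2 * q₁ ^ x.1 * q₂ ^ (x.2 + 1) := by
  rw [sum_antidiagonal_succ_snd
    (fun j k => (k : ℝ) * nbC α j * nbC α k * q₁ ^ j * q₂ ^ k) (by simp) n]
  refine Finset.sum_congr rfl fun x _ => ?_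
  have h2 := nbC_succ hα x.2
  push_cast
  linear_combination (nbC α x.1 * q₁ ^ x.1 * q₂ ^ (x.2 + 1)) * h2

lemma nbG_succ_eq {α : ℝ} (hα : 0 < α) (q₁ q₂ : ℝ) (n : ℕ) :
    nbG α q₁ q₂ (n + 1) = ∑ x ∈ antidiagonal n,
      (((x.1 : ℝ) + α) * q₁ - ((x.2 : ℝ) + α) * q₂)
        * nbC α x.1 * nbC α x.2 * q₁ ^ x.1 * q₂ ^ x.2 := by
  unfold nbG
  have hsplit : ∀ x : ℕ × ℕ,
      ((x.1 : ℝ) - (x.2 : ℝ)) * nbC α x.1 * nbC α x.2 * q₁ ^ x.1 * q₂ ^ x.2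
      = (x.1 : ℝ) * nbC α x.1 * nbC α x.2 * q₁ ^ x.1 * q₂ ^ x.2
        - (x.2 : ℝ) * nbC α x.1 * nbC α x.2 * q₁ ^ x.1 * q₂ ^ x.2 := fun x => by ring
  rw [Finset.sum_congr rfl fun x _ => hsplit x, Finset.sum_sub_distrib,
    sumA hα q₁ q₂ n, sumB hα q₁ q₂ n, ← Finset.sum_sub_distrib]
  refine Finset.sum_congr rfl fun x _ => ?_
  ring

/-- The cross-term swap lemma. -/
lemma cross {α : ℝ} (hα : 0 < α) (q₁ q₂ : ℝ) (m : ℕ) :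
    ∑ x ∈ antidiagonal m,
      ((x.1 : ℝ) + α) * nbC α x.1 * ((x.2 : ℝ) * nbC α x.2) * q₁ ^ (x.1 + 1) * q₂ ^ x.2
    = ∑ x ∈ antidiagonal m,
      ((x.1 : ℝ) * nbC α x.1) * (((x.2 : ℝ) + α) * nbC α x.2) * q₁ ^ x.1 * q₂ ^ (x.2 + 1) := by
  cases m with
  | zero => simp
  | succ m' =>
    rw [sum_antidiagonal_succ_snd
      (fun j k => ((j : ℝ) + α) * nbC α j * ((k : ℝ) * nbC α k) * q₁ ^ (j + 1) * q₂ ^ k)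
      (by simp) m']
    rw [sum_antidiagonal_succ_fst
      (fun j k => ((j : ℝ) * nbC α j) * (((k : ℝ) + α) * nbC α k) * q₁ ^ j * q₂ ^ (k + 1))
      (by simp) m']
    refine Finset.sum_congr rfl fun x _ => ?_
    have h1 := nbC_succ hα x.1
    have h2 := nbC_succ hα x.2
    push_cast
    linear_combination (((x.1 : ℝ) + α) * nbC α x.1 * q₁ ^ (x.1 + 1) * q₂ ^ (x.2 + 1)) * h2
      - (((x.2 : ℝ) + α) * nbC α x.2 * q₁ ^ (x.1 + 1) * q₂ ^ (x.2 + 1)) * h1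

/-- SWAP : `G_{n+1} = α (q₁ - q₂) ∑_{j+k=n} D_j D_k q₁^j q₂^k`. -/
lemma nbG_eq {α : ℝ} (hα : 0 < α) (q₁ q₂ : ℝ) (n : ℕ) :
    nbG α q₁ q₂ (n + 1) = α * (q₁ - q₂) *
      ∑ x ∈ antidiagonal n, nbC (α + 1) x.1 * nbC (α + 1) x.2 * q₁ ^ x.1 * q₂ ^ x.2 := by
  rw [nbG_succ_eq hα, Finset.mul_sum]
  rw [← sub_eq_zero, ← Finset.sum_sub_distrib]
  have key : ∀ x ∈ antidiagonal n,
      (((x.1 : ℝ) + α) * q₁ - ((x.2 : ℝ) + α) * q₂)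
          * nbC α x.1 * nbC α x.2 * q₁ ^ x.1 * q₂ ^ x.2
        - α * (q₁ - q₂) * (nbC (α + 1) x.1 * nbC (α + 1) x.2 * q₁ ^ x.1 * q₂ ^ x.2)
      = (1 / α) *
          (((x.1 : ℝ) * nbC α x.1) * (((x.2 : ℝ) + α) * nbC α x.2) * q₁ ^ x.1 * q₂ ^ (x.2 + 1)
          - ((x.1 : ℝ) + α) * nbC α x.1 * ((x.2 : ℝ) * nbC α x.2) * q₁ ^ (x.1 + 1) * q₂ ^ x.2) := by
    intro x _
    have h1 : nbC (α + 1) x.1 = ((x.1 : ℝ) + α) * nbC α x.1 / α :=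
      eq_div_of_mul_eq hα.ne' (by linear_combination nbC_shift hα x.1)
    have h2 : nbC (α + 1) x.2 = ((x.2 : ℝ) + α) * nbC α x.2 / α :=
      eq_div_of_mul_eq hα.ne' (by linear_combination nbC_shift hα x.2)
    rw [h1, h2]
    field_simp
    ring
  rw [Finset.sum_congr rfl key, ← Finset.mul_sum, Finset.sum_sub_distrib,
    cross hα q₁ q₂ n]
  simp

/-- STEP. -/
lemma step {α : ℝ} (hα : 0 < α) (q₁ q₂ : ℝ) (n : ℕ) :
    ∑ x ∈ antidiagonal (n + 1), nbC α x.1 * nbC α x.2 *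
        (-(x.1 : ℝ) * (1 - q₁) * q₁ ^ (x.1 - 1) * q₂ ^ x.2
          + (x.2 : ℝ) * (1 - q₂) * q₁ ^ x.1 * q₂ ^ (x.2 - 1))
      = nbG α q₁ q₂ (n + 1) - nbG α q₁ q₂ n := by
  have hsplit : ∀ x : ℕ × ℕ, nbC α x.1 * nbC α x.2 *
        (-(x.1 : ℝ) * (1 - q₁) * q₁ ^ (x.1 - 1) * q₂ ^ x.2
          + (x.2 : ℝ) * (1 - q₂) * q₁ ^ x.1 * q₂ ^ (x.2 - 1))
      = (-(x.1 : ℝ) * (1 - q₁) * nbC α x.1 * nbC α x.2 * q₁ ^ (x.1 - 1) * q₂ ^ x.2)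
        + ((x.2 : ℝ) * (1 - q₂) * nbC α x.1 * nbC α x.2 * q₁ ^ x.1 * q₂ ^ (x.2 - 1)) :=
    fun x => by ring
  rw [Finset.sum_congr rfl fun x _ => hsplit x, Finset.sum_add_distrib]
  have e1 : ∑ x ∈ antidiagonal (n + 1),
      (-(x.1 : ℝ) * (1 - q₁) * nbC α x.1 * nbC α x.2 * q₁ ^ (x.1 - 1) * q₂ ^ x.2)
      = ∑ x ∈ antidiagonal n,
        (-((x.1 : ℝ) + α) * (1 - q₁) * nbC α x.1 * nbC α x.2 * q₁ ^ x.1 * q₂ ^ x.2) := by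
    rw [sum_antidiagonal_succ_fst
      (fun j k => -(j : ℝ) * (1 - q₁) * nbC α j * nbC α k * q₁ ^ (j - 1) * q₂ ^ k)
      (by simp) n]
    refine Finset.sum_congr rfl fun x _ => ?_
    have h1 := nbC_succ hα x.1
    simp only [Nat.add_sub_cancel]
    push_cast
    linear_combination (-(1 - q₁) * nbC α x.2 * q₁ ^ x.1 * q₂ ^ x.2) * h1
  have e2 : ∑ x ∈ antidiagonal (n + 1),
      ((x.2 : ℝ) * (1 - q₂) * nbC α x.1 * nbC α x.2 * q₁ ^ x.1 * q₂ ^ (x.2 - 1))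
      = ∑ x ∈ antidiagonal n,
        (((x.2 : ℝ) + α) * (1 - q₂) * nbC α x.1 * nbC α x.2 * q₁ ^ x.1 * q₂ ^ x.2) := by
    rw [sum_antidiagonal_succ_snd
      (fun j k => (k : ℝ) * (1 - q₂) * nbC α j * nbC α k * q₁ ^ j * q₂ ^ (k - 1))
      (by simp) n]
    refine Finset.sum_congr rfl fun x _ => ?_
    have h2 := nbC_succ hα x.2
    simp only [Nat.add_sub_cancel]
    push_cast
    linear_combination ((1 - q₂) * nbC α x.1 * q₁ ^ x.1 * q₂ ^ x.2) * h2
  rw [e1, e2, nbG_succ_eq hα]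
  unfold nbG
  rw [← Finset.sum_add_distrib, ← Finset.sum_sub_distrib]
  refine Finset.sum_congr rfl fun x _ => ?_
  ring

/-- Derivative sum identity. -/
lemma derSum {α : ℝ} (hα : 0 < α) (q₁ q₂ : ℝ) (n : ℕ) :
    ∑ m ∈ range (n + 1), ∑ x ∈ antidiagonal m, nbC α x.1 * nbC α x.2 *
        (-(x.1 : ℝ) * (1 - q₁) * q₁ ^ (x.1 - 1) * q₂ ^ x.2
          + (x.2 : ℝ) * (1 - q₂) * q₁ ^ x.1 * q₂ ^ (x.2 - 1))
      = nbG α q₁ q₂ n := by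
  induction n with
  | zero => simp [nbG]
  | succ n ih => rw [Finset.sum_range_succ, ih, step hα]; ring

/-- Sign of `G`. -/
lemma nbG_nonpos {α : ℝ} (hα : 0 < α) {q₁ q₂ : ℝ} (h1 : 0 ≤ q₁) (h2 : q₁ ≤ q₂) (n : ℕ) :
    nbG α q₁ q₂ n ≤ 0 := by
  cases n with
  | zero => simp [nbG]
  | succ n =>
    rw [nbG_eq hα]
    have hq2 : 0 ≤ q₂ := le_trans h1 h2
    have hs : 0 ≤ ∑ x ∈ antidiagonal n, nbC (α + 1) x.1 * nbC (α + 1) x.2 * q₁ ^ x.1 * q₂ ^ x.2 := by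
      refine Finset.sum_nonneg fun x _ => ?_
      have := nbC_pos (by linarith : (0:ℝ) < α + 1) x.1
      have := nbC_pos (by linarith : (0:ℝ) < α + 1) x.2
      positivity
    have : α * (q₁ - q₂) ≤ 0 := mul_nonpos_of_nonneg_of_nonpos hα.le (by linarith)
    exact mul_nonpos_of_nonpos_of_nonneg this hs

/-- The partial-sum (CDF-type) function of the convolution, as a function of the larger
success probability `x`, with product `P` fixed. -/
noncomputable def nbPhi (α P : ℝ) (n : ℕ) (x : ℝ) : ℝ :=
  ∑ m ∈ range n, ∑ y ∈ antidiagonal m,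
    nbC α y.1 * nbC α y.2 * (1 - x) ^ y.1 * (1 - P * x⁻¹) ^ y.2

lemma nbPhi_hasDeriv (α P : ℝ) (n : ℕ) {x : ℝ} (hx : x ≠ 0) :
    HasDerivAt (nbPhi α P n)
      (∑ m ∈ range n, ∑ y ∈ antidiagonal m, nbC α y.1 * nbC α y.2 *
        (-(y.1 : ℝ) * (1 - x) ^ (y.1 - 1) * (1 - P * x⁻¹) ^ y.2
          + (y.2 : ℝ) * (P * (x ^ 2)⁻¹) * (1 - x) ^ y.1 * (1 - P * x⁻¹) ^ (y.2 - 1))) x := by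
  unfold nbPhi
  refine HasDerivAt.fun_sum fun m _ => HasDerivAt.fun_sum fun y _ => ?_
  have h1 : HasDerivAt (fun x : ℝ => nbC α y.1 * nbC α y.2 * (1 - x) ^ y.1)
      (nbC α y.1 * nbC α y.2 * ((y.1 : ℝ) * (1 - x) ^ (y.1 - 1) * (-1))) x :=
    (((hasDerivAt_id x).const_sub 1).pow y.1).const_mul _
  have h2 : HasDerivAt (fun x : ℝ => (1 - P * x⁻¹) ^ y.2)
      ((y.2 : ℝ) * (1 - P * x⁻¹) ^ (y.2 - 1) * (-(P * -(x ^ 2)⁻¹))) x :=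
    (((hasDerivAt_inv hx).const_mul P).const_sub 1).pow y.2
  have h := h1.fun_mul h2
  exact h.congr_deriv (by ring)

lemma nbPhi_antitoneOn {α P : ℝ} (hα : 0 < α) (hP : 0 < P) (hP1 : P < 1) (n : ℕ) :
    AntitoneOn (nbPhi α P n) (Set.Ico (Real.sqrt P) 1) := by
  have hsq : 0 < Real.sqrt P := Real.sqrt_pos.mpr hP
  have hne : ∀ x ∈ Set.Ico (Real.sqrt P) 1, x ≠ 0 := by
    intro x hx
    have := hx.1; nlinarith
  refine antitoneOn_of_deriv_nonpos (convex_Ico _ _) ?_ ?_ ?_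
  · intro x hx
    exact (nbPhi_hasDeriv α P n (hne x hx)).continuousAt.continuousWithinAt
  · intro x hx
    rw [interior_Ico] at hx
    have hx0 : x ≠ 0 := hne x (Set.mem_Ico_of_Ioo hx)
    exact (nbPhi_hasDeriv α P n hx0).differentiableAt.differentiableWithinAt
  · intro x hx
    rw [interior_Ico] at hx
    obtain ⟨hxl, hxu⟩ := hx
    have hx0 : 0 < x := lt_trans hsq hxl
    have hD := nbPhi_hasDeriv α P n hx0.ne'
    rw [hD.deriv]
    set V := ∑ m ∈ range n, ∑ y ∈ antidiagonal m, nbC α y.1 * nbC α y.2 *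
        (-(y.1 : ℝ) * (1 - x) ^ (y.1 - 1) * (1 - P * x⁻¹) ^ y.2
          + (y.2 : ℝ) * (P * (x ^ 2)⁻¹) * (1 - x) ^ y.1 * (1 - P * x⁻¹) ^ (y.2 - 1)) with hV
    -- key : x * V = nbG α (1-x) (1 - P * x⁻¹) (n-1)  (or 0 if n = 0)
    have hq1 : (0 : ℝ) ≤ 1 - x := by linarith
    have hq12 : 1 - x ≤ 1 - P * x⁻¹ := by
      have hPx : P * x⁻¹ ≤ x := by
        have hs := Real.sq_sqrt hP.le
        have hPlt : P ≤ x * x := by nlinarith [Real.sqrt_nonneg P]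
        rw [← div_eq_mul_inv, div_le_iff₀ hx0]
        exact hPlt
      linarith
    cases n with
    | zero => simp [hV]
    | succ k =>
      have key : x * V = nbG α (1 - x) (1 - P * x⁻¹) k := by
        rw [hV, Finset.mul_sum, ← derSum hα (1 - x) (1 - P * x⁻¹) k]
        refine Finset.sum_congr rfl fun m _ => ?_
        rw [Finset.mul_sum]
        refine Finset.sum_congr rfl fun y _ => ?_
        have hxx : (1 : ℝ) - (1 - x) = x := by ring
        have hxx2 : (1 : ℝ) - (1 - P * x⁻¹) = P * x⁻¹ := by ring
        rw [hxx, hxx2]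
        field_simp
      have hG := nbG_nonpos hα hq1 hq12 k
      by_contra hcon
      push_neg at hcon
      have : 0 < x * V := mul_pos hx0 hcon
      rw [key] at this
      linarith

lemma real_exp_tsum (x : ℝ) : Real.exp x = ∑' n : ℕ, x ^ n / n.factorial := by
  rw [Real.exp_eq_exp_ℝ, NormedSpace.exp_eq_tsum_div]

lemma ofReal_exp_tsum {x : ℝ} (hx : 0 ≤ x) :
    ∑' n : ℕ, ENNReal.ofReal (x ^ n / n.factorial) = ENNReal.ofReal (Real.exp x) := by
  rw [real_exp_tsum x, ENNReal.ofReal_tsum_of_nonneg (fun n => by positivity)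
    (Real.summable_pow_div_factorial x)]

lemma gamma_lintegral {s : ℝ} (hs : 0 < s) :
    ∫⁻ t in Set.Ioi (0 : ℝ), ENNReal.ofReal (Real.exp (-t) * t ^ (s - 1))
      = ENNReal.ofReal (Real.Gamma s) := by
  rw [Real.Gamma_eq_integral hs,
    ← MeasureTheory.ofReal_integral_eq_lintegral_ofReal (Real.GammaIntegral_convergent hs)]
  filter_upwards [self_mem_ae_restrict measurableSet_Ioi] with t ht
  have ht' : (0 : ℝ) < t := ht
  positivity

lemma exp_rate_integrable {a r : ℝ} (ha : 0 < a) (hr : 0 < r) :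
    IntegrableOn (fun t : ℝ => t ^ (a - 1) * Real.exp (-(r * t))) (Set.Ioi 0) := by
  have h := integrableOn_rpow_mul_exp_neg_mul_rpow (p := 1) (s := a - 1) (b := r)
    (by linarith) one_pos hr
  refine h.congr_fun (fun t ht => ?_) measurableSet_Ioi
  simp only [Real.rpow_one]
  ring_nf

lemma exp_rate_lintegral {a r : ℝ} (ha : 0 < a) (hr : 0 < r) :
    ∫⁻ t in Set.Ioi (0 : ℝ), ENNReal.ofReal (t ^ (a - 1) * Real.exp (-(r * t)))
      = ENNReal.ofReal ((1 / r) ^ a * Real.Gamma a) := by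
  rw [← Real.integral_rpow_mul_exp_neg_mul_Ioi ha hr,
    ← MeasureTheory.ofReal_integral_eq_lintegral_ofReal (exp_rate_integrable ha hr)]
  filter_upwards [self_mem_ae_restrict measurableSet_Ioi] with t ht
  have ht' : (0 : ℝ) < t := ht
  positivity

/-- Total mass of the negative binomial weights. -/
lemma nbC_mass {α p : ℝ} (hα : 0 < α) (hp : p ∈ Set.Ioo (0:ℝ) 1) :
    ∑' k : ℕ, ENNReal.ofReal (nbC α k * p ^ α * (1 - p) ^ k) = 1 := by
  obtain ⟨hp0, hp1⟩ := hp
  set q : ℝ := 1 - p with hq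
  have hq0 : 0 < q := by rw [hq]; linarith
  have hq1 : q < 1 := by rw [hq]; linarith
  have hΓα : 0 < Real.Gamma α := Real.Gamma_pos_of_pos hα
  have hterm : ∀ k : ℕ, ENNReal.ofReal (nbC α k * p ^ α * q ^ k)
      = ∫⁻ t in Set.Ioi (0 : ℝ),
          ENNReal.ofReal (p ^ α * q ^ k / (Nat.factorial k * Real.Gamma α)
            * (Real.exp (-t) * t ^ (((k : ℝ) + α) - 1))) := by
    intro k
    have hc : (0:ℝ) ≤ p ^ α * q ^ k / (Nat.factorial k * Real.Gamma α) := by positivity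
    have e1 : ∀ t : ℝ, ENNReal.ofReal (p ^ α * q ^ k / (Nat.factorial k * Real.Gamma α)
            * (Real.exp (-t) * t ^ (((k : ℝ) + α) - 1)))
        = ENNReal.ofReal (p ^ α * q ^ k / (Nat.factorial k * Real.Gamma α))
          * ENNReal.ofReal (Real.exp (-t) * t ^ (((k : ℝ) + α) - 1)) := fun t =>
      ENNReal.ofReal_mul hc
    rw [lintegral_congr e1, lintegral_const_mul' _ _ ENNReal.ofReal_ne_top,
      gamma_lintegral (by positivity : (0:ℝ) < (k : ℝ) + α),
      ← ENNReal.ofReal_mul hc]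
    congr 1
    unfold nbC
    have hfk : (Nat.factorial k : ℝ) ≠ 0 := by positivity
    field_simp
  have hmeas : ∀ k : ℕ, AEMeasurable (fun t : ℝ =>
      ENNReal.ofReal (p ^ α * q ^ k / (Nat.factorial k * Real.Gamma α)
        * (Real.exp (-t) * t ^ (((k : ℝ) + α) - 1))))
      (volume.restrict (Set.Ioi (0:ℝ))) := by
    intro k
    apply Measurable.aemeasurable
    apply Measurable.ennreal_ofReal
    fun_prop
  calc ∑' k : ℕ, ENNReal.ofReal (nbC α k * p ^ α * q ^ k)
      = ∑' k : ℕ, ∫⁻ t in Set.Ioi (0 : ℝ),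
          ENNReal.ofReal (p ^ α * q ^ k / (Nat.factorial k * Real.Gamma α)
            * (Real.exp (-t) * t ^ (((k : ℝ) + α) - 1))) := tsum_congr hterm
    _ = ∫⁻ t in Set.Ioi (0 : ℝ), ∑' k : ℕ,
          ENNReal.ofReal (p ^ α * q ^ k / (Nat.factorial k * Real.Gamma α)
            * (Real.exp (-t) * t ^ (((k : ℝ) + α) - 1))) := (lintegral_tsum hmeas).symm
    _ = ∫⁻ t in Set.Ioi (0 : ℝ),
          ENNReal.ofReal (p ^ α / Real.Gamma α)
            * ENNReal.ofReal (t ^ (α - 1) * Real.exp (-((1 - q) * t))) := by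
        refine setLIntegral_congr_fun measurableSet_Ioi ?_
        intro t ht
        have ht0 : (0 : ℝ) < t := ht
        have hsplit : ∀ k : ℕ, p ^ α * q ^ k / (Nat.factorial k * Real.Gamma α)
              * (Real.exp (-t) * t ^ (((k : ℝ) + α) - 1))
            = (p ^ α / Real.Gamma α * (t ^ (α - 1) * Real.exp (-t)))
              * ((q * t) ^ k / Nat.factorial k) := by
          intro k
          have htk : t ^ (((k : ℝ) + α) - 1) = t ^ k * t ^ (α - 1) := by
            rw [show ((k : ℝ) + α) - 1 = (k : ℝ) + (α - 1) by ring,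
              Real.rpow_add ht0, Real.rpow_natCast]
          rw [htk, mul_pow]
          have hfk : (Nat.factorial k : ℝ) ≠ 0 := by positivity
          field_simp
        simp_rw [hsplit]
        have hA : (0:ℝ) ≤ p ^ α / Real.Gamma α * (t ^ (α - 1) * Real.exp (-t)) := by positivity
        rw [tsum_congr (fun k : ℕ => ENNReal.ofReal_mul (q := ((q * t) ^ k / Nat.factorial k)) hA)]
        rw [ENNReal.tsum_mul_left, ofReal_exp_tsum (by positivity), ← ENNReal.ofReal_mul hA]
        rw [← ENNReal.ofReal_mul (by positivity : (0:ℝ) ≤ p ^ α / Real.Gamma α)]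
        congr 1
        rw [show -((1 - q) * t) = -t + q * t by ring, Real.exp_add]
        ring
    _ = ENNReal.ofReal (p ^ α / Real.Gamma α)
          * ENNReal.ofReal ((1 / p) ^ α * Real.Gamma α) := by
        rw [lintegral_const_mul' _ _ ENNReal.ofReal_ne_top]
        congr 1
        have : (1 : ℝ) - q = p := by rw [hq]; ring
        rw [this, exp_rate_lintegral hα hp0]
    _ = 1 := by
        rw [← ENNReal.ofReal_mul (by positivity)]
        have : p ^ α / Real.Gamma α * ((1 / p) ^ α * Real.Gamma α)
            = p ^ α * (1 / p) ^ α := by field_simp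
        rw [this, ← Real.mul_rpow hp0.le (by positivity), mul_one_div_cancel hp0.ne',
          Real.one_rpow, ENNReal.ofReal_one]

lemma negBinomPMF_eq (α p : ℝ) (k : ℕ) :
    negBinomPMF α p k = nbC α k * p ^ α * (1 - p) ^ k := rfl

instance negBinom_sfinite (α p : ℝ) : SFinite (negBinomMeasure α p) := by
  unfold negBinomMeasure
  have : ∀ k : ℕ, IsFiniteMeasure
      (ENNReal.ofReal (negBinomPMF α p k) • Measure.dirac ((k : ℕ) : ℝ)) := by
    intro k
    constructor
    rw [Measure.smul_apply, smul_eq_mul]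
    exact ENNReal.mul_lt_top ENNReal.ofReal_lt_top (measure_lt_top _ _)
  infer_instance

lemma negBinom_apply (α p : ℝ) {s : Set ℝ} (hs : MeasurableSet s) :
    negBinomMeasure α p s
      = ∑' k : ℕ, ENNReal.ofReal (negBinomPMF α p k) * s.indicator 1 ((k : ℕ) : ℝ) := by
  unfold negBinomMeasure
  rw [Measure.sum_apply _ hs]
  refine tsum_congr fun k => ?_
  rw [Measure.smul_apply, smul_eq_mul, Measure.dirac_apply' _ hs]

/-- tail of the convolution as a double series. -/
lemma conv_tail (α p p' : ℝ) (t : ℝ) :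
    ((negBinomMeasure α p).conv (negBinomMeasure α p')) (Set.Ici t)
      = ∑' j : ℕ, ∑' k : ℕ, ENNReal.ofReal (negBinomPMF α p j)
          * ENNReal.ofReal (negBinomPMF α p' k)
          * (if t ≤ (j : ℝ) + (k : ℝ) then 1 else 0) := by
  unfold Measure.conv
  rw [Measure.map_apply measurable_add measurableSet_Ici,
    Measure.prod_apply (measurable_add (measurableSet_Ici (a := t)))]
  unfold negBinomMeasure
  rw [lintegral_sum_measure]
  refine tsum_congr fun j => ?_
  rw [lintegral_smul_measure, lintegral_dirac]
  have hpre : (Prod.mk ((j : ℕ) : ℝ) ⁻¹' ((fun x : ℝ × ℝ => x.1 + x.2) ⁻¹' Set.Ici t))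
      = Set.Ici (t - (j : ℝ)) := by
    ext y
    simp only [Set.mem_preimage, Set.mem_Ici, sub_le_iff_le_add']
  rw [hpre, Measure.sum_apply _ measurableSet_Ici, smul_eq_mul, ← ENNReal.tsum_mul_left]
  refine tsum_congr fun k => ?_
  rw [Measure.smul_apply, smul_eq_mul, Measure.dirac_apply' _ measurableSet_Ici,
    ← mul_assoc]
  congr 1
  rw [Set.indicator_apply]
  simp only [Set.mem_Ici, Pi.one_apply]
  congr 1
  simp only [eq_iff_iff]
  constructor <;> intro h <;> linarith

lemma tsum_head (f g : ℕ → ℝ≥0∞) (n : ℕ) :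
    ∑' j : ℕ, ∑' k : ℕ, f j * g k * (if j + k < n then 1 else 0)
      = ∑ m ∈ range n, ∑ x ∈ antidiagonal m, f x.1 * g x.2 := by
  have hpt : ∀ j k : ℕ, (if j + k < n then (1:ℝ≥0∞) else 0)
      = ∑ m ∈ range n, if j + k = m then 1 else 0 := by
    intro j k
    rw [Finset.sum_ite_eq (range n) (j + k) (fun _ => (1:ℝ≥0∞))]
    simp [Finset.mem_range]
  have h1 : ∀ m, ∀ j : ℕ, (∑' k : ℕ, f j * g k * (if j + k = m then 1 else 0))
      = if j ≤ m then f j * g (m - j) else 0 := by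
    intro m j
    by_cases hj : j ≤ m
    · rw [tsum_eq_single (m - j) ?_]
      · rw [if_pos hj, if_pos (Nat.add_sub_cancel' hj), mul_one]
      · intro k hk
        rw [if_neg, mul_zero]
        intro h
        exact hk (by omega)
    · rw [if_neg hj]
      convert tsum_zero with k
      rw [if_neg (by omega), mul_zero]
  calc ∑' j : ℕ, ∑' k : ℕ, f j * g k * (if j + k < n then 1 else 0)
      = ∑' j : ℕ, ∑' k : ℕ, ∑ m ∈ range n, f j * g k * (if j + k = m then 1 else 0) := by
        refine tsum_congr fun j => tsum_congr fun k => ?_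
        rw [hpt, Finset.mul_sum]
    _ = ∑ m ∈ range n, ∑' j : ℕ, ∑' k : ℕ, f j * g k * (if j + k = m then 1 else 0) := by
        rw [tsum_congr fun j => Summable.tsum_finsetSum fun i _ => ENNReal.summable,
          Summable.tsum_finsetSum fun i _ => ENNReal.summable]
    _ = ∑ m ∈ range n, ∑ x ∈ antidiagonal m, f x.1 * g x.2 := by
        refine Finset.sum_congr rfl fun m _ => ?_
        rw [tsum_congr (h1 m), tsum_eq_sum (s := range (m + 1))
          (fun j hj => if_neg (by simpa [Nat.lt_succ_iff] using hj))]
        rw [Finset.Nat.sum_antidiagonal_eq_sum_range_succ_mk]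
        exact Finset.sum_congr rfl fun j hj => if_pos (by simpa [Nat.lt_succ_iff] using hj)

lemma tsum_split (f g : ℕ → ℝ≥0∞) (t : ℝ) (n : ℕ)
    (hn : ∀ j k : ℕ, (t ≤ (j : ℝ) + (k : ℝ)) ↔ n ≤ j + k) :
    (∑' j : ℕ, ∑' k : ℕ, f j * g k * (if j + k < n then 1 else 0))
      + (∑' j : ℕ, ∑' k : ℕ, f j * g k * (if t ≤ (j : ℝ) + (k : ℝ) then 1 else 0))
      = (∑' j : ℕ, f j) * (∑' k : ℕ, g k) := by
  rw [← ENNReal.tsum_add]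
  rw [tsum_congr fun j => (ENNReal.tsum_add).symm]
  have hpt : ∀ j k : ℕ, f j * g k * (if j + k < n then 1 else 0)
      + f j * g k * (if t ≤ (j : ℝ) + (k : ℝ) then 1 else 0) = f j * g k := by
    intro j k
    by_cases h : n ≤ j + k
    · rw [if_neg (by omega), if_pos ((hn j k).mpr h), mul_zero, zero_add, mul_one]
    · rw [if_pos (by omega), if_neg (fun hc => h ((hn j k).mp hc)), mul_zero, add_zero, mul_one]
  rw [tsum_congr fun j => tsum_congr fun k => hpt j k]
  rw [tsum_congr fun j => ENNReal.tsum_mul_left, ENNReal.tsum_mul_right]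

lemma head_ofReal (p1 p2 : ℕ → ℝ) (h1 : ∀ j, 0 ≤ p1 j) (h2 : ∀ j, 0 ≤ p2 j) (n : ℕ) :
    ∑ m ∈ range n, ∑ x ∈ antidiagonal m, ENNReal.ofReal (p1 x.1) * ENNReal.ofReal (p2 x.2)
      = ENNReal.ofReal (∑ m ∈ range n, ∑ x ∈ antidiagonal m, p1 x.1 * p2 x.2) := by
  rw [ENNReal.ofReal_sum_of_nonneg fun m _ => Finset.sum_nonneg fun x _ =>
    mul_nonneg (h1 x.1) (h2 x.2)]
  refine Finset.sum_congr rfl fun m _ => ?_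
  rw [ENNReal.ofReal_sum_of_nonneg fun x _ => mul_nonneg (h1 x.1) (h2 x.2)]
  exact Finset.sum_congr rfl fun x _ => (ENNReal.ofReal_mul (h1 x.1)).symm

lemma head_symm (α a b : ℝ) (n : ℕ) :
    ∑ m ∈ range n, ∑ x ∈ antidiagonal m, nbC α x.1 * nbC α x.2 * a ^ x.1 * b ^ x.2
      = ∑ m ∈ range n, ∑ x ∈ antidiagonal m, nbC α x.1 * nbC α x.2 * b ^ x.1 * a ^ x.2 := by
  refine Finset.sum_congr rfl fun m _ => ?_
  conv_lhs => rw [← Finset.HasAntidiagonal.map_swap_antidiagonal]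
  rw [Finset.sum_map]
  exact Finset.sum_congr rfl fun x _ => by simp [Prod.swap]; ring

lemma head_eq_phi {α : ℝ} (hα : 0 < α) {P p₁ p₂ : ℝ} (h₁ : p₁ ∈ Set.Ioo (0:ℝ) 1)
    (h₂ : p₂ ∈ Set.Ioo (0:ℝ) 1) (hP : P = p₁ * p₂) (n : ℕ) :
    ∑ m ∈ range n, ∑ x ∈ antidiagonal m, negBinomPMF α p₁ x.1 * negBinomPMF α p₂ x.2
      = P ^ α * nbPhi α P n (max p₁ p₂) := by
  obtain ⟨h₁0, h₁1⟩ := h₁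
  obtain ⟨h₂0, h₂1⟩ := h₂
  set x := max p₁ p₂ with hx
  have hx0 : 0 < x := lt_max_of_lt_left h₁0
  have hfact : ∀ a b : ℝ, a ∈ Set.Ioo (0:ℝ) 1 → b ∈ Set.Ioo (0:ℝ) 1 →
      ∑ m ∈ range n, ∑ y ∈ antidiagonal m, negBinomPMF α a y.1 * negBinomPMF α b y.2
      = (a * b) ^ α * ∑ m ∈ range n, ∑ y ∈ antidiagonal m,
          nbC α y.1 * nbC α y.2 * (1 - a) ^ y.1 * (1 - b) ^ y.2 := by
    intro a b ha hb
    rw [Finset.mul_sum]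
    refine Finset.sum_congr rfl fun m _ => ?_
    rw [Finset.mul_sum]
    refine Finset.sum_congr rfl fun y _ => ?_
    rw [negBinomPMF_eq, negBinomPMF_eq, Real.mul_rpow ha.1.le hb.1.le]
    ring
  rcases le_total p₂ p₁ with hcmp | hcmp
  · have hxe : x = p₁ := max_eq_left hcmp
    have hy : 1 - P * p₁⁻¹ = 1 - p₂ := by
      rw [hP]; field_simp
    rw [hfact p₁ p₂ ⟨h₁0, h₁1⟩ ⟨h₂0, h₂1⟩, ← hP]
    unfold nbPhi
    rw [hxe, hy]
  · have hxe : x = p₂ := max_eq_right hcmp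
    have hy : 1 - P * p₂⁻¹ = 1 - p₁ := by
      rw [hP]; field_simp
    rw [hfact p₁ p₂ ⟨h₁0, h₁1⟩ ⟨h₂0, h₂1⟩, ← hP]
    unfold nbPhi
    rw [hxe, hy, head_symm α (1 - p₁) (1 - p₂) n]

/-- Usual stochastic order for negative binomial convolutions under majorization of the
logarithms of the success probabilities. -/
theorem negBinom_log_majorize_st_order (α p₁₁ p₁₂ p₂₁ p₂₂ : ℝ) (hα : 0 < α)
    (h11 : p₁₁ ∈ Set.Ioo (0:ℝ) 1) (h12 : p₁₂ ∈ Set.Ioo (0:ℝ) 1)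
    (h21 : p₂₁ ∈ Set.Ioo (0:ℝ) 1) (h22 : p₂₂ ∈ Set.Ioo (0:ℝ) 1)
    (hsum : Real.log p₁₁ + Real.log p₁₂ = Real.log p₂₁ + Real.log p₂₂)
    (hmax : max (Real.log p₁₁) (Real.log p₁₂) ≤ max (Real.log p₂₁) (Real.log p₂₂)) :
    StochLE ((negBinomMeasure α p₁₁).conv (negBinomMeasure α p₁₂))
      ((negBinomMeasure α p₂₁).conv (negBinomMeasure α p₂₂)) := by
  intro t
  obtain ⟨h110, h111⟩ := h11
  obtain ⟨h120, h121⟩ := h12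
  obtain ⟨h210, h211⟩ := h21
  obtain ⟨h220, h221⟩ := h22
  have hProd : p₁₁ * p₁₂ = p₂₁ * p₂₂ := by
    have h := congrArg Real.exp hsum
    rwa [Real.exp_add, Real.exp_add, Real.exp_log h110, Real.exp_log h120,
      Real.exp_log h210, Real.exp_log h220] at h
  set P := p₁₁ * p₁₂ with hPdef
  have hP0 : 0 < P := mul_pos h110 h120
  have hP1 : P < 1 := by nlinarith
  set x₁ := max p₁₁ p₁₂ with hx₁
  set x₂ := max p₂₁ p₂₂ with hx₂
  have hx₁0 : 0 < x₁ := lt_max_of_lt_left h110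
  have hx₂0 : 0 < x₂ := lt_max_of_lt_left h210
  have hx₁1 : x₁ < 1 := max_lt h111 h121
  have hx₂1 : x₂ < 1 := max_lt h211 h221
  have hlogmax : ∀ a b : ℝ, 0 < a → 0 < b →
      max (Real.log a) (Real.log b) = Real.log (max a b) := by
    intro a b ha hb
    rcases le_total a b with h | h
    · rw [max_eq_right h, max_eq_right ((Real.log_le_log_iff ha hb).mpr h)]
    · rw [max_eq_left h, max_eq_left ((Real.log_le_log_iff hb ha).mpr h)]
  have hmax' : x₁ ≤ x₂ := by
    rw [hlogmax _ _ h110 h120, hlogmax _ _ h210 h220] at hmax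
    exact (Real.log_le_log_iff hx₁0 hx₂0).mp hmax
  have hsq₁ : Real.sqrt P ≤ x₁ := by
    have h1 : P ≤ x₁ * x₁ := by
      rw [hPdef]
      exact mul_le_mul (le_max_left _ _) (le_max_right _ _) h120.le hx₁0.le
    calc Real.sqrt P ≤ Real.sqrt (x₁ * x₁) := Real.sqrt_le_sqrt h1
      _ = x₁ := Real.sqrt_mul_self hx₁0.le
  have hsq₂ : Real.sqrt P ≤ x₂ := le_trans hsq₁ hmax'
  -- masses
  have hm11 : ∑' k : ℕ, ENNReal.ofReal (negBinomPMF α p₁₁ k) = 1 := by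
    simp_rw [negBinomPMF_eq]; exact nbC_mass hα ⟨h110, h111⟩
  have hm12 : ∑' k : ℕ, ENNReal.ofReal (negBinomPMF α p₁₂ k) = 1 := by
    simp_rw [negBinomPMF_eq]; exact nbC_mass hα ⟨h120, h121⟩
  have hm21 : ∑' k : ℕ, ENNReal.ofReal (negBinomPMF α p₂₁ k) = 1 := by
    simp_rw [negBinomPMF_eq]; exact nbC_mass hα ⟨h210, h211⟩
  have hm22 : ∑' k : ℕ, ENNReal.ofReal (negBinomPMF α p₂₂ k) = 1 := by
    simp_rw [negBinomPMF_eq]; exact nbC_mass hα ⟨h220, h221⟩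
  rw [conv_tail, conv_tail]
  by_cases ht : t ≤ 0
  · have hone : ∀ (p p' : ℝ), (∑' k : ℕ, ENNReal.ofReal (negBinomPMF α p k)) = 1 →
        (∑' k : ℕ, ENNReal.ofReal (negBinomPMF α p' k)) = 1 →
        ∑' j : ℕ, ∑' k : ℕ, ENNReal.ofReal (negBinomPMF α p j)
          * ENNReal.ofReal (negBinomPMF α p' k)
          * (if t ≤ (j : ℝ) + (k : ℝ) then 1 else 0) = 1 := by
      intro p p' hp hp'
      have : ∀ j k : ℕ, (if t ≤ (j : ℝ) + (k : ℝ) then (1:ℝ≥0∞) else 0) = 1 := by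
        intro j k
        rw [if_pos (le_trans ht (by positivity))]
      calc ∑' j : ℕ, ∑' k : ℕ, ENNReal.ofReal (negBinomPMF α p j)
            * ENNReal.ofReal (negBinomPMF α p' k)
            * (if t ≤ (j : ℝ) + (k : ℝ) then 1 else 0)
          = ∑' j : ℕ, ∑' k : ℕ, ENNReal.ofReal (negBinomPMF α p j)
            * ENNReal.ofReal (negBinomPMF α p' k) := by
            refine tsum_congr fun j => tsum_congr fun k => ?_
            rw [this j k, mul_one]
        _ = 1 := by
            rw [tsum_congr fun j : ℕ => ENNReal.tsum_mul_left, ENNReal.tsum_mul_right,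
              hp, hp', one_mul]
    rw [hone p₁₁ p₁₂ hm11 hm12, hone p₂₁ p₂₂ hm21 hm22]
  · push_neg at ht
    set n := ⌈t⌉₊ with hn
    have hniff : ∀ j k : ℕ, (t ≤ (j : ℝ) + (k : ℝ)) ↔ n ≤ j + k := by
      intro j k
      rw [show (j : ℝ) + (k : ℝ) = ((j + k : ℕ) : ℝ) by push_cast; ring, hn, ← Nat.ceil_le]
    have hs₁ := tsum_split (fun j => ENNReal.ofReal (negBinomPMF α p₁₁ j))
      (fun k => ENNReal.ofReal (negBinomPMF α p₁₂ k)) t n hniff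
    have hs₂ := tsum_split (fun j => ENNReal.ofReal (negBinomPMF α p₂₁ j))
      (fun k => ENNReal.ofReal (negBinomPMF α p₂₂ k)) t n hniff
    rw [hm11, hm12, one_mul] at hs₁
    rw [hm21, hm22, one_mul] at hs₂
    have hpmf_nonneg : ∀ (p : ℝ), p ∈ Set.Ioo (0:ℝ) 1 → ∀ j, 0 ≤ negBinomPMF α p j := by
      intro p hp j
      obtain ⟨hp0, hp1⟩ := hp
      rw [negBinomPMF_eq]
      have := nbC_pos hα j
      have h1p : (0:ℝ) ≤ 1 - p := by linarith
      positivity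
    have hh₁ : (∑' j : ℕ, ∑' k : ℕ, ENNReal.ofReal (negBinomPMF α p₁₁ j)
        * ENNReal.ofReal (negBinomPMF α p₁₂ k) * (if j + k < n then 1 else 0))
        = ENNReal.ofReal (P ^ α * nbPhi α P n x₁) := by
      rw [tsum_head, head_ofReal _ _ (hpmf_nonneg _ ⟨h110, h111⟩) (hpmf_nonneg _ ⟨h120, h121⟩),
        head_eq_phi hα ⟨h110, h111⟩ ⟨h120, h121⟩ hPdef n]
    have hh₂ : (∑' j : ℕ, ∑' k : ℕ, ENNReal.ofReal (negBinomPMF α p₂₁ j)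
        * ENNReal.ofReal (negBinomPMF α p₂₂ k) * (if j + k < n then 1 else 0))
        = ENNReal.ofReal (P ^ α * nbPhi α P n x₂) := by
      rw [tsum_head, head_ofReal _ _ (hpmf_nonneg _ ⟨h210, h211⟩) (hpmf_nonneg _ ⟨h220, h221⟩),
        head_eq_phi hα ⟨h210, h211⟩ ⟨h220, h221⟩ (hPdef.trans hProd) n]
    rw [hh₁] at hs₁
    rw [hh₂] at hs₂
    have hphile : nbPhi α P n x₂ ≤ nbPhi α P n x₁ :=
      nbPhi_antitoneOn hα hP0 hP1 n ⟨hsq₁, hx₁1⟩ ⟨hsq₂, hx₂1⟩ hmax'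
    have hHle : ENNReal.ofReal (P ^ α * nbPhi α P n x₂)
        ≤ ENNReal.ofReal (P ^ α * nbPhi α P n x₁) :=
      ENNReal.ofReal_le_ofReal (mul_le_mul_of_nonneg_left hphile (Real.rpow_nonneg hP0.le α))
    set T₁ := ∑' j : ℕ, ∑' k : ℕ, ENNReal.ofReal (negBinomPMF α p₁₁ j)
        * ENNReal.ofReal (negBinomPMF α p₁₂ k) * (if t ≤ (j : ℝ) + (k : ℝ) then 1 else 0)
    set T₂ := ∑' j : ℕ, ∑' k : ℕ, ENNReal.ofReal (negBinomPMF α p₂₁ j)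
        * ENNReal.ofReal (negBinomPMF α p₂₂ k) * (if t ≤ (j : ℝ) + (k : ℝ) then 1 else 0)
    have hkey : ENNReal.ofReal (P ^ α * nbPhi α P n x₂) + T₁
        ≤ ENNReal.ofReal (P ^ α * nbPhi α P n x₂) + T₂ := by
      calc ENNReal.ofReal (P ^ α * nbPhi α P n x₂) + T₁
          ≤ ENNReal.ofReal (P ^ α * nbPhi α P n x₁) + T₁ := add_le_add_left hHle _
        _ = 1 := hs₁
        _ = ENNReal.ofReal (P ^ α * nbPhi α P n x₂) + T₂ := hs₂.symm
    exact (ENNReal.add_le_add_iff_left ENNReal.ofReal_ne_top).mp hkey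
end

section
/- For fixed c > 0, the tail probability P(Σ_{i=1}^n λᵢ G_{αᵢ,1} ≥ c) is arrangement increasing in the pair of vectors (α⃗, λ⃗): in the two-coordinate case, if α₁ < α₂ and λ₁ < λ₂ (all positive), then P(λ₂ G_{α₁,1} + λ₁ G_{α₂,1} ≥ c) ≤ P(λ₁ G_{α₁,1} + λ₂ G_{α₂,1} ≥ c), with G_{α₁,1}, G_{α₂,1} independent standard gamma variables. -/
open MeasureTheory ProbabilityTheory Real
open scoped ENNReal

/-- Measurability of the gamma pdf as an `ℝ≥0∞`-valued function. -/
lemma measurable_gammaPDF' (a r : ℝ) : Measurable (gammaPDF a r) :=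
  (measurable_gammaPDFReal a r).ennreal_ofReal

/-- The product of two gamma measures is the product Lebesgue measure with the
product density. -/
lemma gammaMeasure_prod_eq (α₁ α₂ : ℝ) (h1 : 0 < α₁) (h2 : 0 < α₂) :
    (gammaMeasure α₁ 1).prod (gammaMeasure α₂ 1)
      = ((volume : Measure ℝ).prod volume).withDensity
          (fun p => gammaPDF α₁ 1 p.1 * gammaPDF α₂ 1 p.2) := by
  have i1 : IsProbabilityMeasure (gammaMeasure α₁ 1) := isProbabilityMeasure_gammaMeasure h1 one_pos
  have i2 : IsProbabilityMeasure (gammaMeasure α₂ 1) := isProbabilityMeasure_gammaMeasure h2 one_pos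
  refine Measure.prod_eq fun s t hs ht => ?_
  rw [withDensity_apply _ (hs.prod ht), ← Measure.prod_restrict,
    lintegral_prod_mul (measurable_gammaPDF' α₁ 1).aemeasurable
      (measurable_gammaPDF' α₂ 1).aemeasurable,
    gammaMeasure, gammaMeasure, withDensity_apply _ hs, withDensity_apply _ ht]

/-- The core density comparison: for `0 ≤ x ≤ y` (away from `x = 0`),
`g₁(y) g₂(x) ≤ g₁(x) g₂(y)` when `α₁ < α₂`. -/
lemma gammaPDF_swap_le (α₁ α₂ : ℝ) (hα₁ : 0 < α₁) (hα : α₁ < α₂)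
    {x y : ℝ} (hx : x ≠ 0) (hxy : x ≤ y) :
    gammaPDF α₁ 1 y * gammaPDF α₂ 1 x ≤ gammaPDF α₁ 1 x * gammaPDF α₂ 1 y := by
  rcases lt_or_gt_of_ne hx with hneg | hpos
  · rw [gammaPDF_of_neg hneg, mul_zero]
    exact zero_le
  · have hy : 0 < y := lt_of_lt_of_le hpos hxy
    rw [gammaPDF_of_nonneg hpos.le, gammaPDF_of_nonneg hy.le,
      gammaPDF_of_nonneg hpos.le, gammaPDF_of_nonneg hy.le,
      ← ENNReal.ofReal_mul (by positivity), ← ENNReal.ofReal_mul (by positivity)]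
    apply ENNReal.ofReal_le_ofReal
    have hG1 : 0 < Gamma α₁ := Gamma_pos_of_pos hα₁
    have hG2 : 0 < Gamma α₂ := Gamma_pos_of_pos (hα₁.trans hα)
    have core : y ^ (α₁ - 1) * x ^ (α₂ - 1) ≤ x ^ (α₁ - 1) * y ^ (α₂ - 1) := by
      have hxx : x ^ (α₂ - 1) = x ^ (α₁ - 1) * x ^ (α₂ - α₁) := by
        rw [← Real.rpow_add hpos]; ring_nf
      have hyy : y ^ (α₂ - 1) = y ^ (α₁ - 1) * y ^ (α₂ - α₁) := by
        rw [← Real.rpow_add hy]; ring_nf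
      have hmono : x ^ (α₂ - α₁) ≤ y ^ (α₂ - α₁) :=
        Real.rpow_le_rpow hpos.le hxy (by linarith)
      have h1 : (0:ℝ) ≤ x ^ (α₁ - 1) := Real.rpow_nonneg hpos.le _
      have h2 : (0:ℝ) ≤ y ^ (α₁ - 1) := Real.rpow_nonneg hy.le _
      calc y ^ (α₁ - 1) * x ^ (α₂ - 1)
          = (x ^ (α₁ - 1) * y ^ (α₁ - 1)) * x ^ (α₂ - α₁) := by rw [hxx]; ring
        _ ≤ (x ^ (α₁ - 1) * y ^ (α₁ - 1)) * y ^ (α₂ - α₁) :=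
            mul_le_mul_of_nonneg_left hmono (by positivity)
        _ = x ^ (α₁ - 1) * y ^ (α₂ - 1) := by rw [hyy]; ring
    have hC : (0:ℝ) ≤ (1:ℝ) ^ α₁ / Gamma α₁ * ((1:ℝ) ^ α₂ / Gamma α₂)
        * (exp (-(1 * y)) * exp (-(1 * x))) := by positivity
    calc (1:ℝ) ^ α₁ / Gamma α₁ * y ^ (α₁ - 1) * exp (-(1 * y))
          * ((1:ℝ) ^ α₂ / Gamma α₂ * x ^ (α₂ - 1) * exp (-(1 * x)))
        = ((1:ℝ) ^ α₁ / Gamma α₁ * ((1:ℝ) ^ α₂ / Gamma α₂)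
            * (exp (-(1 * y)) * exp (-(1 * x)))) * (y ^ (α₁ - 1) * x ^ (α₂ - 1)) := by ring
      _ ≤ ((1:ℝ) ^ α₁ / Gamma α₁ * ((1:ℝ) ^ α₂ / Gamma α₂)
            * (exp (-(1 * y)) * exp (-(1 * x)))) * (x ^ (α₁ - 1) * y ^ (α₂ - 1)) :=
          mul_le_mul_of_nonneg_left core hC
      _ = (1:ℝ) ^ α₁ / Gamma α₁ * x ^ (α₁ - 1) * exp (-(1 * x))
          * ((1:ℝ) ^ α₂ / Gamma α₂ * y ^ (α₂ - 1) * exp (-(1 * y))) := by ring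

/-- The pointwise rearrangement inequality for ordered pairs. -/
lemma gamma_key (α₁ α₂ l₁ l₂ c : ℝ) (hα₁ : 0 < α₁) (hα : α₁ < α₂)
    (hl : l₁ < l₂) {x y : ℝ} (hx : x ≠ 0) (hxy : x ≤ y) :
    Set.indicator {p : ℝ × ℝ | c ≤ l₂ * p.1 + l₁ * p.2}
        (fun p => gammaPDF α₁ 1 p.1 * gammaPDF α₂ 1 p.2) (x, y)
      + Set.indicator {p : ℝ × ℝ | c ≤ l₂ * p.1 + l₁ * p.2}
        (fun p => gammaPDF α₁ 1 p.1 * gammaPDF α₂ 1 p.2) (y, x)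
      ≤ Set.indicator {p : ℝ × ℝ | c ≤ l₁ * p.1 + l₂ * p.2}
        (fun p => gammaPDF α₁ 1 p.1 * gammaPDF α₂ 1 p.2) (x, y)
      + Set.indicator {p : ℝ × ℝ | c ≤ l₁ * p.1 + l₂ * p.2}
        (fun p => gammaPDF α₁ 1 p.1 * gammaPDF α₂ 1 p.2) (y, x) := by
  simp only [Set.indicator_apply, Set.mem_setOf_eq]
  by_cases hA : c ≤ l₂ * x + l₁ * y
  · have hB : c ≤ l₁ * x + l₂ * y := by nlinarith
    rw [if_pos hA, if_pos hB, if_pos (show c ≤ l₂ * y + l₁ * x by linarith),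
      if_pos (show c ≤ l₁ * y + l₂ * x by linarith)]
  · rw [if_neg hA,
      if_neg (show ¬ c ≤ l₁ * y + l₂ * x from fun h => hA (by linarith)),
      zero_add, add_zero]
    by_cases hB : c ≤ l₁ * x + l₂ * y
    · rw [if_pos hB, if_pos (show c ≤ l₂ * y + l₁ * x by linarith)]
      exact gammaPDF_swap_le α₁ α₂ hα₁ hα hx hxy
    · rw [if_neg hB,
        if_neg (show ¬ c ≤ l₂ * y + l₁ * x from fun h => hB (by linarith))]

/-- The tail probability of a positive combination of independent standard gamma
variables is arrangement increasing: pairing the larger coefficient with the larger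
shape gives the larger tail. -/
theorem gamma_tail_arrangement_increasing (α₁ α₂ l₁ l₂ c : ℝ)
    (hα₁ : 0 < α₁) (hα : α₁ < α₂) (hl₁ : 0 < l₁) (hl : l₁ < l₂) (hc : 0 < c) :
    ((gammaMeasure α₁ 1).prod (gammaMeasure α₂ 1)) {x : ℝ × ℝ | c ≤ l₂ * x.1 + l₁ * x.2}
      ≤ ((gammaMeasure α₁ 1).prod (gammaMeasure α₂ 1))
          {x : ℝ × ℝ | c ≤ l₁ * x.1 + l₂ * x.2} := by
  set m : Measure (ℝ × ℝ) := (volume : Measure ℝ).prod volume with hm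
  set f : ℝ × ℝ → ℝ≥0∞ := fun p => gammaPDF α₁ 1 p.1 * gammaPDF α₂ 1 p.2 with hfdef
  have hf : Measurable f :=
    ((measurable_gammaPDF' α₁ 1).comp measurable_fst).mul
      ((measurable_gammaPDF' α₂ 1).comp measurable_snd)
  set A : Set (ℝ × ℝ) := {p | c ≤ l₂ * p.1 + l₁ * p.2} with hAdef
  set B : Set (ℝ × ℝ) := {p | c ≤ l₁ * p.1 + l₂ * p.2} with hBdef
  have hAmeas : MeasurableSet A :=
    measurableSet_le measurable_const
      ((measurable_fst.const_mul l₂).add (measurable_snd.const_mul l₁))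
  have hBmeas : MeasurableSet B :=
    measurableSet_le measurable_const
      ((measurable_fst.const_mul l₁).add (measurable_snd.const_mul l₂))
  rw [gammaMeasure_prod_eq α₁ α₂ hα₁ (hα₁.trans hα), withDensity_apply _ hAmeas,
    withDensity_apply _ hBmeas, ← lintegral_indicator hAmeas, ← lintegral_indicator hBmeas]
  -- double both sides via the swap symmetry
  have hswap : ∀ g : ℝ × ℝ → ℝ≥0∞, ∫⁻ p, g p.swap ∂m = ∫⁻ p, g p ∂m :=
    fun g => lintegral_prod_swap g
  have hdouble : ∀ s : Set (ℝ × ℝ), MeasurableSet s →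
      (∫⁻ p, s.indicator f p ∂m) * 2
        = ∫⁻ p, (s.indicator f p + s.indicator f p.swap) ∂m := by
    intro s hs
    rw [lintegral_add_left (hf.indicator hs), mul_two]
    congr 1
    exact (hswap (s.indicator f)).symm
  have h2 : (∫⁻ p, A.indicator f p ∂m) * 2 ≤ (∫⁻ p, B.indicator f p ∂m) * 2 := by
    rw [hdouble A hAmeas, hdouble B hBmeas]
    refine lintegral_mono_ae ?_
    have hnull1 : m {p : ℝ × ℝ | p.1 = 0} = 0 := by
      have : {p : ℝ × ℝ | p.1 = 0} = ({0} : Set ℝ) ×ˢ (Set.univ : Set ℝ) := by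
        ext ⟨a, b⟩; simp [eq_comm]
      rw [this, hm, Measure.prod_prod, Real.volume_singleton, zero_mul]
    have hnull2 : m {p : ℝ × ℝ | p.2 = 0} = 0 := by
      have : {p : ℝ × ℝ | p.2 = 0} = (Set.univ : Set ℝ) ×ˢ ({0} : Set ℝ) := by
        ext ⟨a, b⟩; simp [eq_comm]
      rw [this, hm, Measure.prod_prod, Real.volume_singleton, mul_zero]
    have hae : ∀ᵐ p ∂m, p.1 ≠ 0 ∧ p.2 ≠ 0 := by
      have h1 : ∀ᵐ p ∂m, p.1 ≠ 0 := by rw [ae_iff]; simpa using hnull1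
      have h2' : ∀ᵐ p ∂m, p.2 ≠ 0 := by rw [ae_iff]; simpa using hnull2
      filter_upwards [h1, h2'] with p using And.intro
    filter_upwards [hae] with p hp
    obtain ⟨hp1, hp2⟩ := hp
    rcases le_total p.1 p.2 with hle | hle
    · exact gamma_key α₁ α₂ l₁ l₂ c hα₁ hα hl hp1 hle
    · have h := gamma_key α₁ α₂ l₁ l₂ c hα₁ hα hl hp2 hle
      calc A.indicator f p + A.indicator f p.swap
          = A.indicator f p.swap + A.indicator f p := add_comm _ _
        _ ≤ B.indicator f p.swap + B.indicator f p := h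
        _ = B.indicator f p + B.indicator f p.swap := add_comm _ _
  exact (ENNReal.mul_le_mul_iff_left (by norm_num) (by norm_num)).1 h2
end
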